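/- arXiv:1903.07314 — 10 statements merged into one kernel-verified Lean document; each statement's English description precedes it below -/
import Mathlib

section
/- Let k be a positive integer, f(x) = Σ_{i=0}^{k-1} a_i x^i ∈ ℤ[x], and let N denote the absolute norm of the cyclotomic field ℚ(ζ_k) over ℚ. Then |N(f(ζ_k))| ≤ ( (k/φ(k)) · Σ_{i=0}^{k-1} a_i^2 )^{φ(k)/2}, where φ is Euler's totient function. -/
open Finset Complex

lemma sum_pow_root_of_unity (k : ℕ) (μ : ℂ) (hμ : μ ^ k = 1) :
    ∑ h ∈ Finset.range k, μ ^ h = if μ = 1 then (k : ℂ) else 0 := by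
  split_ifs with h
  · simp [h]
  · have h2 := geom_sum_mul μ k
    rw [hμ, sub_self] at h2
    rcases mul_eq_zero.mp h2 with h' | h'
    · exact h'
    · exact absurd (sub_eq_zero.mp h') h

lemma parseval (k : ℕ) (hk : 0 < k) (a : ℕ → ℤ) (ζ : ℂ)
    (hζ : IsPrimitiveRoot ζ k) :
    ∑ h ∈ Finset.range k,
        ‖∑ i ∈ Finset.range k, (a i : ℂ) * (ζ ^ h) ^ i‖ ^ 2
      = (k : ℝ) * ∑ i ∈ Finset.range k, (a i : ℝ) ^ 2 := by
  have hζ0 : ζ ≠ 0 := hζ.ne_zero hk.ne'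
  have habs : ‖ζ‖ = 1 :=
    Complex.norm_eq_one_of_pow_eq_one hζ.pow_eq_one hk.ne'
  have hconj : (starRingEnd ℂ) ζ = ζ⁻¹ := (Complex.inv_eq_conj habs).symm
  set f : ℕ → ℂ := fun h => ∑ i ∈ Finset.range k, (a i : ℂ) * (ζ ^ h) ^ i with hf
  have key : ∑ h ∈ Finset.range k, f h * (starRingEnd ℂ) (f h)
      = (k : ℂ) * ∑ i ∈ Finset.range k, (a i : ℂ) ^ 2 := by
    have step : ∀ h, f h * (starRingEnd ℂ) (f h)
        = ∑ i ∈ Finset.range k, ∑ j ∈ Finset.range k,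
            (a i : ℂ) * (a j : ℂ) * (ζ ^ i * (ζ ^ j)⁻¹) ^ h := by
      intro h
      have hc : (starRingEnd ℂ) (f h)
          = ∑ j ∈ Finset.range k, (a j : ℂ) * ((ζ⁻¹) ^ h) ^ j := by
        simp [hf, map_sum, map_mul, map_pow, hconj]
      rw [hc, hf, Finset.sum_mul_sum]
      refine Finset.sum_congr rfl fun i _ => Finset.sum_congr rfl fun j _ => ?_
      have e1 : ((ζ : ℂ) ^ h) ^ i = (ζ ^ i) ^ h := by
        rw [← pow_mul, ← pow_mul, Nat.mul_comm]
      have e2 : ((ζ⁻¹ : ℂ) ^ h) ^ j = ((ζ ^ j)⁻¹) ^ h := by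
        rw [inv_pow ζ h, inv_pow (ζ ^ h) j, inv_pow (ζ ^ j) h, ← pow_mul, ← pow_mul,
          Nat.mul_comm h j]
      rw [e1, e2, mul_pow]
      ring
    simp only [step]
    rw [Finset.sum_comm]
    have inner : ∀ i ∈ Finset.range k, ∑ h ∈ Finset.range k, ∑ j ∈ Finset.range k,
        (a i : ℂ) * (a j : ℂ) * (ζ ^ i * (ζ ^ j)⁻¹) ^ h
        = (k : ℂ) * (a i : ℂ) ^ 2 := by
      intro i hi
      rw [Finset.sum_comm]
      have : ∀ j ∈ Finset.range k, ∑ h ∈ Finset.range k,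
          (a i : ℂ) * (a j : ℂ) * (ζ ^ i * (ζ ^ j)⁻¹) ^ h
          = if j = i then (k : ℂ) * (a i : ℂ) ^ 2 else 0 := by
        intro j hj
        have hik : ((ζ : ℂ) ^ i) ^ k = 1 := by
          rw [← pow_mul, mul_comm, pow_mul, hζ.pow_eq_one, one_pow]
        have hjk : ((ζ : ℂ) ^ j) ^ k = 1 := by
          rw [← pow_mul, mul_comm, pow_mul, hζ.pow_eq_one, one_pow]
        rw [← Finset.mul_sum, sum_pow_root_of_unity k _ (by
          rw [mul_pow, inv_pow, hik, hjk, inv_one, mul_one])]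
        have hiff : (ζ ^ i * (ζ ^ j)⁻¹ = 1) ↔ j = i := by
          rw [mul_inv_eq_one₀ (pow_ne_zero _ hζ0)]
          constructor
          · intro hh
            exact (hζ.pow_inj (Finset.mem_range.mp hj) (Finset.mem_range.mp hi) hh.symm)
          · rintro rfl; rfl
        simp only [hiff]
        split_ifs with hji
        · subst hji; ring
        · ring
      rw [Finset.sum_congr rfl this, Finset.sum_ite_eq' (Finset.range k) i
        (fun _ => (k : ℂ) * (a i : ℂ) ^ 2), if_pos hi]
    rw [Finset.sum_congr rfl inner, ← Finset.mul_sum]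
  have cast_eq : ∀ h, ((‖f h‖) ^ 2 : ℂ) = f h * (starRingEnd ℂ) (f h) := by
    intro h
    rw [Complex.mul_conj, ← Complex.ofReal_pow, Complex.sq_norm]
  apply Complex.ofReal_injective
  push_cast
  rw [Finset.sum_congr rfl (fun h _ => cast_eq h), key]

theorem norm_bound (k : ℕ) (hk : 0 < k) (a : ℕ → ℤ) (ζ : ℂ)
    (hζ : IsPrimitiveRoot ζ k) :
    ‖(∏ h ∈ (Finset.range k).filter (fun h => Nat.Coprime h k),
        ∑ i ∈ Finset.range k, (a i : ℂ) * (ζ ^ h) ^ i)‖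
      ≤ (((k : ℝ) / (Nat.totient k)) * ∑ i ∈ Finset.range k, (a i : ℝ) ^ 2)
          ^ ((Nat.totient k : ℝ) / 2) := by
  classical
  set φ := Nat.totient k with hφdef
  have hφ : 0 < φ := Nat.totient_pos.mpr hk
  set S := (Finset.range k).filter (fun h => Nat.Coprime h k) with hS
  have hcard : S.card = φ := by
    rw [hφdef, Nat.totient]
    congr 1
    apply Finset.filter_congr
    intro x _
    simp [Nat.coprime_comm]
  set f : ℕ → ℂ := fun h => ∑ i ∈ Finset.range k, (a i : ℂ) * (ζ ^ h) ^ i with hf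
  set z : ℕ → ℝ := fun h => ‖f h‖ ^ 2 with hz
  have hznn : ∀ h, 0 ≤ z h := fun h => sq_nonneg _
  have h1 : ∏ h ∈ S, (z h) ^ ((1 : ℝ) / φ) ≤ ∑ h ∈ S, ((1 : ℝ) / φ) * z h := by
    apply Real.geom_mean_le_arith_mean_weighted S (fun _ => (1 : ℝ) / φ) z
    · intro i _; positivity
    · rw [Finset.sum_const, hcard, nsmul_eq_mul]
      field_simp
    · intro i _; exact hznn i
  have hpars : ∑ h ∈ Finset.range k, z h
      = (k : ℝ) * ∑ i ∈ Finset.range k, (a i : ℝ) ^ 2 := parseval k hk a ζ hζ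
  have hB : ∑ h ∈ S, ((1 : ℝ) / φ) * z h
      ≤ ((k : ℝ) / φ) * ∑ i ∈ Finset.range k, (a i : ℝ) ^ 2 := by
    rw [← Finset.mul_sum]
    have hsub : ∑ h ∈ S, z h ≤ ∑ h ∈ Finset.range k, z h :=
      Finset.sum_le_sum_of_subset_of_nonneg (Finset.filter_subset _ _)
        (fun i _ _ => hznn i)
    calc ((1 : ℝ) / φ) * ∑ h ∈ S, z h
        ≤ ((1 : ℝ) / φ) * ∑ h ∈ Finset.range k, z h :=
          mul_le_mul_of_nonneg_left hsub (by positivity)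
      _ = ((1 : ℝ) / φ) * ((k : ℝ) * ∑ i ∈ Finset.range k, (a i : ℝ) ^ 2) := by
          rw [hpars]
      _ = ((k : ℝ) / φ) * ∑ i ∈ Finset.range k, (a i : ℝ) ^ 2 := by ring
  have hprodz : ∏ h ∈ S, z h = ‖∏ h ∈ S, f h‖ ^ 2 := by
    simp only [hz, norm_prod, Finset.prod_pow]
  have hprod : ∏ h ∈ S, (z h) ^ ((1 : ℝ) / φ)
      = (‖∏ h ∈ S, f h‖ ^ 2) ^ ((1 : ℝ) / φ) := by
    rw [Real.finset_prod_rpow S z (fun i _ => hznn i), hprodz]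
  set P := ‖∏ h ∈ S, f h‖ with hP
  have h2 : (P ^ 2) ^ ((1 : ℝ) / φ)
      ≤ ((k : ℝ) / φ) * ∑ i ∈ Finset.range k, (a i : ℝ) ^ 2 := by
    rw [← hprod]; exact h1.trans hB
  have hPnn : 0 ≤ P := norm_nonneg _
  have hrw : P = ((P ^ 2) ^ ((1 : ℝ) / φ)) ^ ((φ : ℝ) / 2) := by
    rw [← Real.rpow_natCast P 2, ← Real.rpow_mul hPnn, ← Real.rpow_mul hPnn]
    have hexp : ((2 : ℕ) : ℝ) * ((1 : ℝ) / φ) * ((φ : ℝ) / 2) = 1 := by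
      have hφ0 : (φ : ℝ) ≠ 0 := Nat.cast_ne_zero.mpr hφ.ne'
      push_cast
      field_simp
    rw [hexp, Real.rpow_one]
  rw [hrw]
  exact Real.rpow_le_rpow (Real.rpow_nonneg (by positivity) _) h2 (by positivity)
end

section
/- Let k be a positive integer and f(x) = Σ_{i=0}^{k-1} a_i x^i ∈ ℤ[x] with Σ_{i=0}^{k-1} a_i^2 ≥ 3. Then the absolute norm of f(ζ_k) from ℚ(ζ_k) to ℚ satisfies |N(f(ζ_k))| ≤ (Σ_{i=0}^{k-1} a_i^2)^{k/2}. -/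
open Finset Complex

lemma parseval_aux (k : ℕ) (hk : 0 < k) (a : ℕ → ℤ) (ζ : ℂ)
    (hζ : IsPrimitiveRoot ζ k) :
    ∑ h ∈ Finset.range k,
        ‖∑ i ∈ Finset.range k, (a i : ℂ) * (ζ ^ h) ^ i‖ ^ 2
      = k * ∑ i ∈ Finset.range k, (a i : ℝ) ^ 2 := by
  have hζ0 : ζ ≠ 0 := hζ.ne_zero hk.ne'
  have habs : ‖ζ‖ = 1 := Complex.norm_eq_one_of_pow_eq_one hζ.pow_eq_one hk.ne'
  have hconj : (starRingEnd ℂ) ζ = ζ⁻¹ := (Complex.inv_eq_conj habs).symm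
  set F : ℕ → ℂ := fun h => ∑ i ∈ Finset.range k, (a i : ℂ) * (ζ ^ h) ^ i with hF
  -- geometric sums
  have hgeom : ∀ i ∈ Finset.range k, ∀ j ∈ Finset.range k,
      ∑ h ∈ Finset.range k, (ζ ^ i * ((starRingEnd ℂ) ζ) ^ j) ^ h
        = if i = j then (k : ℂ) else 0 := by
    intro i hi j hj
    rw [hconj]
    by_cases hij : i = j
    · subst hij
      simp [inv_pow, mul_inv_cancel₀ (pow_ne_zero i hζ0)]
    · have hz : ζ ^ i * (ζ⁻¹) ^ j = ζ ^ i / ζ ^ j := by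
        rw [inv_pow, div_eq_mul_inv]
      have hz1 : ζ ^ i * (ζ⁻¹) ^ j ≠ 1 := by
        rw [hz]
        intro h
        exact hij (hζ.pow_inj (Finset.mem_range.mp hi) (Finset.mem_range.mp hj)
          ((div_eq_one_iff_eq (pow_ne_zero _ hζ0)).mp h))
      have hzk : (ζ ^ i * (ζ⁻¹) ^ j) ^ k = 1 := by
        rw [hz, div_pow, ← pow_mul, ← pow_mul, mul_comm i k, mul_comm j k,
          pow_mul, pow_mul, hζ.pow_eq_one, one_pow, one_pow, div_one]
      rw [geom_sum_eq hz1, hzk, sub_self, zero_div, if_neg hij]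
  -- main complex identity
  have main : ∑ h ∈ Finset.range k, (F h * (starRingEnd ℂ) (F h))
      = (k : ℂ) * ∑ i ∈ Finset.range k, (a i : ℂ) ^ 2 := by
    have step1 : ∀ h, F h * (starRingEnd ℂ) (F h)
        = ∑ i ∈ Finset.range k, ∑ j ∈ Finset.range k,
            ((a i : ℂ) * (a j : ℂ)) * ((ζ ^ i * ((starRingEnd ℂ) ζ) ^ j) ^ h) := by
      intro h
      have hconjF : (starRingEnd ℂ) (F h)
          = ∑ j ∈ Finset.range k, (a j : ℂ) * (((starRingEnd ℂ) ζ ^ h) ^ j) := by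
        simp [hF, map_sum, map_mul, map_pow]
      rw [hconjF, hF, Finset.sum_mul_sum]
      refine Finset.sum_congr rfl fun i _ => Finset.sum_congr rfl fun j _ => ?_
      ring
    calc ∑ h ∈ Finset.range k, (F h * (starRingEnd ℂ) (F h))
        = ∑ h ∈ Finset.range k, ∑ i ∈ Finset.range k, ∑ j ∈ Finset.range k,
            ((a i : ℂ) * (a j : ℂ)) * ((ζ ^ i * ((starRingEnd ℂ) ζ) ^ j) ^ h) := by
          exact Finset.sum_congr rfl fun h _ => step1 h
      _ = ∑ i ∈ Finset.range k, ∑ j ∈ Finset.range k,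
            ((a i : ℂ) * (a j : ℂ)) *
              ∑ h ∈ Finset.range k, (ζ ^ i * ((starRingEnd ℂ) ζ) ^ j) ^ h := by
          rw [Finset.sum_comm]
          refine Finset.sum_congr rfl fun i _ => ?_
          rw [Finset.sum_comm]
          refine Finset.sum_congr rfl fun j _ => ?_
          rw [Finset.mul_sum]
      _ = ∑ i ∈ Finset.range k, ∑ j ∈ Finset.range k,
            ((a i : ℂ) * (a j : ℂ)) * (if i = j then (k : ℂ) else 0) := by
          refine Finset.sum_congr rfl fun i hi => Finset.sum_congr rfl fun j hj => ?_
          rw [hgeom i hi j hj]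
      _ = (k : ℂ) * ∑ i ∈ Finset.range k, (a i : ℂ) ^ 2 := by
          rw [Finset.mul_sum]
          refine Finset.sum_congr rfl fun i hi => ?_
          simp only [mul_ite, mul_zero]
          rw [Finset.sum_ite_eq]
          simp only [hi, if_pos]
          ring
  have cast_eq : ((∑ h ∈ Finset.range k,
      ‖F h‖ ^ 2 : ℝ) : ℂ) = ((k * ∑ i ∈ Finset.range k, (a i : ℝ) ^ 2 : ℝ) : ℂ) := by
    push_cast
    rw [← main]
    refine Finset.sum_congr rfl fun h _ => ?_
    rw [Complex.mul_conj]
    norm_cast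
    rw [Complex.sq_norm]
  exact_mod_cast cast_eq

theorem norm_bound_ge_three (k : ℕ) (hk : 0 < k) (a : ℕ → ℤ)
    (ha : 3 ≤ ∑ i ∈ Finset.range k, (a i) ^ 2) (ζ : ℂ)
    (hζ : IsPrimitiveRoot ζ k) :
    ‖(∏ h ∈ (Finset.range k).filter (fun h => Nat.Coprime h k),
        ∑ i ∈ Finset.range k, (a i : ℂ) * (ζ ^ h) ^ i)‖
      ≤ ((∑ i ∈ Finset.range k, (a i : ℝ) ^ 2)) ^ ((k : ℝ) / 2) := by
  set S : ℝ := ∑ i ∈ Finset.range k, (a i : ℝ) ^ 2 with hS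
  have hS3 : (3 : ℝ) ≤ S := by
    have : ((3 : ℤ) : ℝ) ≤ ((∑ i ∈ Finset.range k, (a i) ^ 2 : ℤ) : ℝ) := by
      exact_mod_cast ha
    simpa [hS] using this
  have hSpos : (0 : ℝ) < S := lt_of_lt_of_le (by norm_num) hS3
  set T : Finset ℕ := (Finset.range k).filter (fun h => Nat.Coprime h k) with hT
  set φ : ℕ := T.card with hφ
  have hTne : T.Nonempty := by
    obtain ⟨m, rfl⟩ : ∃ m, k = m + 1 := ⟨k - 1, by omega⟩
    exact ⟨m, by simp [hT, Finset.mem_filter, Finset.mem_range]⟩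
  have hφpos : 0 < φ := Finset.card_pos.mpr hTne
  have hφk : φ ≤ k := by
    calc φ ≤ (Finset.range k).card := Finset.card_filter_le _ _
    _ = k := Finset.card_range k
  have hφR : (0 : ℝ) < (φ : ℝ) := by exact_mod_cast hφpos
  have hφkR : (φ : ℝ) ≤ (k : ℝ) := by exact_mod_cast hφk
  set F : ℕ → ℂ := fun h => ∑ i ∈ Finset.range k, (a i : ℂ) * (ζ ^ h) ^ i with hF
  set z : ℕ → ℝ := fun h => ‖F h‖ ^ 2 with hz
  have hznn : ∀ h, 0 ≤ z h := fun h => sq_nonneg _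
  -- Parseval bound on the sum over T
  have hsumT : ∑ h ∈ T, z h ≤ k * S := by
    calc ∑ h ∈ T, z h ≤ ∑ h ∈ Finset.range k, z h := by
          refine Finset.sum_le_sum_of_subset_of_nonneg (Finset.filter_subset _ _)
            (fun h _ _ => hznn h)
      _ = k * S := parseval_aux k hk a ζ hζ
  -- AM-GM
  have amgm : ∏ h ∈ T, z h ≤ (k * S / φ) ^ (φ : ℝ) := by
    have h1 : ∏ h ∈ T, z h ^ ((φ : ℝ)⁻¹) ≤ ∑ h ∈ T, (φ : ℝ)⁻¹ * z h :=
      Real.geom_mean_le_arith_mean_weighted T _ z (fun _ _ => by positivity)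
        (by rw [Finset.sum_const, nsmul_eq_mul, mul_inv_cancel₀ hφR.ne']) (fun h _ => hznn h)
    have h2 : ∑ h ∈ T, (φ : ℝ)⁻¹ * z h ≤ k * S / φ := by
      rw [← Finset.mul_sum, div_eq_inv_mul]
      exact mul_le_mul_of_nonneg_left hsumT (by positivity)
    have h3 : (∏ h ∈ T, z h) ^ ((φ : ℝ)⁻¹) ≤ k * S / φ := by
      rw [← Real.finset_prod_rpow T z (fun h _ => hznn h)]
      exact h1.trans h2
    have h4 := Real.rpow_le_rpow (Real.rpow_nonneg (Finset.prod_nonneg fun h _ => hznn h) _)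
      h3 (le_of_lt hφR)
    rwa [← Real.rpow_mul (Finset.prod_nonneg fun h _ => hznn h),
      inv_mul_cancel₀ hφR.ne', Real.rpow_one] at h4
  -- the key elementary estimate
  have hkey : (k * S / φ) ^ (φ : ℝ) ≤ S ^ (k : ℝ) := by
    have hr1 : (1 : ℝ) ≤ (k : ℝ) / φ := (one_le_div hφR).mpr hφkR
    have hexp : (k : ℝ) / φ ≤ (3 : ℝ) ^ ((k : ℝ) / φ - 1) := by
      calc (k : ℝ) / φ ≤ Real.exp ((k : ℝ) / φ - 1) := by
            have := Real.add_one_le_exp ((k : ℝ) / φ - 1); linarith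
        _ ≤ (3 : ℝ) ^ ((k : ℝ) / φ - 1) := by
            rw [← Real.exp_one_rpow]
            refine Real.rpow_le_rpow (Real.exp_pos 1).le ?_ (by linarith)
            have := Real.exp_one_lt_d9; linarith
    have h5 : ((k : ℝ) / φ) ^ (φ : ℝ) ≤ ((3 : ℝ) ^ ((k : ℝ) / φ - 1)) ^ (φ : ℝ) :=
      Real.rpow_le_rpow (by positivity) hexp (le_of_lt hφR)
    have h6 : ((3 : ℝ) ^ ((k : ℝ) / φ - 1)) ^ (φ : ℝ) = (3 : ℝ) ^ ((k : ℝ) - φ) := by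
      rw [← Real.rpow_mul (by norm_num)]
      congr 1
      field_simp
    have h7 : (3 : ℝ) ^ ((k : ℝ) - φ) ≤ S ^ ((k : ℝ) - φ) :=
      Real.rpow_le_rpow (by norm_num) hS3 (by linarith)
    calc (k * S / φ) ^ (φ : ℝ) = ((k : ℝ) / φ * S) ^ (φ : ℝ) := by ring_nf
      _ = ((k : ℝ) / φ) ^ (φ : ℝ) * S ^ (φ : ℝ) :=
          Real.mul_rpow (by positivity) hSpos.le
      _ ≤ (3 : ℝ) ^ ((k : ℝ) - φ) * S ^ (φ : ℝ) := by
          rw [← h6]; exact mul_le_mul_of_nonneg_right h5 (Real.rpow_nonneg hSpos.le _)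
      _ ≤ S ^ ((k : ℝ) - φ) * S ^ (φ : ℝ) :=
          mul_le_mul_of_nonneg_right h7 (Real.rpow_nonneg hSpos.le _)
      _ = S ^ (k : ℝ) := by rw [← Real.rpow_add hSpos]; ring_nf
  -- conclude
  have hPsq : ‖∏ h ∈ T, F h‖ ^ 2 ≤ S ^ (k : ℝ) := by
    rw [norm_prod, ← Finset.prod_pow]
    exact le_trans amgm hkey
  have hfinal : (S ^ ((k : ℝ) / 2)) ^ 2 = S ^ (k : ℝ) := by
    rw [← Real.rpow_natCast (S ^ ((k : ℝ) / 2)) 2, ← Real.rpow_mul hSpos.le]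
    norm_num
  refine le_of_pow_le_pow_left₀ (n := 2) two_ne_zero (Real.rpow_nonneg hSpos.le _) ?_
  rw [hfinal]
  exact hPsq
end

section
/- Let k be a prime and f(x) = Σ_{i=0}^{k-1} a_i x^i ∈ ℤ[x] with Σ_{i=0}^{k-1} a_i = 0. Let M be the k×k circulant matrix with first row (a_0,...,a_{k-1}) and let N be the (k-1)×(k-1) matrix obtained from M by deleting its first row and first column. Then the norm of f(ζ_k) from ℚ(ζ_k) to ℚ equals k · det(N). -/
open Finset

lemma key1 (k r x : ℕ) (hr : r < k) (hx : x < k) : ((x + k - r) % k + r) % k = x := by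
  rw [Nat.mod_add_mod]
  have h : x + k - r + r = x + k := by omega
  rw [h, Nat.add_mod_right, Nat.mod_eq_of_lt hx]

lemma key2 (k r i : ℕ) (hr : r ≤ k) (hi : i < k) : ((i + r) % k + k - r) % k = i := by
  rw [Nat.add_sub_assoc hr, Nat.mod_add_mod]
  have h : i + r + (k - r) = i + k := by omega
  rw [h, Nat.add_mod_right, Nat.mod_eq_of_lt hi]

lemma key3 (k r s : ℕ) (hr : r < k) (hs : s < k) : (s + k - (s + k - r) % k) % k = r := by
  set m := (s + k - r) % k with hm
  have hmk : m ≤ k := le_of_lt (Nat.mod_lt _ (by omega))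
  have h : (m + r) % k = s := key1 k r s hr hs
  rw [← h, Nat.add_comm m r]
  exact key2 k m r hmk hr

lemma pow_mod_eq (w : ℂ) (k : ℕ) (hw : w ^ k = 1) (m : ℕ) : w ^ (m % k) = w ^ m := by
  conv_rhs => rw [← Nat.div_add_mod m k]
  rw [pow_add, pow_mul, hw, one_pow, one_mul]

lemma sum_shift (k r : ℕ) (hr : r < k) (w : ℂ) (hw : w ^ k = 1) (b : ℕ → ℂ) :
    ∑ s ∈ range k, b ((s + k - r) % k) * w ^ s = w ^ r * ∑ i ∈ range k, b i * w ^ i := by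
  have hk : 0 < k := by omega
  have step1 : ∑ s ∈ range k, b ((s + k - r) % k) * w ^ s
      = ∑ i ∈ range k, b i * w ^ ((i + r) % k) := by
    apply Finset.sum_nbij' (fun s => (s + k - r) % k) (fun i => (i + r) % k)
    · intro s hs; exact mem_range.mpr (Nat.mod_lt _ hk)
    · intro i hi; exact mem_range.mpr (Nat.mod_lt _ hk)
    · intro s hs; exact key1 k r s hr (mem_range.mp hs)
    · intro i hi; exact key2 k r i (le_of_lt hr) (mem_range.mp hi)
    · intro s hs
      rw [key1 k r s hr (mem_range.mp hs)]
  rw [step1, Finset.mul_sum]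
  apply Finset.sum_congr rfl
  intro i hi
  rw [pow_mod_eq w k hw, pow_add]
  ring

lemma sum_shift_col (k s : ℕ) (hs : s < k) (b : ℕ → ℂ) :
    ∑ r ∈ range k, b ((s + k - r) % k) = ∑ i ∈ range k, b i := by
  have hk : 0 < k := by omega
  apply Finset.sum_nbij' (fun r => (s + k - r) % k) (fun i => (s + k - i) % k)
  · intro r hr; exact mem_range.mpr (Nat.mod_lt _ hk)
  · intro i hi; exact mem_range.mpr (Nat.mod_lt _ hk)
  · intro r hr; exact key3 k r s (mem_range.mp hr) hs
  · intro i hi; exact key3 k i s (mem_range.mp hi) hs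
  · intro r hr; rfl

lemma sum_shift_row (k r : ℕ) (hr : r < k) (b : ℕ → ℂ) :
    ∑ s ∈ range k, b ((s + k - r) % k) = ∑ i ∈ range k, b i := by
  have := sum_shift k r hr 1 (one_pow k) b
  simpa using this

theorem norm_eq_k_mul_det (k : ℕ) (hk : k.Prime) (a : ℕ → ℤ)
    (hs : ∑ i ∈ Finset.range k, a i = 0) (ζ : ℂ) (hζ : IsPrimitiveRoot ζ k) :
    ∏ h ∈ Finset.Ico 1 k, ∑ i ∈ Finset.range k, (a i : ℂ) * (ζ ^ h) ^ i
      = (k : ℂ) * (Matrix.of fun r s : Fin (k - 1) =>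
            ((a ((((s : ℕ) + 1) + k - ((r : ℕ) + 1)) % k) : ℤ) : ℂ)).det := by
  obtain ⟨n, rfl⟩ : ∃ n, k = n + 1 := ⟨k - 1, (Nat.succ_pred_eq_of_pos hk.pos).symm⟩
  have hk1 : 1 < n + 1 := hk.one_lt
  set b : ℕ → ℂ := fun i => ((a i : ℤ) : ℂ) with hbdef
  have hbs : ∑ i ∈ range (n + 1), b i = 0 := by
    have : ((∑ i ∈ range (n + 1), a i : ℤ) : ℂ) = 0 := by rw [hs]; norm_cast
    rw [← this]; push_cast; rfl
  have hζk : ζ ^ (n + 1) = 1 := hζ.pow_eq_one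
  set K : ℂ := ((n : ℂ) + 1) with hKdef
  have hKne : K ≠ 0 := by
    have : (0:ℝ) < n + 1 := by positivity
    simp only [hKdef]
    intro h
    have := congrArg Complex.re h
    simp at this
    linarith
  -- the matrices
  set A : Matrix (Fin (n+1)) (Fin (n+1)) ℂ :=
    Matrix.of (fun r s => b (((s:ℕ) + (n+1) - (r:ℕ)) % (n+1))) with hAdef
  set B : Matrix (Fin (n+1)) (Fin (n+1)) ℂ := Matrix.of (fun r s => A r s + 1) with hBdef
  -- row and column sums of B
  have hArow : ∀ r : Fin (n+1), ∑ s : Fin (n+1), A r s = 0 := by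
    intro r
    have : ∑ s : Fin (n+1), A r s
        = ∑ s ∈ range (n+1), b ((s + (n+1) - (r:ℕ)) % (n+1)) :=
      Fin.sum_univ_eq_sum_range (fun s => b ((s + (n+1) - (r:ℕ)) % (n+1))) (n+1)
    rw [this, sum_shift_row (n+1) r r.isLt b, hbs]
  have hAcol : ∀ s : Fin (n+1), ∑ r : Fin (n+1), A r s = 0 := by
    intro s
    have : ∑ r : Fin (n+1), A r s
        = ∑ r ∈ range (n+1), b (((s:ℕ) + (n+1) - r) % (n+1)) :=
      Fin.sum_univ_eq_sum_range (fun r => b (((s:ℕ) + (n+1) - r) % (n+1))) (n+1)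
    rw [this, sum_shift_col (n+1) s s.isLt b, hbs]
  have hBrow : ∀ r : Fin (n+1), ∑ s : Fin (n+1), B r s = K := by
    intro r
    calc ∑ s : Fin (n+1), B r s = ∑ s : Fin (n+1), (A r s + 1) := rfl
      _ = (∑ s : Fin (n+1), A r s) + ∑ _s : Fin (n+1), (1:ℂ) := Finset.sum_add_distrib
      _ = K := by
          rw [hArow r, zero_add, Finset.sum_const, Finset.card_univ, Fintype.card_fin,
            nsmul_eq_mul, mul_one, hKdef]
          push_cast; try ring
  have hBcol : ∀ s : Fin (n+1), ∑ r : Fin (n+1), B r s = K := by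
    intro s
    calc ∑ r : Fin (n+1), B r s = ∑ r : Fin (n+1), (A r s + 1) := rfl
      _ = (∑ r : Fin (n+1), A r s) + ∑ _r : Fin (n+1), (1:ℂ) := Finset.sum_add_distrib
      _ = K := by
          rw [hAcol s, zero_add, Finset.sum_const, Finset.card_univ, Fintype.card_fin,
            nsmul_eq_mul, mul_one, hKdef]
          push_cast; try ring
  -- eigen part : det B = K * product
  set Fm : Matrix (Fin (n+1)) (Fin (n+1)) ℂ :=
    Matrix.vandermonde (fun i : Fin (n+1) => ζ ^ (i:ℕ)) with hFdef
  set d : Fin (n+1) → ℂ :=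
    (fun h => (if h = 0 then K else 0) + ∑ i ∈ range (n+1), b i * (ζ ^ (h:ℕ)) ^ i) with hddef
  have hgeom : ∀ h : Fin (n+1), ∑ s ∈ range (n+1), (ζ ^ (h:ℕ)) ^ s
      = if h = 0 then K else 0 := by
    intro h
    by_cases h0 : h = 0
    · subst h0
      rw [if_pos rfl]
      have h1 : ∀ s, (ζ ^ ((0 : Fin (n+1)):ℕ)) ^ s = 1 := by
        intro s; rw [Fin.val_zero, pow_zero, one_pow]
      rw [Finset.sum_congr rfl (fun s _ => h1 s), Finset.sum_const, Finset.card_range,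
        nsmul_eq_mul, mul_one, hKdef, Nat.cast_add, Nat.cast_one]
    · rw [if_neg h0]
      have hcop : ((h:ℕ)).Coprime (n+1) := by
        refine Nat.Coprime.symm (hk.coprime_iff_not_dvd.mpr ?_)
        intro hdvd
        have hlt : (h:ℕ) < n + 1 := h.isLt
        have hne : (h:ℕ) ≠ 0 := fun hh => h0 (Fin.ext hh)
        have := Nat.le_of_dvd (Nat.pos_of_ne_zero hne) hdvd
        omega
      exact (hζ.pow_of_coprime (h:ℕ) hcop).geom_sum_eq_zero hk1
  have hBF : B * Fm = Fm * Matrix.diagonal d := by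
    ext r h
    rw [Matrix.mul_apply, Matrix.mul_diagonal]
    set w : ℂ := ζ ^ (h:ℕ) with hwdef
    have hw : w ^ (n+1) = 1 := by
      rw [hwdef, ← pow_mul, mul_comm, pow_mul, hζk, one_pow]
    have hentry : ∀ s : Fin (n+1), B r s * Fm s h
        = (b (((s:ℕ) + (n+1) - (r:ℕ)) % (n+1)) + 1) * w ^ (s:ℕ) := by
      intro s
      simp only [hBdef, hAdef, hFdef, Matrix.of_apply, Matrix.vandermonde_apply, hwdef]
      rw [← pow_mul, ← pow_mul, mul_comm (s:ℕ) (h:ℕ)]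
    rw [Finset.sum_congr rfl (fun s _ => hentry s)]
    have hconv : ∑ s : Fin (n+1), (b (((s:ℕ) + (n+1) - (r:ℕ)) % (n+1)) + 1) * w ^ (s:ℕ)
        = ∑ s ∈ range (n+1), (b ((s + (n+1) - (r:ℕ)) % (n+1)) + 1) * w ^ s :=
      Fin.sum_univ_eq_sum_range (fun s => (b ((s + (n+1) - (r:ℕ)) % (n+1)) + 1) * w ^ s) (n+1)
    rw [hconv]
    have hsplit : ∑ s ∈ range (n+1), (b ((s + (n+1) - (r:ℕ)) % (n+1)) + 1) * w ^ s
        = ∑ s ∈ range (n+1), b ((s + (n+1) - (r:ℕ)) % (n+1)) * w ^ s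
          + ∑ s ∈ range (n+1), w ^ s := by
      rw [← Finset.sum_add_distrib]
      apply Finset.sum_congr rfl; intro s _; ring
    rw [hsplit, sum_shift (n+1) r r.isLt w hw b, hgeom h]
    have hFrh : Fm r h = w ^ (r:ℕ) := by
      simp only [hFdef, Matrix.vandermonde_apply, hwdef]
      rw [← pow_mul, ← pow_mul, mul_comm]
    have hdh : d h = (if h = 0 then K else 0) + ∑ i ∈ range (n+1), b i * w ^ i := rfl
    rw [hFrh, hdh]
    by_cases h0 : h = 0
    · subst h0
      have hw1 : w = 1 := by rw [hwdef, Fin.val_zero, pow_zero]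
      rw [if_pos rfl, hw1, one_pow]
      ring
    · rw [if_neg h0]
      ring
  have hdetF : Fm.det ≠ 0 := by
    rw [hFdef, Matrix.det_vandermonde_ne_zero_iff]
    intro i j hij
    exact Fin.ext (hζ.pow_inj i.isLt j.isLt hij)
  have hdetBD : B.det = (Matrix.diagonal d).det := by
    have h1 : B.det * Fm.det = Fm.det * (Matrix.diagonal d).det := by
      rw [← Matrix.det_mul, ← Matrix.det_mul, hBF]
    have h2 : Fm.det * B.det = Fm.det * (Matrix.diagonal d).det := by
      rw [mul_comm Fm.det B.det]; exact h1
    exact mul_left_cancel₀ hdetF h2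
  set P : ℂ := ∏ h ∈ Finset.Ico 1 (n+1), ∑ i ∈ range (n+1), b i * (ζ ^ h) ^ i with hPdef
  have hdetD : (Matrix.diagonal d).det = K * P := by
    rw [Matrix.det_diagonal, Fin.prod_univ_succ]
    have hd0 : d 0 = K := by
      show (if (0 : Fin (n+1)) = 0 then K else 0)
          + ∑ i ∈ range (n+1), b i * (ζ ^ ((0 : Fin (n+1)):ℕ)) ^ i = K
      rw [if_pos rfl, Fin.val_zero]
      simp only [pow_zero, one_pow, mul_one]
      rw [hbs, add_zero]
    have hdsucc : ∀ h : Fin n, d h.succ = ∑ i ∈ range (n+1), b i * (ζ ^ ((h:ℕ)+1)) ^ i := by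
      intro h
      simp only [hddef, if_neg (Fin.succ_ne_zero h), zero_add, Fin.val_succ]
    rw [hd0]
    congr 1
    rw [Finset.prod_congr rfl (fun h _ => hdsucc h)]
    have : ∏ h : Fin n, ∑ i ∈ range (n+1), b i * (ζ ^ ((h:ℕ)+1)) ^ i
        = ∏ h ∈ range n, ∑ i ∈ range (n+1), b i * (ζ ^ (h+1)) ^ i :=
      Fin.prod_univ_eq_prod_range (fun h => ∑ i ∈ range (n+1), b i * (ζ ^ (h+1)) ^ i) n
    rw [this, hPdef, Finset.prod_Ico_eq_prod_range]
    simp only [Nat.add_sub_cancel]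
    apply Finset.prod_congr rfl
    intro h _
    rw [Nat.add_comm 1 h]
  -- reduction part : det B = K^2 * det N
  set L : Matrix (Fin (n+1)) (Fin (n+1)) ℂ :=
    Matrix.of (fun r s => if r = 0 then 1 else if r = s then 1 else 0) with hLdef
  set R : Matrix (Fin (n+1)) (Fin (n+1)) ℂ :=
    Matrix.of (fun r s => if s = 0 then 1 else if r = s then 1 else 0) with hRdef
  set L' : Matrix (Fin (n+1)) (Fin (n+1)) ℂ :=
    Matrix.of (fun r s => if r = s then 1 else if s = 0 then -(1/K) else 0) with hL'def
  have hdetL : L.det = 1 := by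
    rw [Matrix.det_of_upperTriangular]
    · apply Finset.prod_eq_one
      intro i _
      by_cases hi : i = (0 : Fin (n+1)) <;> simp [hLdef, hi]
    · intro i j hij
      have h1 : i ≠ 0 := by
        intro h; rw [h] at hij; exact absurd hij (by simp)
      have h2 : i ≠ j := by intro h; rw [h] at hij; exact lt_irrefl _ hij
      simp [hLdef, h1, h2]
  have hdetR : R.det = 1 := by
    rw [Matrix.det_of_lowerTriangular]
    · apply Finset.prod_eq_one
      intro i _
      by_cases hi : i = (0 : Fin (n+1)) <;> simp [hRdef, hi]
    · intro i j hij
      have hij' : (i:ℕ) < (j:ℕ) := hij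
      have h1 : j ≠ 0 := by
        intro h; rw [h] at hij'; simp at hij'
      have h2 : i ≠ j := by intro h; rw [h] at hij'; exact lt_irrefl _ hij'
      simp [hRdef, h2, h1]
  have hdetL' : L'.det = 1 := by
    rw [Matrix.det_of_lowerTriangular]
    · apply Finset.prod_eq_one
      intro i _
      simp [hL'def]
    · intro i j hij
      have hij' : (i:ℕ) < (j:ℕ) := hij
      have h1 : j ≠ 0 := by
        intro h; rw [h] at hij'; simp at hij'
      have h2 : i ≠ j := by intro h; rw [h] at hij'; exact lt_irrefl _ hij'
      simp [hL'def, h2, h1]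
  set M1 : Matrix (Fin (n+1)) (Fin (n+1)) ℂ :=
    Matrix.of (fun r s => if r = 0 then K else B r s) with hM1def
  set M2 : Matrix (Fin (n+1)) (Fin (n+1)) ℂ :=
    Matrix.of (fun r s => if s = 0 then (if r = 0 then K * K else K) else M1 r s) with hM2def
  set M3 : Matrix (Fin (n+1)) (Fin (n+1)) ℂ :=
    Matrix.of (fun r s => if r = 0 then M2 0 s else if s = 0 then 0 else A r s) with hM3def
  have hLB : L * B = M1 := by
    ext r s
    rw [Matrix.mul_apply]
    by_cases hr : r = 0
    · subst hr
      have h1 : ∀ t : Fin (n+1), L 0 t * B t s = B t s := by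
        intro t; simp [hLdef]
      rw [Finset.sum_congr rfl (fun t _ => h1 t), hBcol s]
      simp [hM1def]
    · have h1 : ∀ t : Fin (n+1), L r t * B t s = if t = r then B t s else 0 := by
        intro t
        by_cases ht : t = r
        · subst ht; simp [hLdef, hr]
        · simp [hLdef, hr, Ne.symm ht, ht]
      rw [Finset.sum_congr rfl (fun t _ => h1 t), Finset.sum_ite_eq' univ r (fun t => B t s)]
      simp [hM1def, hr]
  have hM1R : M1 * R = M2 := by
    ext r s
    rw [Matrix.mul_apply]
    by_cases hcs : s = 0
    · subst hcs
      have h1 : ∀ t : Fin (n+1), M1 r t * R t 0 = M1 r t := by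
        intro t; simp [hRdef]
      rw [Finset.sum_congr rfl (fun t _ => h1 t)]
      by_cases hr : r = 0
      · subst hr
        have h2 : ∀ t : Fin (n+1), M1 0 t = K := by intro t; simp [hM1def]
        have h3 : M2 0 0 = K * K := by simp [hM2def]
        rw [Finset.sum_congr rfl (fun t _ => h2 t), Finset.sum_const, Finset.card_univ,
          Fintype.card_fin, nsmul_eq_mul, h3, hKdef]
        push_cast; try ring
      · have h2 : ∀ t : Fin (n+1), M1 r t = B r t := by intro t; simp [hM1def, hr]
        have h3 : M2 r 0 = K := by simp [hM2def, hr]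
        rw [Finset.sum_congr rfl (fun t _ => h2 t), hBrow r, h3]
    · have h1 : ∀ t : Fin (n+1), M1 r t * R t s = if t = s then M1 r s else 0 := by
        intro t
        by_cases ht : t = s
        · subst ht; simp [hRdef, hcs]
        · simp [hRdef, hcs, ht]
      rw [Finset.sum_congr rfl (fun t _ => h1 t),
        Finset.sum_ite_eq' univ s (fun _ => M1 r s)]
      simp [hM2def, hcs]
  have hL'M2 : L' * M2 = M3 := by
    ext r s
    rw [Matrix.mul_apply]
    by_cases hr : r = 0
    · subst hr
      have h1 : ∀ t : Fin (n+1), L' 0 t * M2 t s = if t = 0 then M2 0 s else 0 := by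
        intro t
        by_cases ht : t = 0
        · subst ht; simp [hL'def]
        · simp [hL'def, ht, Ne.symm ht]
      rw [Finset.sum_congr rfl (fun t _ => h1 t),
        Finset.sum_ite_eq' univ (0 : Fin (n+1)) (fun _ => M2 0 s)]
      simp [hM3def]
    · have h1 : ∀ t : Fin (n+1), L' r t * M2 t s
          = (if t = r then M2 r s else 0) + (if t = 0 then -(1/K) * M2 0 s else 0) := by
        intro t
        by_cases ht : t = r
        · subst ht
          simp [hL'def, hr]
        · by_cases ht0 : t = 0
          · subst ht0
            simp [hL'def, hr, Ne.symm hr]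
          · simp [hL'def, Ne.symm ht, ht, ht0]
      rw [Finset.sum_congr rfl (fun t _ => h1 t), Finset.sum_add_distrib,
        Finset.sum_ite_eq' univ r (fun _ => M2 r s),
        Finset.sum_ite_eq' univ (0 : Fin (n+1)) (fun _ => -(1/K) * M2 0 s)]
      simp only [Finset.mem_univ, if_true]
      by_cases hcs : s = 0
      · subst hcs
        have e1 : M2 r 0 = K := by simp [hM2def, hr]
        have e2 : M2 0 0 = K * K := by simp [hM2def]
        have e3 : M3 r 0 = 0 := by simp [hM3def, hr]
        rw [e1, e2, e3]
        field_simp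
        ring
      · have e1 : M2 r s = B r s := by simp [hM2def, hM1def, hcs, hr]
        have e2 : M2 0 s = K := by simp [hM2def, hM1def, hcs]
        have e3 : M3 r s = A r s := by simp [hM3def, hr, hcs]
        rw [e1, e2, e3]
        have e4 : B r s = A r s + 1 := rfl
        have e5 : -(1/K) * K = -1 := by field_simp
        rw [e4, e5]
        ring
  have hdetB3 : M3.det = B.det := by
    rw [← hL'M2, ← hM1R, ← hLB]
    rw [Matrix.det_mul, Matrix.det_mul, Matrix.det_mul, hdetL, hdetL', hdetR]
    ring
  -- expand along first column
  set N : Matrix (Fin n) (Fin n) ℂ :=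
    Matrix.of (fun r s : Fin n =>
      ((a ((((s : ℕ) + 1) + (n+1) - ((r : ℕ) + 1)) % (n+1)) : ℤ) : ℂ)) with hNdef
  have hsub : M3.submatrix Fin.succ Fin.succ = N := by
    ext r s
    simp only [Matrix.submatrix_apply, hM3def, Matrix.of_apply, if_neg (Fin.succ_ne_zero r),
      if_neg (Fin.succ_ne_zero s), hAdef, hNdef, Fin.val_succ, hbdef]
  have hdetM3 : M3.det = (K * K) * N.det := by
    rw [Matrix.det_succ_column_zero, Fin.sum_univ_succ]
    have hzero : ∀ i : Fin n, M3 i.succ 0 = 0 := by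
      intro i
      simp [hM3def, Fin.succ_ne_zero i]
    have h00 : M3 0 0 = K * K := by
      simp [hM3def, hM2def]
    simp only [hzero, mul_zero, zero_mul, Finset.sum_const_zero, add_zero, h00,
      Fin.val_zero, pow_zero, one_mul, Fin.succAbove_zero]
    rw [hsub]
  -- put things together
  have hmain : K * P = K * (K * N.det) := by
    have := hdetBD
    rw [hdetD] at this
    rw [← this, ← hdetB3, hdetM3]; ring
  have hfinal : P = K * N.det := mul_left_cancel₀ hKne hmain
  have hcast : ((n + 1 : ℕ) : ℂ) = K := by push_cast [hKdef]; ring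
  calc ∏ h ∈ Finset.Ico 1 (n+1), ∑ i ∈ range (n+1), (a i : ℂ) * (ζ ^ h) ^ i = P := rfl
    _ = K * N.det := hfinal
    _ = ((n+1:ℕ):ℂ) * N.det := by rw [hcast]
    _ = _ := rfl
end

section
/- Let N = (a_{ij}) be an n×n matrix with real entries. For each row i, let N_i^+ = Σ_j max(0, a_{ij}) and N_i^- = Σ_j max(0, -a_{ij}). Then |det(N)| ≤ ∏_{i=0}^{n-1} max(N_i^+, N_i^-). -/
open Finset

def goodRow {m : ℕ} (v : Fin m → ℝ) : Prop :=
  (∀ j, v j = 0 ∨ v j = 1 ∨ v j = -1) ∧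
  (Finset.univ.filter (fun j => v j = 1)).card ≤ 1 ∧
  (Finset.univ.filter (fun j => v j = -1)).card ≤ 1

lemma card_filter_le_one {m : ℕ} {p : Fin m → Prop} [DecidablePred p] {j : Fin m}
    (h : ∀ x, p x → x = j) : (Finset.univ.filter p).card ≤ 1 := by
  have hs : Finset.univ.filter p ⊆ {j} := by
    intro x hx
    exact Finset.mem_singleton.2 (h x (Finset.mem_filter.1 hx).2)
  calc (Finset.univ.filter p).card ≤ ({j} : Finset (Fin m)).card := Finset.card_le_card hs
    _ = 1 := Finset.card_singleton j

lemma goodRow_pos {m : ℕ} (j : Fin m) : goodRow (fun x => if x = j then (1:ℝ) else 0) := by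
  refine ⟨fun x => ?_, ?_, ?_⟩
  · by_cases h : x = j <;> simp [h]
  · apply card_filter_le_one (j := j); intro x hx
    by_cases h : x = j
    · exact h
    · simp [h] at hx
  · apply card_filter_le_one (j := j); intro x hx
    by_cases h : x = j <;> simp [h] at hx <;> norm_num at hx

lemma goodRow_neg {m : ℕ} (k : Fin m) : goodRow (-(fun x => if x = k then (1:ℝ) else 0)) := by
  refine ⟨fun x => ?_, ?_, ?_⟩
  · by_cases h : x = k <;> simp [h]
  · apply card_filter_le_one (j := k); intro x hx
    by_cases h : x = k <;> simp [h] at hx <;> norm_num at hx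
  · apply card_filter_le_one (j := k); intro x hx
    by_cases h : x = k
    · exact h
    · simp [h] at hx

lemma goodRow_pair {m : ℕ} (j k : Fin m) :
    goodRow ((fun x => if x = j then (1:ℝ) else 0) - (fun x => if x = k then (1:ℝ) else 0)) := by
  refine ⟨fun x => ?_, ?_, ?_⟩
  · simp only [Pi.sub_apply]
    by_cases h1 : x = j
    · subst h1
      by_cases h2 : x = k
      · subst h2; simp
      · simp [h2]
    · by_cases h2 : x = k
      · subst h2
        simp [h1]
      · simp [h1, h2]
  · apply card_filter_le_one (j := j); intro x hx
    simp only [Pi.sub_apply] at hx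
    by_cases h1 : x = j
    · exact h1
    · exfalso
      by_cases h2 : x = k
      · subst h2
        by_cases h3 : x = j <;> simp [h1, h3] at hx <;> norm_num at hx
      · simp [h1, h2] at hx
  · apply card_filter_le_one (j := k); intro x hx
    simp only [Pi.sub_apply] at hx
    by_cases h2 : x = k
    · exact h2
    · exfalso
      by_cases h1 : x = j
      · subst h1
        by_cases h3 : x = k <;> simp [h2, h3] at hx <;> norm_num at hx
      · simp [h1, h2] at hx

lemma tu_det : ∀ (m : ℕ) (A : Matrix (Fin m) (Fin m) ℝ), (∀ i, goodRow (A i)) → |A.det| ≤ 1 := by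
  intro m
  induction m with
  | zero => intro A _; simp [Matrix.det_fin_zero]
  | succ m ih =>
    intro A hA
    by_cases h : ∀ i, ((univ.filter (fun j => A i j = 1)).card = 1 ∧
        (univ.filter (fun j => A i j = -1)).card = 1)
    · -- every row sums to zero, so det = 0
      have hsum : ∀ i, ∑ j, A i j = 0 := by
        intro i
        have : ∀ j, A i j = (if A i j = 1 then (1:ℝ) else 0) - (if A i j = -1 then 1 else 0) := by
          intro j
          rcases (hA i).1 j with h0 | h0 | h0 <;> rw [h0] <;> norm_num
        calc ∑ j, A i j = ∑ j, ((if A i j = 1 then (1:ℝ) else 0) - (if A i j = -1 then 1 else 0)) :=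
              Finset.sum_congr rfl (fun j _ => this j)
          _ = ((univ.filter (fun j => A i j = 1)).card : ℝ)
              - ((univ.filter (fun j => A i j = -1)).card : ℝ) := by
              rw [Finset.sum_sub_distrib, Finset.sum_boole, Finset.sum_boole]
          _ = 0 := by rw [(h i).1, (h i).2]; norm_num
      have hdet : A.det = 0 := by
        rw [← Matrix.exists_mulVec_eq_zero_iff]
        refine ⟨fun _ => 1, ?_, ?_⟩
        · intro hcontra
          have := congrFun hcontra 0
          norm_num at this
        · funext i
          simp [Matrix.mulVec, dotProduct, hsum i]
      rw [hdet]; norm_num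
    · push_neg at h
      obtain ⟨i, hi⟩ := h
      -- row i has at most one nonzero entry total
      by_cases hz : ∀ j, A i j = 0
      · have : A.det = 0 := Matrix.det_eq_zero_of_row_eq_zero i hz
        rw [this]; norm_num
      · -- row i has exactly one nonzero entry, value ±1
        have hcases : ∃ j₀, (A i j₀ = 1 ∨ A i j₀ = -1) ∧ ∀ j, j ≠ j₀ → A i j = 0 := by
          obtain ⟨hall, hc1, hc2⟩ := hA i
          have hone : (univ.filter (fun j => A i j = 1)).card = 1 ∨
              (univ.filter (fun j => A i j = -1)).card = 1 := by
            by_contra hcon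
            push_neg at hcon
            have e1 : (univ.filter (fun j => A i j = 1)).card = 0 := by omega
            have e2 : (univ.filter (fun j => A i j = -1)).card = 0 := by omega
            rw [Finset.card_eq_zero, Finset.filter_eq_empty_iff] at e1 e2
            apply hz
            intro j
            rcases hall j with h0 | h1 | h2
            · exact h0
            · exact absurd h1 (e1 (mem_univ j))
            · exact absurd h2 (e2 (mem_univ j))
          have key : ∀ (c : ℝ), c = 1 ∨ c = -1 → (univ.filter (fun j => A i j = c)).card = 1 →
              (univ.filter (fun j => A i j = -c)).card = 0 →
              ∃ j₀, (A i j₀ = 1 ∨ A i j₀ = -1) ∧ ∀ j, j ≠ j₀ → A i j = 0 := by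
            intro c hc hcard hzero
            rw [Finset.card_eq_one] at hcard
            obtain ⟨j₀, hj₀⟩ := hcard
            rw [Finset.card_eq_zero, Finset.filter_eq_empty_iff] at hzero
            have hj₀mem : A i j₀ = c := by
              have : j₀ ∈ univ.filter (fun j => A i j = c) := by rw [hj₀]; exact mem_singleton_self _
              exact (mem_filter.1 this).2
            refine ⟨j₀, by rcases hc with rfl | rfl; exacts [Or.inl hj₀mem, Or.inr hj₀mem], ?_⟩
            intro j hj
            rcases hall j with h0 | h1 | h2
            · exact h0
            · rcases hc with rfl | rfl
              · exfalso; apply hj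
                have : j ∈ univ.filter (fun j => A i j = 1) := mem_filter.2 ⟨mem_univ _, h1⟩
                rw [hj₀] at this; exact mem_singleton.1 this
              · exact absurd h1 (by simpa using hzero (mem_univ j))
            · rcases hc with rfl | rfl
              · exact absurd h2 (by simpa using hzero (mem_univ j))
              · exfalso; apply hj
                have : j ∈ univ.filter (fun j => A i j = -1) := mem_filter.2 ⟨mem_univ _, h2⟩
                rw [hj₀] at this; exact mem_singleton.1 this
          rcases hone with h1 | h2
          · -- positive count is one; need negative count 0
            by_cases hneg : (univ.filter (fun j => A i j = -1)).card = 1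
            · exact (hi h1 hneg).elim
            · have : (univ.filter (fun j => A i j = -1)).card = 0 := by omega
              exact key 1 (Or.inl rfl) h1 (by simpa using this)
          · by_cases hpos : (univ.filter (fun j => A i j = 1)).card = 1
            · exact (hi hpos h2).elim
            · have : (univ.filter (fun j => A i j = 1)).card = 0 := by omega
              exact key (-1) (Or.inr rfl) h2 (by simpa using this)
        obtain ⟨j₀, hval, hrest⟩ := hcases
        rw [Matrix.det_succ_row A i]
        rw [Finset.sum_eq_single j₀ (by
          intro j _ hj
          rw [hrest j hj]; ring) (by intro hmem; exact absurd (mem_univ j₀) hmem)]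
        have hminor : |(A.submatrix i.succAbove j₀.succAbove).det| ≤ 1 := by
          apply ih
          intro k
          obtain ⟨hall, hc1, hc2⟩ := hA (i.succAbove k)
          refine ⟨fun j => hall _, ?_, ?_⟩
          · calc (univ.filter (fun j => A (i.succAbove k) (j₀.succAbove j) = 1)).card
                ≤ (univ.filter (fun j => A (i.succAbove k) j = 1)).card := by
                  apply Finset.card_le_card_of_injOn (fun j => j₀.succAbove j)
                  · intro j hj
                    simp only [Finset.mem_coe, mem_filter, mem_univ, true_and] at hj ⊢
                    exact hj
                  · intro a _ b _ hab
                    exact Fin.succAbove_right_injective hab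
              _ ≤ 1 := hc1
          · calc (univ.filter (fun j => A (i.succAbove k) (j₀.succAbove j) = -1)).card
                ≤ (univ.filter (fun j => A (i.succAbove k) j = -1)).card := by
                  apply Finset.card_le_card_of_injOn (fun j => j₀.succAbove j)
                  · intro j hj
                    simp only [Finset.mem_coe, mem_filter, mem_univ, true_and] at hj ⊢
                    exact hj
                  · intro a _ b _ hab
                    exact Fin.succAbove_right_injective hab
              _ ≤ 1 := hc2
        rw [abs_mul, abs_mul]
        have h1 : |(-1 : ℝ) ^ ((i : ℕ) + (j₀ : ℕ))| = 1 := by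
          rw [abs_pow]; norm_num
        have h2 : |A i j₀| = 1 := by rcases hval with h | h <;> rw [h] <;> norm_num
        rw [h1, h2]
        simpa using hminor

lemma schinzel_aux (n : ℕ) (S : Finset (Fin n)) :
    ∀ (N : Matrix (Fin n) (Fin n) ℝ), (∀ i ∉ S, goodRow (N i)) →
    |N.det| ≤ ∏ i ∈ S, max (∑ j, max 0 (N i j)) (∑ j, max 0 (-(N i j))) := by
  induction S using Finset.induction_on with
  | empty =>
    intro N hN
    simpa using tu_det n N (fun i => hN i (Finset.notMem_empty i))
  | @insert a S' ha ih =>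
    intro N hN
    rw [Finset.prod_insert ha]
    set p : Fin n → ℝ := fun j => max 0 (N a j) with hpdef
    set q : Fin n → ℝ := fun j => max 0 (-(N a j)) with hqdef
    set P := ∑ j, p j with hPdef
    set Q := ∑ j, q j with hQdef
    set M := max P Q with hMdef
    have hp : ∀ j, 0 ≤ p j := fun j => le_max_left _ _
    have hq : ∀ j, 0 ≤ q j := fun j => le_max_left _ _
    have hP0 : 0 ≤ P := Finset.sum_nonneg fun j _ => hp j
    have hQ0 : 0 ≤ Q := Finset.sum_nonneg fun j _ => hq j
    have hPM : P ≤ M := le_max_left _ _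
    have hQM : Q ≤ M := le_max_right _ _
    have hM0 : 0 ≤ M := le_trans hP0 hPM
    set B := ∏ i ∈ S', max (∑ j, max 0 (N i j)) (∑ j, max 0 (-(N i j))) with hBdef
    have hB0 : 0 ≤ B :=
      Finset.prod_nonneg fun i _ => le_trans (Finset.sum_nonneg fun j _ => le_max_left _ _)
        (le_max_left _ _)
    rcases eq_or_lt_of_le hM0 with hMeq | hMpos
    · -- M = 0 : the row a is zero
      have hrow : ∀ j, N a j = 0 := by
        intro j
        have hPz : P = 0 := le_antisymm (hMeq ▸ hPM) hP0
        have hQz : Q = 0 := le_antisymm (hMeq ▸ hQM) hQ0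
        have hpz : p j = 0 :=
          le_antisymm (hPz ▸ Finset.single_le_sum (fun j _ => hp j) (Finset.mem_univ j)) (hp j)
        have hqz : q j = 0 :=
          le_antisymm (hQz ▸ Finset.single_le_sum (fun j _ => hq j) (Finset.mem_univ j)) (hq j)
        have h1 : N a j ≤ 0 := by
          by_contra hc; push_neg at hc
          rw [hpdef] at hpz; simp only at hpz
          rw [max_eq_right hc.le] at hpz; exact hc.ne' hpz
        have h2 : 0 ≤ N a j := by
          by_contra hc; push_neg at hc
          rw [hqdef] at hqz; simp only at hqz
          rw [max_eq_right (by linarith : (0:ℝ) ≤ -(N a j))] at hqz; linarith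
        linarith
      rw [Matrix.det_eq_zero_of_row_eq_zero a hrow]
      rw [abs_zero, ← hMeq, zero_mul]
    · -- M > 0
      have hMne : M ≠ 0 := ne_of_gt hMpos
      have hupd : ∀ v : Fin n → ℝ, goodRow v → |(N.updateRow a v).det| ≤ B := by
        intro v hv
        have hrows : ∀ i ∉ S', goodRow ((N.updateRow a v) i) := by
          intro i hi
          by_cases hia : i = a
          · subst hia; rw [Matrix.updateRow_self]; exact hv
          · rw [Matrix.updateRow_ne hia]
            exact hN i (by simp [Finset.mem_insert, hia, hi])
        calc |(N.updateRow a v).det|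
            ≤ ∏ i ∈ S', max (∑ j, max 0 ((N.updateRow a v) i j))
              (∑ j, max 0 (-((N.updateRow a v) i j))) := ih (N.updateRow a v) hrows
          _ = B := by
            apply Finset.prod_congr rfl
            intro i hi
            have hia : i ≠ a := fun h => ha (h ▸ hi)
            rw [Matrix.updateRow_ne hia]
      -- the linear map v ↦ det (N.updateRow a v)
      set L : (Fin n → ℝ) →ₗ[ℝ] ℝ :=
        { toFun := fun v => (N.updateRow a v).det
          map_add' := fun x y => Matrix.det_updateRow_add N a x y
          map_smul' := fun c x => by
            simp [Matrix.det_updateRow_smul] } with hLdef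
      have hLbound : ∀ v : Fin n → ℝ, goodRow v → |L v| ≤ B := fun v hv => hupd v hv
      set vp : Fin n → (Fin n → ℝ) := fun j => fun x => if x = j then (1:ℝ) else 0 with hvp
      -- decomposition of the row N a
      have hdecomp : N a =
          (∑ jk : Fin n × Fin n, ((p jk.1 * q jk.2 / M) • (vp jk.1 - vp jk.2)))
          + (∑ j, (p j * (M - Q) / M) • vp j)
          + (∑ k, (q k * (M - P) / M) • (-(vp k))) := by
        funext x
        have hpq : p x - q x = N a x := by
          rw [hpdef, hqdef]
          simp only
          rcases le_total 0 (N a x) with h | h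
          · rw [max_eq_right h, max_eq_left (by linarith)]; ring
          · rw [max_eq_left h, max_eq_right (by linarith)]; ring
        have key : ∀ (c : Fin n → ℝ), ∑ j, c j * (if x = j then (1:ℝ) else 0) = c x := by
          intro c
          simp [mul_ite, mul_one, mul_zero]
        simp only [Pi.add_apply, Finset.sum_apply, Pi.smul_apply, smul_eq_mul, Pi.sub_apply,
          Pi.neg_apply, hvp]
        have h1 : ∑ jk : Fin n × Fin n, (p jk.1 * q jk.2 / M) *
            ((if x = jk.1 then (1:ℝ) else 0) - (if x = jk.2 then 1 else 0))
            = p x * Q / M - P * q x / M := by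
          rw [Fintype.sum_prod_type]
          have e1 : ∀ j : Fin n, ∑ k : Fin n, (p j * q k / M) *
              ((if x = j then (1:ℝ) else 0) - (if x = k then 1 else 0))
              = (p j * Q / M) * (if x = j then (1:ℝ) else 0) - p j * q x / M := by
            intro j
            have : ∀ k : Fin n, (p j * q k / M) *
                ((if x = j then (1:ℝ) else 0) - (if x = k then 1 else 0))
                = (p j / M * (if x = j then (1:ℝ) else 0)) * q k
                  - (p j / M * q k) * (if x = k then (1:ℝ) else 0) := by
              intro k; ring
            rw [Finset.sum_congr rfl (fun k _ => this k)]
            rw [Finset.sum_sub_distrib, ← Finset.mul_sum, key (fun k => p j / M * q k)]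
            rw [← hQdef]; ring
          rw [Finset.sum_congr rfl (fun j _ => e1 j), Finset.sum_sub_distrib]
          rw [key (fun j => p j * Q / M)]
          have : ∑ j, p j * q x / M = P * q x / M := by
            rw [Finset.sum_congr rfl (fun j _ => by ring :
              ∀ j ∈ Finset.univ, p j * q x / M = p j * (q x / M)), ← Finset.sum_mul, ← hPdef]
            ring
          rw [this]
        have h2 : ∑ j, (p j * (M - Q) / M) * (if x = j then (1:ℝ) else 0)
            = p x * (M - Q) / M := key (fun j => p j * (M - Q) / M)
        have h3 : ∑ k, (q k * (M - P) / M) * (-(if x = k then (1:ℝ) else 0))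
            = -(q x * (M - P) / M) := by
          rw [Finset.sum_congr rfl (fun k _ => by ring :
            ∀ k ∈ Finset.univ, (q k * (M - P) / M) * (-(if x = k then (1:ℝ) else 0))
              = -((q k * (M - P) / M) * (if x = k then (1:ℝ) else 0)))]
          rw [Finset.sum_neg_distrib, key (fun k => q k * (M - P) / M)]
        rw [h1, h2, h3, ← hpq]
        field_simp
        ring
      -- now apply L and bound
      have hdet : N.det = L (N a) := by
        show N.det = (N.updateRow a (N a)).det
        rw [Matrix.updateRow_eq_self]
      rw [hdet, hdecomp, map_add, map_add, map_sum, map_sum, map_sum]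
      simp only [LinearMap.map_smul, smul_eq_mul]
      have bound1 : |∑ jk : Fin n × Fin n, (p jk.1 * q jk.2 / M) * L (vp jk.1 - vp jk.2)|
          ≤ (∑ jk : Fin n × Fin n, p jk.1 * q jk.2 / M) * B := by
        calc |∑ jk : Fin n × Fin n, (p jk.1 * q jk.2 / M) * L (vp jk.1 - vp jk.2)|
            ≤ ∑ jk : Fin n × Fin n, |(p jk.1 * q jk.2 / M) * L (vp jk.1 - vp jk.2)| :=
              Finset.abs_sum_le_sum_abs _ _
          _ ≤ ∑ jk : Fin n × Fin n, (p jk.1 * q jk.2 / M) * B := by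
              apply Finset.sum_le_sum
              intro jk _
              rw [abs_mul, abs_of_nonneg (div_nonneg (mul_nonneg (hp _) (hq _)) hM0)]
              exact mul_le_mul_of_nonneg_left
                (hLbound _ (goodRow_pair jk.1 jk.2))
                (div_nonneg (mul_nonneg (hp _) (hq _)) hM0)
          _ = (∑ jk : Fin n × Fin n, p jk.1 * q jk.2 / M) * B := by
              rw [Finset.sum_mul]
      have bound2 : |∑ j, (p j * (M - Q) / M) * L (vp j)|
          ≤ (∑ j, p j * (M - Q) / M) * B := by
        calc |∑ j, (p j * (M - Q) / M) * L (vp j)|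
            ≤ ∑ j, |(p j * (M - Q) / M) * L (vp j)| := Finset.abs_sum_le_sum_abs _ _
          _ ≤ ∑ j, (p j * (M - Q) / M) * B := by
              apply Finset.sum_le_sum
              intro j _
              rw [abs_mul, abs_of_nonneg (div_nonneg (mul_nonneg (hp _) (by linarith)) hM0)]
              exact mul_le_mul_of_nonneg_left (hLbound _ (goodRow_pos j))
                (div_nonneg (mul_nonneg (hp _) (by linarith)) hM0)
          _ = _ := by rw [Finset.sum_mul]
      have bound3 : |∑ k, (q k * (M - P) / M) * L (-(vp k))|
          ≤ (∑ k, q k * (M - P) / M) * B := by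
        calc |∑ k, (q k * (M - P) / M) * L (-(vp k))|
            ≤ ∑ k, |(q k * (M - P) / M) * L (-(vp k))| := Finset.abs_sum_le_sum_abs _ _
          _ ≤ ∑ k, (q k * (M - P) / M) * B := by
              apply Finset.sum_le_sum
              intro k _
              rw [abs_mul, abs_of_nonneg (div_nonneg (mul_nonneg (hq _) (by linarith)) hM0)]
              exact mul_le_mul_of_nonneg_left (hLbound _ (goodRow_neg k))
                (div_nonneg (mul_nonneg (hq _) (by linarith)) hM0)
          _ = _ := by rw [Finset.sum_mul]
      have s1 : ∑ jk : Fin n × Fin n, p jk.1 * q jk.2 / M = P * Q / M := by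
        rw [Fintype.sum_prod_type]
        have e1 : ∀ j : Fin n, ∑ k, p j * q k / M = p j * (Q / M) := by
          intro j
          rw [Finset.sum_congr rfl (fun k _ => by ring :
            ∀ k ∈ Finset.univ, p j * q k / M = (p j / M) * q k), ← Finset.mul_sum, ← hQdef]
          ring
        rw [Finset.sum_congr rfl (fun j _ => e1 j), ← Finset.sum_mul, ← hPdef]
        ring
      have s2 : ∑ j, p j * (M - Q) / M = P * (M - Q) / M := by
        rw [Finset.sum_congr rfl (fun j _ => by ring :
          ∀ j ∈ Finset.univ, p j * (M - Q) / M = p j * ((M - Q) / M)), ← Finset.sum_mul, ← hPdef]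
        ring
      have s3 : ∑ k, q k * (M - P) / M = Q * (M - P) / M := by
        rw [Finset.sum_congr rfl (fun k _ => by ring :
          ∀ k ∈ Finset.univ, q k * (M - P) / M = q k * ((M - P) / M)), ← Finset.sum_mul, ← hQdef]
        ring
      have hcoef : P * Q / M + P * (M - Q) / M + Q * (M - P) / M ≤ M := by
        rw [← add_div, ← add_div, div_le_iff₀ hMpos]
        nlinarith [mul_nonneg (sub_nonneg.2 hPM) (sub_nonneg.2 hQM)]
      calc |(∑ jk : Fin n × Fin n, (p jk.1 * q jk.2 / M) * L (vp jk.1 - vp jk.2))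
            + (∑ j, (p j * (M - Q) / M) * L (vp j))
            + (∑ k, (q k * (M - P) / M) * L (-(vp k)))|
          ≤ |(∑ jk : Fin n × Fin n, (p jk.1 * q jk.2 / M) * L (vp jk.1 - vp jk.2))
            + (∑ j, (p j * (M - Q) / M) * L (vp j))|
            + |∑ k, (q k * (M - P) / M) * L (-(vp k))| := abs_add_le _ _
        _ ≤ |∑ jk : Fin n × Fin n, (p jk.1 * q jk.2 / M) * L (vp jk.1 - vp jk.2)|
            + |∑ j, (p j * (M - Q) / M) * L (vp j)|
            + |∑ k, (q k * (M - P) / M) * L (-(vp k))| := by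
            have := abs_add_le (∑ jk : Fin n × Fin n, (p jk.1 * q jk.2 / M) * L (vp jk.1 - vp jk.2))
              (∑ j, (p j * (M - Q) / M) * L (vp j))
            linarith
        _ ≤ (∑ jk : Fin n × Fin n, p jk.1 * q jk.2 / M) * B
            + (∑ j, p j * (M - Q) / M) * B
            + (∑ k, q k * (M - P) / M) * B := by linarith
        _ = (P * Q / M + P * (M - Q) / M + Q * (M - P) / M) * B := by
            rw [s1, s2, s3]; ring
        _ ≤ M * B := mul_le_mul_of_nonneg_right hcoef hB0

theorem schinzel_det_bound (n : ℕ) (N : Matrix (Fin n) (Fin n) ℝ) :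
    |N.det| ≤ ∏ i : Fin n,
      max (∑ j : Fin n, max 0 (N i j)) (∑ j : Fin n, max 0 (-(N i j))) := by
  exact schinzel_aux n Finset.univ N (fun i hi => absurd (Finset.mem_univ i) hi)
end

section
/- Let k be a prime and f(x) = Σ_{i=0}^{k-1} a_i x^i ∈ ℤ[x]. Set A^+ = Σ_i max(0, a_i), A^- = Σ_i max(0, -a_i), and A = max(A^+, A^-). If Σ_{i=0}^{k-1} a_i = 0, then the absolute norm satisfies |N(f(ζ_k))| ≤ k · A^{k-1}. -/
open Finset
namespace NormBoundAux

private lemma shrink_opt {n : ℕ} (x : Fin (n + 1)) (p : Option (Fin (n + 1))) :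
    ∃ p' : Option (Fin n), ∀ c' : Fin n,
      (if p' = some c' then (1 : ℂ) else 0) = if p = some (x.succAbove c') then 1 else 0 := by
  match p with
  | none => exact ⟨none, fun c' => by simp⟩
  | some z =>
    by_cases hz : z = x
    · refine ⟨none, fun c' => ?_⟩
      have : z ≠ x.succAbove c' := by rw [hz]; exact (Fin.succAbove_ne x c').symm
      simp [this]
    · obtain ⟨y, hy⟩ := Fin.exists_succAbove_eq hz
      refine ⟨some y, fun c' => ?_⟩
      by_cases hc : y = c'
      · simp [hc, ← hy]
      · have : z ≠ x.succAbove c' := by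
          rw [← hy]; exact fun h => hc (Fin.succAbove_right_injective h)
        simp [hc, this]

private lemma tu_det : ∀ (n : ℕ) (N : Matrix (Fin n) (Fin n) ℂ),
    (∀ r, ∃ p q : Option (Fin n), ∀ c, N r c =
      (if p = some c then (1 : ℂ) else 0) - (if q = some c then 1 else 0)) →
    ‖N.det‖ ≤ 1 := by
  intro n
  induction n with
  | zero => intro N _; simp [Matrix.det_fin_zero]
  | succ n ih =>
    intro N hN
    choose p q hpq using hN
    by_cases h1 : ∃ r, p r = q r
    · obtain ⟨r, hr⟩ := h1
      have : N.det = 0 :=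
        Matrix.det_eq_zero_of_row_eq_zero r (fun c => by rw [hpq r c, hr]; ring)
      simp [this]
    by_cases h2 : ∃ r, p r = none ∨ q r = none
    · obtain ⟨r, hr2⟩ := h2
      push_neg at h1
      obtain ⟨c₀, habs, hzero⟩ :
          ∃ c₀, ‖N r c₀‖ = 1 ∧ ∀ c, c ≠ c₀ → N r c = 0 := by
        rcases hr2 with hp | hq
        · cases hq' : q r with
          | none => exact absurd (hp.trans hq'.symm) (h1 r)
          | some y =>
            refine ⟨y, by simp [hpq, hp, hq'], fun c hc => ?_⟩
            have : y ≠ c := fun h => hc h.symm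
            simp [hpq, hp, hq', this]
        · cases hp' : p r with
          | none => exact absurd (hp'.trans hq.symm) (h1 r)
          | some y =>
            refine ⟨y, by simp [hpq, hq, hp'], fun c hc => ?_⟩
            have : y ≠ c := fun h => hc h.symm
            simp [hpq, hq, hp', this]
      rw [Matrix.det_succ_row N r, Finset.sum_eq_single c₀
        (fun c _ hc => by rw [hzero c hc]; ring) (fun h => absurd (Finset.mem_univ c₀) h)]
      rw [norm_mul, norm_mul]
      have h1le : ‖(-1 : ℂ) ^ ((r : ℕ) + (c₀ : ℕ))‖ = 1 := by
        rw [norm_pow]; simp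
      rw [h1le, one_mul, habs, one_mul]
      apply ih
      intro r'
      obtain ⟨p', hp'⟩ := shrink_opt c₀ (p (r.succAbove r'))
      obtain ⟨q', hq'⟩ := shrink_opt c₀ (q (r.succAbove r'))
      exact ⟨p', q', fun c' => by
        rw [Matrix.submatrix_apply, hpq, ← hp', ← hq']⟩
    · push_neg at h1 h2
      have : N.det = 0 := by
        rw [← Matrix.exists_mulVec_eq_zero_iff]
        refine ⟨fun _ => 1, fun h0 => one_ne_zero (congrFun h0 0), ?_⟩
        funext r
        obtain ⟨xr, hx⟩ := Option.ne_none_iff_exists'.mp (h2 r).1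
        obtain ⟨yr, hy⟩ := Option.ne_none_iff_exists'.mp (h2 r).2
        have hrow : ∀ c, N r c = (if xr = c then (1:ℂ) else 0) - (if yr = c then 1 else 0) := by
          intro c; rw [hpq, hx, hy]; simp
        have hsum : (∑ c, N r c) = 0 := by
          rw [Finset.sum_congr rfl (fun c _ => hrow c), Finset.sum_sub_distrib]
          simp
        simpa [Matrix.mulVec, dotProduct] using hsum
      simp [this]

private lemma count_fin_sum {α : Type*} [DecidableEq α] (l : List α) (x : α) :
    (∑ t : Fin l.length, if l.get t = x then (1 : ℕ) else 0) = l.count x := by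
  induction l with
  | nil => simp
  | cons b l ih =>
    have hstep : (∑ t : Fin (b :: l).length, if (b :: l).get t = x then (1 : ℕ) else 0)
        = (if b = x then 1 else 0) + ∑ t : Fin l.length, if l.get t = x then (1 : ℕ) else 0 :=
      Fin.sum_univ_succ _
    rw [hstep, ih, List.count_cons]
    by_cases hb : b = x
    · subst hb
      simp only [if_pos rfl, beq_self_eq_true, if_true]
      omega
    · have hxb : (b == x) = false := beq_eq_false_iff_ne.mpr hb
      simp only [if_neg hb, hxb, Bool.false_eq_true, if_false]
      omega

private lemma len_bind_replicate {α : Type*} (n : ℕ) (g : ℕ → ℕ) (c : ℕ → α) :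
    ((List.range n).flatMap fun i => List.replicate (g i) (c i)).length
      = ∑ i ∈ Finset.range n, g i := by
  induction n with
  | zero => simp
  | succ n ih =>
    rw [List.range_succ, Finset.sum_range_succ, ← ih]
    simp

private lemma count_bind_replicate {α : Type*} [DecidableEq α] (n : ℕ) (g : ℕ → ℕ) (c : ℕ → α)
    (x : α) :
    ((List.range n).flatMap fun i => List.replicate (g i) (c i)).count x
      = ∑ i ∈ Finset.range n, if c i = x then g i else 0 := by
  induction n with
  | zero => simp
  | succ n ih =>
    rw [List.range_succ, Finset.sum_range_succ, ← ih, List.flatMap_append, List.count_append]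
    have : ([n].flatMap fun i => List.replicate (g i) (c i)).count x
        = if c n = x then g n else 0 := by
      by_cases h : c n = x
      · simp [List.count_replicate, h]
      · have : ¬ x = c n := fun hh => h hh.symm
        simp [List.count_replicate, h, this]
    rw [this]

noncomputable def ee (k : ℕ) (ζ : ℂ) (m : ZMod k) : ℂ := ζ ^ m.val

variable {k : ℕ} {ζ : ℂ}

lemma epow [NeZero k] (hζ : IsPrimitiveRoot ζ k) (n : ℕ) : ζ ^ n = ee k ζ (n : ZMod k) := by
  rw [ee, ZMod.val_natCast]
  conv_lhs => rw [← Nat.div_add_mod n k, pow_add, pow_mul, hζ.pow_eq_one, one_pow, one_mul]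

lemma eadd [NeZero k] (hζ : IsPrimitiveRoot ζ k) (m n : ZMod k) :
    ee k ζ (m + n) = ee k ζ m * ee k ζ n := by
  rw [ee, ee, ee, ← pow_add, epow hζ (m.val + n.val)]
  congr 1
  push_cast [ZMod.natCast_zmod_val]
  ring

lemma emul [NeZero k] (hζ : IsPrimitiveRoot ζ k) (m : ZMod k) (i : ℕ) :
    ee k ζ m ^ i = ee k ζ (m * i) := by
  induction i with
  | zero => simp [ee]
  | succ i ih =>
    rw [pow_succ, ih, ← eadd hζ]
    congr 1
    push_cast
    ring

lemma ezero : ee k ζ 0 = 1 := by simp [ee]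

lemma esum [NeZero k] (hk : k.Prime) (hζ : IsPrimitiveRoot ζ k) (m : ZMod k) :
    (∑ c : ZMod k, ee k ζ (m * c)) = if m = 0 then (k : ℂ) else 0 := by
  by_cases hm : m = 0
  · simp [hm, ezero, ZMod.card]
  · rw [if_neg hm]
    have hcop : (m.val).Coprime k := by
      refine Nat.Coprime.symm ((Nat.Prime.coprime_iff_not_dvd hk).mpr ?_)
      intro hdvd
      exact hm ((ZMod.val_eq_zero m).mp (Nat.eq_zero_of_dvd_of_lt hdvd (ZMod.val_lt m)))
    have hterm : ∀ c : ZMod k, ee k ζ (m * c) = (ζ ^ m.val) ^ c.val := by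
      intro c
      rw [show (ζ ^ m.val) = ee k ζ m from rfl, emul hζ, ZMod.natCast_zmod_val]
    rw [Finset.sum_congr rfl fun c _ => hterm c]
    have hre : (∑ c : ZMod k, (ζ ^ m.val) ^ c.val) = ∑ j ∈ Finset.range k, (ζ ^ m.val) ^ j := by
      refine Finset.sum_nbij' (fun c => c.val) (fun j => (j : ZMod k)) ?_ ?_ ?_ ?_ ?_
      · intro c _; exact Finset.mem_range.mpr (ZMod.val_lt c)
      · intro j _; exact Finset.mem_univ _
      · intro c _; exact ZMod.natCast_zmod_val c
      · intro j hj; exact ZMod.val_natCast_of_lt (Finset.mem_range.mp hj)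
      · intro c _; rfl
    rw [hre]
    exact (hζ.pow_of_coprime m.val hcop).geom_sum_eq_zero hk.one_lt

noncomputable def Cm (k : ℕ) (a : ℕ → ℤ) : Matrix (ZMod k) (ZMod k) ℂ :=
  Matrix.of fun i j => (a ((i - j).val) : ℂ)

variable {k : ℕ}

lemma key_bound [NeZero k] (a : ℕ → ℤ) (A : ℕ)
    (hP : (∑ i ∈ Finset.range k, (a i).toNat) = A)
    (hQ : (∑ i ∈ Finset.range k, (-(a i)).toNat) = A)
    (r c : ZMod k) :
    ‖((Cm k a).updateRow r (Pi.single c 1)).det‖ ≤ (A : ℝ) ^ (k - 1) := by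
  classical
  set lp : List (ZMod k) :=
    (List.range k).flatMap fun i => List.replicate (a i).toNat ((i : ZMod k)) with hlp_def
  set lq : List (ZMod k) :=
    (List.range k).flatMap fun i => List.replicate (-(a i)).toNat ((i : ZMod k)) with hlq_def
  have hlp : lp.length = A := by rw [hlp_def, len_bind_replicate]; exact hP
  have hlq : lq.length = A := by rw [hlq_def, len_bind_replicate]; exact hQ
  set Pv : Fin A → ZMod k := fun t => lp.get (Fin.cast hlp.symm t) with hPv
  set Qv : Fin A → ZMod k := fun t => lq.get (Fin.cast hlq.symm t) with hQv
  have hcnt : ∀ (l : List (ZMod k)) (hl : l.length = A) (x : ZMod k),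
      (∑ t : Fin A, if l.get (Fin.cast hl.symm t) = x then (1:ℕ) else 0) = l.count x := by
    intro l hl x
    rw [← count_fin_sum l x]
    exact Fintype.sum_equiv (finCongr hl.symm) _ _ (fun t => rfl)
  have hcountbind : ∀ (g : ℕ → ℤ) (x : ZMod k),
      (((List.range k).flatMap fun i => List.replicate (g i).toNat ((i : ZMod k))).count x)
        = (g x.val).toNat := by
    intro g x
    rw [count_bind_replicate]
    rw [Finset.sum_eq_single x.val]
    · rw [if_pos (ZMod.natCast_zmod_val x)]
    · intro i hi hix
      rw [if_neg]
      intro hcast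
      have hival : ((i : ZMod k)).val = i := ZMod.val_natCast_of_lt (Finset.mem_range.mp hi)
      exact hix (by rw [← hival, hcast])
    · intro hx; exact absurd (Finset.mem_range.mpr (ZMod.val_lt x)) hx
  have countP : ∀ x : ZMod k, (∑ t : Fin A, if Pv t = x then (1:ℕ) else 0) = (a x.val).toNat :=
    fun x => by rw [hPv]; rw [hcnt lp hlp x]; exact hcountbind a x
  have countQ : ∀ x : ZMod k, (∑ t : Fin A, if Qv t = x then (1:ℕ) else 0) = (-(a x.val)).toNat :=
    fun x => by rw [hQv]; rw [hcnt lq hlq x]; exact hcountbind (fun i => -(a i)) x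
  have rowdec : ∀ r' c' : ZMod k, Cm k a r' c'
      = ∑ t : Fin A, ((if Pv t = r' - c' then (1:ℂ) else 0) - (if Qv t = r' - c' then 1 else 0)) := by
    intro r' c'
    rw [Finset.sum_sub_distrib]
    have cast1 : ∀ (V : Fin A → ZMod k), (∑ t : Fin A, if V t = r' - c' then (1:ℂ) else 0)
        = ((∑ t : Fin A, if V t = r' - c' then (1:ℕ) else 0 : ℕ) : ℂ) := by
      intro V
      rw [Nat.cast_sum]
      refine Finset.sum_congr rfl fun t _ => ?_
      by_cases h : V t = r' - c' <;> simp [h]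
    rw [cast1 Pv, cast1 Qv, countP, countQ]
    show ((a ((r' - c').val) : ℤ) : ℂ) = _
    have hz : ((a ((r' - c').val)).toNat : ℤ) - ((-(a ((r' - c').val))).toNat : ℤ)
        = a ((r' - c').val) := by omega
    rw [show ((a ((r' - c').val) : ℤ) : ℂ)
        = ((((a ((r' - c').val)).toNat : ℤ) - ((-(a ((r' - c').val))).toNat : ℤ) : ℤ) : ℂ) by
      rw [hz]]
    push_cast
    ring
  -- decomposition data
  set gg : ZMod k → Option (Fin A) → (ZMod k → ℂ) := fun r' o =>
    o.elim (Pi.single c 1)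
      (fun t => fun c' => (if Pv t = r' - c' then (1:ℂ) else 0) - (if Qv t = r' - c' then 1 else 0))
    with hgg
  set As : ZMod k → Finset (Option (Fin A)) :=
    fun r' => if r' = r then {none} else Finset.univ.erase none with hAs
  have hggn : ∀ r', gg r' none = Pi.single c 1 := fun _ => rfl
  have hggs : ∀ r' t c', gg r' (some t) c'
      = (if Pv t = r' - c' then (1:ℂ) else 0) - (if Qv t = r' - c' then 1 else 0) :=
    fun _ _ _ => rfl
  have hAsr : As r = {none} := by rw [hAs]; simp
  have hAsne : ∀ r', r' ≠ r → As r' = Finset.univ.erase none := by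
    intro r' hr'; rw [hAs]; simp [hr']
  have hMrow : ∀ r' : ZMod k, ((Cm k a).updateRow r (Pi.single c 1)) r' = ∑ o ∈ As r', gg r' o := by
    intro r'
    by_cases hr : r' = r
    · subst hr
      rw [Matrix.updateRow_self, hAsr, Finset.sum_singleton, hggn]
    · rw [Matrix.updateRow_ne hr, hAsne r' hr]
      have himg : (Finset.univ.erase (none : Option (Fin A)))
          = Finset.univ.image (fun t : Fin A => some t) := by
        ext o
        cases o <;> simp
      rw [himg, Finset.sum_image (fun x _ y _ h => Option.some_injective _ h)]
      funext c'
      rw [Finset.sum_apply]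
      exact rowdec r' c'
  have hdet : ((Cm k a).updateRow r (Pi.single c 1)).det
      = ∑ τ ∈ Fintype.piFinset As, Matrix.det (Matrix.of fun r' c' => gg r' (τ r') c') := by
    have hM : ((Cm k a).updateRow r (Pi.single c 1))
        = Matrix.of (fun r' => ∑ o ∈ As r', gg r' o) := by
      funext r' c'
      exact congrFun (hMrow r') c'
    rw [hM]
    exact (Matrix.detRowAlternating (R := ℂ) (n := ZMod k)).toMultilinearMap.map_sum_finset gg As
  -- per-term bound
  have hcardZ : Fintype.card (ZMod k) = k := ZMod.card k
  let eqv : ZMod k ≃ Fin k := Fintype.equivFinOfCardEq hcardZ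
  have hif : ∀ (z : ZMod k) (c0 : Fin k),
      (if some (eqv z) = some c0 then (1:ℂ) else 0) = if z = eqv.symm c0 then 1 else 0 := by
    intro z c0
    simp only [Option.some.injEq]
    by_cases h : z = eqv.symm c0
    · rw [if_pos (by rw [h, Equiv.apply_symm_apply]), if_pos h]
    · rw [if_neg (fun hh => h (by rw [← hh, Equiv.symm_apply_apply])), if_neg h]
  have hτb : ∀ τ ∈ Fintype.piFinset As,
      ‖Matrix.det (Matrix.of fun r' c' => gg r' (τ r') c')‖ ≤ 1 := by
    intro τ hτmem
    have hmem : ∀ r', τ r' ∈ As r' := Fintype.mem_piFinset.mp hτmem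
    rw [← Matrix.det_reindex_self eqv (Matrix.of fun r' c' => gg r' (τ r') c')]
    apply tu_det
    intro r0
    have hentry : ∀ c0, (Matrix.reindex eqv eqv (Matrix.of fun r' c' => gg r' (τ r') c')) r0 c0
        = gg (eqv.symm r0) (τ (eqv.symm r0)) (eqv.symm c0) := by
      intro c0; rfl
    by_cases hr : eqv.symm r0 = r
    · have hnone : τ (eqv.symm r0) = none := by
        have := hmem (eqv.symm r0)
        rw [hAs] at this
        simp only [if_pos hr] at this
        exact Finset.mem_singleton.mp this
      refine ⟨some (eqv c), none, fun c0 => ?_⟩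
      rw [hentry c0, hnone, hggn]
      rw [hif c c0, Pi.single_apply,
        if_neg (fun h => Option.some_ne_none c0 (h : (none : Option (Fin k)) = some c0).symm : ¬ ((none : Option (Fin k)) = some c0)), sub_zero]
      by_cases h : eqv.symm c0 = c
      · rw [if_pos h, if_pos h.symm]
      · rw [if_neg h, if_neg (fun hh => h hh.symm)]
    · have hsome : ∃ t, τ (eqv.symm r0) = some t := by
        have := hmem (eqv.symm r0)
        rw [hAs] at this
        simp only [if_neg hr] at this
        have hne := (Finset.mem_erase.mp this).1
        exact Option.ne_none_iff_exists'.mp hne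
      obtain ⟨t, ht⟩ := hsome
      refine ⟨some (eqv (eqv.symm r0 - Pv t)), some (eqv (eqv.symm r0 - Qv t)), fun c0 => ?_⟩
      rw [hentry c0, ht, hggs]
      rw [hif, hif]
      have hcond : ∀ V : ZMod k, (V = eqv.symm r0 - eqv.symm c0) ↔ (eqv.symm r0 - V = eqv.symm c0) := by
        intro V
        constructor
        · intro h; rw [h, sub_sub_cancel]
        · intro h; rw [← h, sub_sub_cancel]
      have e1 : (if Pv t = eqv.symm r0 - eqv.symm c0 then (1:ℂ) else 0)
          = if eqv.symm r0 - Pv t = eqv.symm c0 then 1 else 0 := by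
        by_cases h : Pv t = eqv.symm r0 - eqv.symm c0
        · rw [if_pos h, if_pos ((hcond _).mp h)]
        · rw [if_neg h, if_neg (fun hh => h ((hcond _).mpr hh))]
      have e2 : (if Qv t = eqv.symm r0 - eqv.symm c0 then (1:ℂ) else 0)
          = if eqv.symm r0 - Qv t = eqv.symm c0 then 1 else 0 := by
        by_cases h : Qv t = eqv.symm r0 - eqv.symm c0
        · rw [if_pos h, if_pos ((hcond _).mp h)]
        · rw [if_neg h, if_neg (fun hh => h ((hcond _).mpr hh))]
      rw [e1, e2]
  -- cardinality
  have hcard : (Fintype.piFinset As).card = A ^ (k - 1) := by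
    rw [Fintype.card_piFinset]
    rw [← Finset.mul_prod_erase Finset.univ _ (Finset.mem_univ r)]
    have h1 : (As r).card = 1 := by rw [hAsr]; rfl
    have h2 : ∀ r' ∈ Finset.univ.erase r, (As r').card = A := by
      intro r' hr'
      rw [hAsne _ (Finset.mem_erase.mp hr').1]
      rw [Finset.card_erase_of_mem (Finset.mem_univ _), Finset.card_univ, Fintype.card_option,
        Fintype.card_fin]
      omega
    rw [h1, one_mul, Finset.prod_congr rfl h2, Finset.prod_const,
      Finset.card_erase_of_mem (Finset.mem_univ _), Finset.card_univ, hcardZ]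
  -- assemble
  rw [hdet]
  refine le_trans (norm_sum_le _ _) ?_
  have := Finset.sum_le_card_nsmul (Fintype.piFinset As)
    (fun τ => ‖Matrix.det (Matrix.of fun r' c' => gg r' (τ r') c')‖) 1 hτb
  rw [hcard] at this
  calc (∑ τ ∈ Fintype.piFinset As,
        ‖Matrix.det (Matrix.of fun r' c' => gg r' (τ r') c')‖)
      ≤ (A ^ (k-1)) • (1:ℝ) := this
    _ = (A : ℝ) ^ (k - 1) := by rw [nsmul_eq_mul, mul_one]; push_cast; ring


noncomputable def Jm (k : ℕ) : Matrix (ZMod k) (ZMod k) ℂ := Matrix.of fun _ _ => 1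

noncomputable def Wm (k : ℕ) (ζ : ℂ) : Matrix (ZMod k) (ZMod k) ℂ :=
  Matrix.of fun i j => ee k ζ (i * j)

noncomputable def Fv (k : ℕ) (a : ℕ → ℤ) (ζ : ℂ) (x : ZMod k) : ℂ :=
  ∑ i ∈ Finset.range k, (a i : ℂ) * (ee k ζ x) ^ i

lemma detW_ne [NeZero k] (hk : k.Prime) (hζ : IsPrimitiveRoot ζ k) : (Wm k ζ).det ≠ 0 := by
  have hWW : Wm k ζ * Matrix.of (fun i j : ZMod k => ee k ζ (-(i * j))) = (k : ℂ) • 1 := by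
    ext i j
    rw [Matrix.mul_apply]
    have hterm : ∀ c : ZMod k, Wm k ζ i c * Matrix.of (fun i j : ZMod k => ee k ζ (-(i * j))) c j
        = ee k ζ ((i - j) * c) := by
      intro c
      rw [Wm, Matrix.of_apply, Matrix.of_apply, ← eadd hζ]
      congr 1
      ring
    rw [Finset.sum_congr rfl fun c _ => hterm c, esum hk hζ (i - j)]
    simp only [Matrix.smul_apply, Matrix.one_apply, sub_eq_zero, smul_eq_mul]
    by_cases hij : i = j <;> simp [hij]
  intro h0
  have := congrArg Matrix.det hWW
  rw [Matrix.det_mul, h0, zero_mul, Matrix.det_smul, Matrix.det_one, mul_one] at this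
  have hk0 : ((k : ℂ)) ^ Fintype.card (ZMod k) ≠ 0 := by
    apply pow_ne_zero
    exact_mod_cast Nat.cast_ne_zero.mpr hk.ne_zero
  exact hk0 this.symm

lemma CJW [NeZero k] (hk : k.Prime) (hζ : IsPrimitiveRoot ζ k) (a : ℕ → ℤ)
    (hs : ∑ i ∈ Finset.range k, a i = 0) :
    (Cm k a + Jm k) * Wm k ζ
      = Wm k ζ * Matrix.diagonal (fun h => if h = 0 then (k : ℂ) else Fv k a ζ (-h)) := by
  ext i h
  rw [Matrix.mul_apply, Matrix.mul_diagonal]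
  have hsplit : ∀ j : ZMod k, (Cm k a + Jm k) i j * Wm k ζ j h
      = (a ((i - j).val) : ℂ) * ee k ζ (j * h) + ee k ζ (j * h) := by
    intro j
    rw [Matrix.add_apply, Cm, Jm, Wm, Matrix.of_apply, Matrix.of_apply, Matrix.of_apply]
    ring
  rw [Finset.sum_congr rfl fun j _ => hsplit j, Finset.sum_add_distrib]
  have h2 : (∑ j : ZMod k, ee k ζ (j * h)) = if h = 0 then (k : ℂ) else 0 := by
    rw [Finset.sum_congr rfl fun j _ => by rw [mul_comm], esum hk hζ h]
  have h1 : (∑ j : ZMod k, (a ((i - j).val) : ℂ) * ee k ζ (j * h))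
      = ee k ζ (i * h) * Fv k a ζ (-h) := by
    have hre : (∑ j : ZMod k, (a ((i - j).val) : ℂ) * ee k ζ (j * h))
        = ∑ m : ZMod k, (a (m.val) : ℂ) * ee k ζ ((i - m) * h) := by
      refine Finset.sum_nbij' (fun j => i - j) (fun m => i - m) ?_ ?_ ?_ ?_ ?_
      · intro _ _; exact Finset.mem_univ _
      · intro _ _; exact Finset.mem_univ _
      · intro j _; exact sub_sub_cancel i j
      · intro m _; exact sub_sub_cancel i m
      · intro j _
        rw [sub_sub_cancel]
    rw [hre]
    have hterm : ∀ m : ZMod k, (a (m.val) : ℂ) * ee k ζ ((i - m) * h)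
        = ee k ζ (i * h) * ((a (m.val) : ℂ) * ee k ζ (-(m * h))) := by
      intro m
      rw [show (i - m) * h = i * h + -(m * h) by ring, eadd hζ]
      ring
    rw [Finset.sum_congr rfl fun m _ => hterm m, ← Finset.mul_sum]
    congr 1
    rw [Fv]
    refine Finset.sum_nbij' (fun m => m.val) (fun n => (n : ZMod k)) ?_ ?_ ?_ ?_ ?_
    · intro m _; exact Finset.mem_range.mpr (ZMod.val_lt m)
    · intro n _; exact Finset.mem_univ _
    · intro m _; exact ZMod.natCast_zmod_val m
    · intro n hn; exact ZMod.val_natCast_of_lt (Finset.mem_range.mp hn)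
    · intro m _
      congr 1
      rw [emul hζ, ZMod.natCast_zmod_val]
      congr 1
      ring
  rw [h1, h2]
  by_cases hh : h = 0
  · subst hh
    rw [if_pos rfl, if_pos rfl]
    have hF0 : Fv k a ζ (-(0 : ZMod k)) = 0 := by
      rw [Fv, neg_zero, ezero]
      simp only [one_pow, mul_one]
      exact_mod_cast congrArg (Int.cast : ℤ → ℂ) hs
    rw [hF0, mul_zero, zero_add, Wm, Matrix.of_apply, mul_zero, ezero, one_mul]
  · rw [if_neg hh, if_neg hh, add_zero, Wm, Matrix.of_apply]


lemma detC0 [NeZero k] (a : ℕ → ℤ) (hs : ∑ i ∈ Finset.range k, a i = 0) :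
    (Cm k a).det = 0 := by
  rw [← Matrix.exists_vecMul_eq_zero_iff]
  refine ⟨fun _ => 1, fun h0 => one_ne_zero (congrFun h0 0), ?_⟩
  funext c
  simp only [Matrix.vecMul, dotProduct, one_mul, Pi.zero_apply]
  have hre : (∑ r : ZMod k, Cm k a r c) = ∑ m : ZMod k, (a m.val : ℂ) := by
    refine Finset.sum_nbij' (fun r => r - c) (fun m => m + c) ?_ ?_ ?_ ?_ ?_
    · intro _ _; exact Finset.mem_univ _
    · intro _ _; exact Finset.mem_univ _
    · intro r _; exact sub_add_cancel r c
    · intro m _; exact add_sub_cancel_right m c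
    · intro r _; rfl
  rw [hre]
  have hre2 : (∑ m : ZMod k, (a m.val : ℂ)) = ∑ i ∈ Finset.range k, (a i : ℂ) := by
    refine Finset.sum_nbij' (fun m => m.val) (fun n => (n : ZMod k)) ?_ ?_ ?_ ?_ ?_
    · intro m _; exact Finset.mem_range.mpr (ZMod.val_lt m)
    · intro n _; exact Finset.mem_univ _
    · intro m _; exact ZMod.natCast_zmod_val m
    · intro n hn; exact ZMod.val_natCast_of_lt (Finset.mem_range.mp hn)
    · intro m _; rfl
  rw [hre2, ← Int.cast_sum]
  exact_mod_cast congrArg (Int.cast : ℤ → ℂ) hs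

lemma detCJ [NeZero k] (hk : k.Prime) (hζ : IsPrimitiveRoot ζ k) (a : ℕ → ℤ)
    (hs : ∑ i ∈ Finset.range k, a i = 0) :
    (Cm k a + Jm k).det = (k : ℂ) * ∏ h ∈ Finset.univ.erase (0 : ZMod k), Fv k a ζ (-h) := by
  have h := congrArg Matrix.det (CJW hk hζ a hs)
  rw [Matrix.det_mul, Matrix.det_mul, Matrix.det_diagonal, mul_comm ((Cm k a + Jm k).det)] at h
  have h2 := mul_left_cancel₀ (detW_ne hk hζ) h
  rw [h2, ← Finset.mul_prod_erase Finset.univ _ (Finset.mem_univ (0 : ZMod k)), if_pos rfl]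
  congr 1
  refine Finset.prod_congr rfl fun x hx => ?_
  rw [if_neg (Finset.mem_erase.mp hx).1]

lemma det_expand [NeZero k] (a : ℕ → ℤ) (hs : ∑ i ∈ Finset.range k, a i = 0) :
    (Cm k a + Jm k).det = ∑ r : ZMod k, ((Cm k a).updateRow r (fun _ => 1)).det := by
  have hfun : (Cm k a + Jm k)
      = Matrix.of ((fun _ => fun _ => (1 : ℂ)) + (fun r => Cm k a r)) := by
    funext r c'
    rw [Matrix.add_apply]
    show Cm k a r c' + Jm k r c' = 1 + Cm k a r c'
    rw [Jm, Matrix.of_apply, add_comm]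
  have hEXP : (Cm k a + Jm k).det
      = ∑ s : Finset (ZMod k),
          Matrix.detRowAlternating
            (Matrix.of (s.piecewise (fun _ => fun _ => (1 : ℂ)) (fun r => Cm k a r))) := by
    rw [hfun]
    exact (Matrix.detRowAlternating (R := ℂ) (n := ZMod k)).toMultilinearMap.map_add_univ
      (fun _ => fun _ => (1 : ℂ)) (fun r => Cm k a r)
  rw [hEXP]
  rw [← Finset.sum_filter_of_ne
    (p := fun s : Finset (ZMod k) => s.card = 1) (s := Finset.univ) ?side]
  case side =>
    intro s _ hTne
    by_contra hcard
    apply hTne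
    rcases Nat.lt_or_ge s.card 2 with hlt | hge
    · have h0 : s.card = 0 := by omega
      rw [Finset.card_eq_zero.mp h0, Finset.piecewise_empty]
      exact detC0 a hs
    · obtain ⟨x, hx, y, hy, hxy⟩ := Finset.one_lt_card.mp hge
      exact AlternatingMap.map_eq_zero_of_eq _ _
        (by show s.piecewise (fun _ => fun _ => (1:ℂ)) (fun r => Cm k a r) x
              = s.piecewise (fun _ => fun _ => (1:ℂ)) (fun r => Cm k a r) y
            rw [Finset.piecewise_eq_of_mem _ _ _ hx, Finset.piecewise_eq_of_mem _ _ _ hy]) hxy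
  have himg : Finset.univ.filter (fun s : Finset (ZMod k) => s.card = 1)
      = Finset.univ.image (fun r : ZMod k => ({r} : Finset (ZMod k))) := by
    ext s
    simp only [Finset.mem_filter, Finset.mem_univ, true_and, Finset.mem_image]
    rw [Finset.card_eq_one]
    constructor
    · rintro ⟨r, rfl⟩; exact ⟨r, rfl⟩
    · rintro ⟨r, rfl⟩; exact ⟨r, rfl⟩
  rw [himg, Finset.sum_image (fun x _ y _ h => Finset.singleton_injective h)]
  refine Finset.sum_congr rfl fun r _ => ?_
  congr 1
  rw [Finset.piecewise_singleton]
  funext r' c'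
  rw [Matrix.updateRow_apply, Matrix.of_apply, Function.update_apply]
  by_cases hr : r' = r <;> simp [hr]

lemma row_ones [NeZero k] (a : ℕ → ℤ) (r : ZMod k) :
    ((Cm k a).updateRow r (fun _ => (1 : ℂ))).det
      = ∑ c : ZMod k, ((Cm k a).updateRow r (Pi.single c 1)).det := by
  have hone : (fun _ => (1 : ℂ)) = ∑ c : ZMod k, Pi.single c (1 : ℂ) := by
    funext c'
    rw [Finset.sum_apply]
    simp [Pi.single_apply]
  rw [hone]
  have hupd : ∀ v : ZMod k → ℂ, (Cm k a).updateRow r v = Matrix.of (Function.update (Cm k a) r v) :=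
    fun v => rfl
  rw [hupd]
  exact (Matrix.detRowAlternating (R := ℂ) (n := ZMod k)).toMultilinearMap.map_update_sum
    Finset.univ r (fun c => Pi.single c (1 : ℂ)) (Cm k a)


end NormBoundAux

open NormBoundAux

theorem norm_bound_sum_zero (k : ℕ) (hk : k.Prime) (a : ℕ → ℤ)
    (hs : ∑ i ∈ Finset.range k, a i = 0) (ζ : ℂ) (hζ : IsPrimitiveRoot ζ k) :
    ‖∏ h ∈ Finset.Ico 1 k, ∑ i ∈ Finset.range k, (a i : ℂ) * (ζ ^ h) ^ i‖
      ≤ (k : ℝ) *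
        ((max (∑ i ∈ Finset.range k, max 0 (a i))
              (∑ i ∈ Finset.range k, max 0 (-(a i))) : ℤ) : ℝ) ^ (k - 1) := by
  classical
  haveI : NeZero k := ⟨hk.ne_zero⟩
  set Ap : ℤ := ∑ i ∈ Finset.range k, max 0 (a i) with hAp
  set Am : ℤ := ∑ i ∈ Finset.range k, max 0 (-(a i)) with hAm
  have hApAm : Ap = Am := by
    have hsub : Ap - Am = ∑ i ∈ Finset.range k, a i := by
      rw [hAp, hAm, ← Finset.sum_sub_distrib]
      exact Finset.sum_congr rfl fun i _ => by omega
    rw [hs] at hsub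
    omega
  have hApnn : 0 ≤ Ap := Finset.sum_nonneg fun i _ => le_max_left _ _
  set A : ℕ := Ap.toNat with hA
  have hAZ : (A : ℤ) = Ap := Int.toNat_of_nonneg hApnn
  have hP : (∑ i ∈ Finset.range k, (a i).toNat) = A := by
    have hcast : ((∑ i ∈ Finset.range k, (a i).toNat : ℕ) : ℤ) = Ap := by
      push_cast
      rw [hAp]
      exact Finset.sum_congr rfl fun i _ => by omega
    exact_mod_cast hcast.trans hAZ.symm
  have hQ : (∑ i ∈ Finset.range k, (-(a i)).toNat) = A := by
    have hcast : ((∑ i ∈ Finset.range k, (-(a i)).toNat : ℕ) : ℤ) = Am := by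
      push_cast
      rw [hAm]
      exact Finset.sum_congr rfl fun i _ => by omega
    exact_mod_cast hcast.trans (hApAm ▸ hAZ.symm)
  -- rewrite RHS constant
  have hmaxA : ((max Ap Am : ℤ) : ℝ) = (A : ℝ) := by
    rw [← hApAm, max_self]
    exact_mod_cast congrArg (Int.cast : ℤ → ℝ) hAZ.symm
  -- product identification
  have hprod1 : (∏ h ∈ Finset.Ico 1 k, ∑ i ∈ Finset.range k, (a i : ℂ) * (ζ ^ h) ^ i)
      = ∏ x ∈ Finset.univ.erase (0 : ZMod k), Fv k a ζ x := by
    refine Finset.prod_nbij' (fun h => (h : ZMod k)) (fun x => x.val) ?_ ?_ ?_ ?_ ?_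
    · intro h hh
      obtain ⟨h1, h2⟩ := Finset.mem_Ico.mp hh
      refine Finset.mem_erase.mpr ⟨?_, Finset.mem_univ _⟩
      intro h0
      have hv : ((h : ZMod k)).val = h := ZMod.val_natCast_of_lt h2
      have h0' : ((h : ZMod k)) = 0 := h0
      rw [h0', ZMod.val_zero] at hv
      omega
    · intro x hx
      have hxne := (Finset.mem_erase.mp hx).1
      have hne : x.val ≠ 0 := fun h0 => hxne ((ZMod.val_eq_zero x).mp h0)
      exact Finset.mem_Ico.mpr ⟨Nat.one_le_iff_ne_zero.mpr hne, ZMod.val_lt x⟩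
    · intro h hh; exact ZMod.val_natCast_of_lt (Finset.mem_Ico.mp hh).2
    · intro x _; exact ZMod.natCast_zmod_val x
    · intro h _
      rw [Fv]
      refine Finset.sum_congr rfl fun i _ => ?_
      rw [epow hζ h]
  have hprod2 : (∏ x ∈ Finset.univ.erase (0 : ZMod k), Fv k a ζ x)
      = ∏ x ∈ Finset.univ.erase (0 : ZMod k), Fv k a ζ (-x) := by
    refine Finset.prod_nbij' (fun x => -x) (fun x => -x) ?_ ?_ ?_ ?_ ?_
    · intro x hx
      exact Finset.mem_erase.mpr ⟨neg_ne_zero.mpr (Finset.mem_erase.mp hx).1, Finset.mem_univ _⟩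
    · intro x hx
      exact Finset.mem_erase.mpr ⟨neg_ne_zero.mpr (Finset.mem_erase.mp hx).1, Finset.mem_univ _⟩
    · intro x _; exact neg_neg x
    · intro x _; exact neg_neg x
    · intro x _; rw [neg_neg]
  -- the key estimate
  have hkey : ‖(Cm k a + Jm k).det‖ ≤ (k : ℝ) * ((k : ℝ) * (A : ℝ) ^ (k - 1)) := by
    rw [det_expand a hs]
    refine le_trans (norm_sum_le _ _) ?_
    have hb : ∀ r : ZMod k,
        ‖((Cm k a).updateRow r (fun _ => 1)).det‖ ≤ (k : ℝ) * (A : ℝ) ^ (k - 1) := by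
      intro r
      rw [row_ones a r]
      refine le_trans (norm_sum_le _ _) ?_
      have hc := Finset.sum_le_card_nsmul Finset.univ
        (fun c => ‖((Cm k a).updateRow r (Pi.single c 1)).det‖)
        ((A : ℝ) ^ (k - 1)) (fun c _ => key_bound a A hP hQ r c)
      rw [Finset.card_univ, ZMod.card] at hc
      calc (∑ c : ZMod k, ‖((Cm k a).updateRow r (Pi.single c 1)).det‖)
          ≤ k • ((A : ℝ) ^ (k - 1)) := hc
        _ = (k : ℝ) * (A : ℝ) ^ (k - 1) := by rw [nsmul_eq_mul]
    have hc2 := Finset.sum_le_card_nsmul Finset.univ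
      (fun r : ZMod k => ‖((Cm k a).updateRow r (fun _ => 1)).det‖)
      ((k : ℝ) * (A : ℝ) ^ (k - 1)) (fun r _ => hb r)
    rw [Finset.card_univ, ZMod.card] at hc2
    calc (∑ r : ZMod k, ‖((Cm k a).updateRow r (fun _ => 1)).det‖)
        ≤ k • ((k : ℝ) * (A : ℝ) ^ (k - 1)) := hc2
      _ = (k : ℝ) * ((k : ℝ) * (A : ℝ) ^ (k - 1)) := by rw [nsmul_eq_mul]
  have hdet := detCJ (ζ := ζ) hk hζ a hs
  rw [hdet, norm_mul, Complex.norm_natCast] at hkey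
  have hkpos : (0 : ℝ) < k := by exact_mod_cast hk.pos
  have hfinal : ‖∏ x ∈ Finset.univ.erase (0 : ZMod k), Fv k a ζ (-x)‖
      ≤ (k : ℝ) * (A : ℝ) ^ (k - 1) :=
    le_of_mul_le_mul_left hkey hkpos
  rw [hprod1, hprod2, hmaxA]
  exact hfinal
end

section
/- Let k be a prime and f(x) = Σ_{i=0}^{k-1} a_i x^i ∈ ℤ[x] with s := Σ_{i=0}^{k-1} a_i ≠ 0. Set A^+ = Σ_i max(0, a_i), A^- = Σ_i max(0, -a_i), and A = max(A^+, A^-). Then |N(f(ζ_k))| ≤ A^k / |s|. -/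
open Finset

namespace NormBoundAux

lemma geo_re_nonneg {k : ℕ} {ζ : ℂ} (hζ1 : ζ ^ k = 1) (n : ℕ) :
    0 ≤ (∑ h ∈ range k, (ζ ^ n) ^ h).re := by
  rcases eq_or_ne (ζ ^ n) 1 with h1 | h1
  · simp [h1]
  · have hk1 : (ζ ^ n) ^ k = 1 := by
      rw [← pow_mul, mul_comm, pow_mul, hζ1, one_pow]
    rw [geom_sum_eq h1, hk1]
    simp

lemma sum_rep_re_nonneg {k : ℕ} {ζ : ℂ} (hζ1 : ζ ^ k = 1) {ι : Type}
    (I : Finset ι) (w : ι → ℝ) (e : ι → ℕ) (hw : ∀ x ∈ I, 0 ≤ w x) :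
    0 ≤ (∑ h ∈ range k, ∑ x ∈ I, (w x : ℂ) * (ζ ^ e x) ^ h).re := by
  rw [Finset.sum_comm]
  have h1 : (∑ x ∈ I, ∑ h ∈ range k, (w x : ℂ) * (ζ ^ e x) ^ h)
      = ∑ x ∈ I, (w x : ℂ) * ∑ h ∈ range k, (ζ ^ e x) ^ h :=
    Finset.sum_congr rfl fun x _ => (Finset.mul_sum _ _ _).symm
  rw [h1, Complex.re_sum]
  refine Finset.sum_nonneg fun x hx => ?_
  rw [Complex.re_ofReal_mul]
  exact mul_nonneg (hw x hx) (geo_re_nonneg hζ1 _)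

def Rep (ζ : ℂ) (F : ℕ → ℂ) : Prop :=
  ∃ (ι : Type) (I : Finset ι) (w : ι → ℝ) (e : ι → ℕ),
    (∀ x ∈ I, 0 ≤ w x) ∧ ∀ h, F h = ∑ x ∈ I, (w x : ℂ) * (ζ ^ e x) ^ h

lemma rep_mul {ζ : ℂ} {F G : ℕ → ℂ} (hF : Rep ζ F) (hG : Rep ζ G) :
    Rep ζ (fun h => F h * G h) := by
  obtain ⟨ι, I, w, e, hw, hrep⟩ := hF
  obtain ⟨ι', I', w', e', hw', hrep'⟩ := hG
  refine ⟨ι × ι', I ×ˢ I', fun x => w x.1 * w' x.2, fun x => e x.1 + e' x.2, ?_, ?_⟩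
  · rintro ⟨x, y⟩ hxy
    rw [Finset.mem_product] at hxy
    exact mul_nonneg (hw _ hxy.1) (hw' _ hxy.2)
  · intro h
    simp only []
    rw [hrep h, hrep' h, Finset.sum_mul_sum, Finset.sum_product]
    refine Finset.sum_congr rfl fun x _ => Finset.sum_congr rfl fun y _ => ?_
    push_cast
    rw [pow_add, mul_pow]
    ring

lemma rep_pow {ζ : ℂ} {F : ℕ → ℂ} (hF : Rep ζ F) (m : ℕ) :
    Rep ζ (fun h => F h ^ m) := by
  induction m with
  | zero =>
    exact ⟨Unit, {()}, fun _ => 1, fun _ => 0, by norm_num, fun h => by simp⟩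
  | succ n ih =>
    have h2 := rep_mul ih hF
    have h3 : (fun h => F h ^ n * F h) = fun h => F h ^ (n + 1) := by
      funext h; rw [pow_succ]
    rwa [h3] at h2

lemma rep_pow_sum_re_nonneg {k : ℕ} {ζ : ℂ} (hζ1 : ζ ^ k = 1) {F : ℕ → ℂ}
    (hF : Rep ζ F) (m : ℕ) : 0 ≤ (∑ h ∈ range k, F h ^ m).re := by
  obtain ⟨ι, I, w, e, hw, hrep⟩ := rep_pow hF m
  have h1 : (∑ h ∈ range k, F h ^ m) = ∑ h ∈ range k, ∑ x ∈ I, (w x : ℂ) * (ζ ^ e x) ^ h :=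
    Finset.sum_congr rfl fun h _ => hrep h
  rw [h1]
  exact sum_rep_re_nonneg hζ1 I w e hw


lemma prod_abs_one_sub_le {k : ℕ} (z : ℕ → ℂ) (u : ℝ) (hu : u < 1)
    (hz : ∀ h ∈ range k, ‖z h‖ ≤ u)
    (hps : ∀ m : ℕ, 0 ≤ (∑ h ∈ range k, z h ^ m).re) :
    ∏ h ∈ range k, ‖1 - z h‖ ≤ 1 := by
  have hz1 : ∀ h ∈ range k, ‖z h‖ < 1 := fun h hh => by
    exact lt_of_le_of_lt (hz h hh) hu
  have hne : ∀ h ∈ range k, (1 : ℂ) - z h ≠ 0 := by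
    intro h hh hzero
    have hz1' := hz1 h hh
    have : z h = 1 := by linear_combination -hzero
    rw [this] at hz1'
    norm_num at hz1'
  have habs : ∀ h ∈ range k, ‖1 - z h‖ = Real.exp ((Complex.log (1 - z h)).re) := by
    intro h hh
    conv_lhs => rw [← Complex.exp_log (hne h hh)]
    rw [Complex.norm_exp]
  rw [Finset.prod_congr rfl habs, ← Real.exp_sum, Real.exp_le_one_iff]
  have hH : HasSum (fun n : ℕ => ∑ h ∈ range k, z h ^ n / (n : ℂ))
      (∑ h ∈ range k, -Complex.log (1 - z h)) :=
    hasSum_sum fun h hh => Complex.hasSum_taylorSeries_neg_log (hz1 h hh)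
  have hre : HasSum (fun n : ℕ => (∑ h ∈ range k, z h ^ n / (n : ℂ)).re)
      ((∑ h ∈ range k, -Complex.log (1 - z h)).re) := by
    have := Complex.reCLM.hasSum hH
    simpa using this
  have h0 : 0 ≤ (∑ h ∈ range k, -Complex.log (1 - z h)).re := by
    refine hre.nonneg fun n => ?_
    rw [← Finset.sum_div, show ((n : ℂ)) = ((n : ℝ) : ℂ) by push_cast; ring,
      Complex.div_ofReal_re]
    exact div_nonneg (hps n) (Nat.cast_nonneg n)
  rw [← Complex.re_sum]
  simp only [Finset.sum_neg_distrib, Complex.neg_re] at h0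
  linarith [h0]

lemma sp_bound {P : ℝ} (a b : ℂ) (ha : ‖a‖ ≤ P) (hb : ‖b‖ ≤ P) :
    ‖a - b‖ * P ≤ ‖((P ^ 2 : ℝ) : ℂ) - (starRingEnd ℂ) a * b‖ := by
  have hP0 : 0 ≤ P := le_trans (norm_nonneg a) ha
  have ha' : Complex.normSq a ≤ P ^ 2 := by
    rw [← Complex.sq_norm]; exact pow_le_pow_left₀ (norm_nonneg a) ha 2
  have hb' : Complex.normSq b ≤ P ^ 2 := by
    rw [← Complex.sq_norm]; exact pow_le_pow_left₀ (norm_nonneg b) hb 2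
  have key : Complex.normSq (((P ^ 2 : ℝ) : ℂ) - (starRingEnd ℂ) a * b)
      - P ^ 2 * Complex.normSq (a - b)
      = (P ^ 2 - Complex.normSq a) * (P ^ 2 - Complex.normSq b) := by
    simp only [Complex.normSq_apply, Complex.sub_re, Complex.sub_im, Complex.mul_re,
      Complex.mul_im, Complex.conj_re, Complex.conj_im, Complex.ofReal_re, Complex.ofReal_im]
    ring
  have sq_ineq : (‖a - b‖ * P) ^ 2
      ≤ ‖((P ^ 2 : ℝ) : ℂ) - (starRingEnd ℂ) a * b‖ ^ 2 := by
    rw [mul_pow, Complex.sq_norm, Complex.sq_norm]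
    nlinarith [mul_nonneg (sub_nonneg.2 ha') (sub_nonneg.2 hb'), Complex.normSq_nonneg (a - b)]
  have h1 : 0 ≤ ‖a - b‖ * P := mul_nonneg (norm_nonneg _) hP0
  exact (pow_le_pow_iff_left₀ h1 (norm_nonneg _) two_ne_zero).1 sq_ineq

lemma aux {k : ℕ} (hk : k ≠ 0) {ζ : ℂ} (hζ1 : ζ ^ k = 1) (hζa : ‖ζ‖ = 1)
    (p q : ℕ → ℝ) (hp : ∀ i, 0 ≤ p i) (hq : ∀ i, 0 ≤ q i)
    (hlt : ∑ i ∈ range k, q i < ∑ i ∈ range k, p i) :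
    ∏ h ∈ range k, ‖∑ i ∈ range k, ((p i - q i : ℝ) : ℂ) * (ζ ^ h) ^ i‖
      ≤ (∑ i ∈ range k, p i) ^ k := by
  set P := ∑ i ∈ range k, p i with hP
  set Q := ∑ i ∈ range k, q i with hQ
  have hQ0 : 0 ≤ Q := Finset.sum_nonneg fun i _ => hq i
  have hP0 : 0 < P := lt_of_le_of_lt hQ0 hlt
  have hζ0 : ζ ≠ 0 := fun h => by rw [h] at hζa; simp at hζa
  have habs_pow : ∀ h i : ℕ, ‖(ζ ^ h) ^ i‖ = 1 := by
    intro h i; rw [norm_pow, norm_pow, hζa, one_pow, one_pow]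
  set Ph : ℕ → ℂ := fun h => ∑ i ∈ range k, (p i : ℂ) * (ζ ^ h) ^ i with hPh
  set Qh : ℕ → ℂ := fun h => ∑ i ∈ range k, (q i : ℂ) * (ζ ^ h) ^ i with hQh
  have habsPh : ∀ h, ‖Ph h‖ ≤ P := by
    intro h
    refine le_trans (norm_sum_le _ _) ?_
    refine Finset.sum_le_sum fun i _ => ?_
    rw [norm_mul, habs_pow, mul_one, Complex.norm_real, Real.norm_eq_abs, abs_of_nonneg (hp i)]
  have habsQh : ∀ h, ‖Qh h‖ ≤ Q := by
    intro h
    refine le_trans (norm_sum_le _ _) ?_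
    refine Finset.sum_le_sum fun i _ => ?_
    rw [norm_mul, habs_pow, mul_one, Complex.norm_real, Real.norm_eq_abs, abs_of_nonneg (hq i)]
  have hk1 : k - 1 + 1 = k := Nat.succ_pred_eq_of_pos (Nat.pos_of_ne_zero hk)
  have hconjζ : (starRingEnd ℂ) ζ = ζ ^ (k - 1) := by
    have h1 : ζ * (starRingEnd ℂ) ζ = 1 := by
      rw [Complex.mul_conj, Complex.normSq_eq_norm_sq, hζa]
      norm_num
    have h2 : ζ * ζ ^ (k - 1) = 1 := by
      rw [← pow_succ', hk1, hζ1]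
    exact mul_left_cancel₀ hζ0 (h1.trans h2.symm)
  have hconjPh : ∀ h, (starRingEnd ℂ) (Ph h)
      = ∑ i ∈ range k, (p i : ℂ) * (ζ ^ ((k - 1) * i)) ^ h := by
    intro h
    rw [hPh]
    simp only []
    rw [map_sum]
    refine Finset.sum_congr rfl fun i _ => ?_
    rw [map_mul, Complex.conj_ofReal, map_pow, map_pow, hconjζ]
    congr 1
    simp only [← pow_mul]
    ring_nf
  set R : ℕ → ℂ := fun h => (starRingEnd ℂ) (Ph h) * Qh h with hR
  have hRrep : Rep ζ R := by
    refine ⟨ℕ × ℕ, range k ×ˢ range k, fun x => p x.1 * q x.2,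
      fun x => (k - 1) * x.1 + x.2, ?_, ?_⟩
    · rintro ⟨i, j⟩ _
      exact mul_nonneg (hp i) (hq j)
    · intro h
      simp only [hR, hQh]
      rw [hconjPh h, Finset.sum_mul_sum, Finset.sum_product]
      refine Finset.sum_congr rfl fun i _ => Finset.sum_congr rfl fun j _ => ?_
      push_cast
      rw [pow_add, mul_pow]
      ring
  set c : ℝ := P ^ 2 with hc
  have hc0 : 0 < c := by positivity
  set z : ℕ → ℂ := fun h => R h / (c : ℂ) with hz
  have hzabs : ∀ h ∈ range k, ‖z h‖ ≤ Q / P := by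
    intro h _
    simp only [hz, hR]
    rw [norm_div, Complex.norm_real, Real.norm_eq_abs, abs_of_pos hc0, norm_mul, Complex.norm_conj]
    have h1 : ‖Ph h‖ * ‖Qh h‖ ≤ P * Q :=
      mul_le_mul (habsPh h) (habsQh h) (norm_nonneg _) hP0.le
    calc ‖Ph h‖ * ‖Qh h‖ / c ≤ P * Q / c := by gcongr
      _ = Q / P := by rw [hc]; field_simp
  have hps : ∀ m : ℕ, 0 ≤ (∑ h ∈ range k, z h ^ m).re := by
    intro m
    have h1 : ∑ h ∈ range k, z h ^ m = (∑ h ∈ range k, R h ^ m) / ((c ^ m : ℝ) : ℂ) := by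
      rw [Finset.sum_div]
      refine Finset.sum_congr rfl fun h _ => ?_
      simp only [hz]
      rw [div_pow]
      norm_cast
    rw [h1, Complex.div_ofReal_re]
    exact div_nonneg (rep_pow_sum_re_nonneg hζ1 hRrep m) (by positivity)
  have hkey : ∏ h ∈ range k, ‖1 - z h‖ ≤ 1 :=
    prod_abs_one_sub_le z (Q / P) ((div_lt_one hP0).2 hlt) hzabs hps
  have hf : ∀ h ∈ range k, ‖∑ i ∈ range k, ((p i - q i : ℝ) : ℂ) * (ζ ^ h) ^ i‖
      ≤ P * ‖1 - z h‖ := by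
    intro h _
    have hsub : (∑ i ∈ range k, ((p i - q i : ℝ) : ℂ) * (ζ ^ h) ^ i) = Ph h - Qh h := by
      simp only [hPh, hQh]
      rw [← Finset.sum_sub_distrib]
      refine Finset.sum_congr rfl fun i _ => ?_
      push_cast
      ring
    have h1 := sp_bound (Ph h) (Qh h) (habsPh h) (le_trans (habsQh h) hlt.le)
    have h2 : ((P ^ 2 : ℝ) : ℂ) - R h = (c : ℂ) * (1 - z h) := by
      simp only [hz]
      rw [mul_sub, mul_one, mul_div_cancel₀ _ (by exact_mod_cast ne_of_gt hc0 : (c : ℂ) ≠ 0), hc]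
    rw [hsub]
    have h3 : ‖((P ^ 2 : ℝ) : ℂ) - R h‖ = c * ‖1 - z h‖ := by
      rw [h2, norm_mul, Complex.norm_real, Real.norm_eq_abs, abs_of_pos hc0]
    rw [h3, hc] at h1
    nlinarith [norm_nonneg (1 - z h), norm_nonneg (Ph h - Qh h)]
  calc ∏ h ∈ range k, ‖∑ i ∈ range k, ((p i - q i : ℝ) : ℂ) * (ζ ^ h) ^ i‖
      ≤ ∏ h ∈ range k, (P * ‖1 - z h‖) :=
        Finset.prod_le_prod (fun h _ => norm_nonneg _) hf
    _ = P ^ k * ∏ h ∈ range k, ‖1 - z h‖ := by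
        rw [Finset.prod_mul_distrib, Finset.prod_const, Finset.card_range]
    _ ≤ P ^ k * 1 := by
        have : (0:ℝ) ≤ P ^ k := by positivity
        nlinarith [hkey, Finset.prod_nonneg (fun h (_ : h ∈ range k) => norm_nonneg (1 - z h))]
    _ = P ^ k := mul_one _


end NormBoundAux

open Finset NormBoundAux in
theorem norm_bound_sum_ne_zero (k : ℕ) (hk : k.Prime) (a : ℕ → ℤ)
    (hs : ∑ i ∈ Finset.range k, a i ≠ 0) (ζ : ℂ) (hζ : IsPrimitiveRoot ζ k) :
    ‖∏ h ∈ Finset.Ico 1 k, ∑ i ∈ Finset.range k, (a i : ℂ) * (ζ ^ h) ^ i‖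
      ≤ ((max (∑ i ∈ Finset.range k, max 0 (a i))
              (∑ i ∈ Finset.range k, max 0 (-(a i))) : ℤ) : ℝ) ^ k
          / |((∑ i ∈ Finset.range k, a i : ℤ) : ℝ)| := by
  have hk0 : k ≠ 0 := hk.ne_zero
  have hk2 : 1 ≤ k := hk.one_lt.le
  have hζ1 : ζ ^ k = 1 := hζ.pow_eq_one
  have hζa : ‖ζ‖ = 1 := by
    have h1 : ‖ζ‖ ^ k = 1 := by rw [← norm_pow, hζ1, norm_one]
    have h2 : 0 ≤ ‖ζ‖ := norm_nonneg ζ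
    by_contra hne
    rcases lt_or_gt_of_ne hne with hlt | hgt
    · have h3 := pow_lt_one₀ h2 hlt hk0
      rw [h1] at h3
      norm_num at h3
    · have h3 := one_lt_pow₀ hgt hk0
      rw [h1] at h3
      norm_num at h3
  set p : ℕ → ℝ := fun i => ((max 0 (a i) : ℤ) : ℝ) with hp'
  set q : ℕ → ℝ := fun i => ((max 0 (-a i) : ℤ) : ℝ) with hq'
  have hp : ∀ i, 0 ≤ p i := fun i => by
    simp only [hp']
    exact_mod_cast le_max_left 0 (a i)
  have hq : ∀ i, 0 ≤ q i := fun i => by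
    simp only [hq']
    exact_mod_cast le_max_left 0 (-a i)
  have hpqR : ∀ i : ℕ, p i - q i = ((a i : ℤ) : ℝ) := by
    intro i
    have h1 : (max 0 (a i)) - (max 0 (-a i)) = a i := by omega
    simp only [hp', hq']
    rw [← Int.cast_sub, h1]
  have hpq : ∀ i : ℕ, ((a i : ℂ)) = ((p i - q i : ℝ) : ℂ) := by
    intro i
    rw [hpqR i]
    push_cast
    rfl
  set F : ℕ → ℂ := fun h => ∑ i ∈ Finset.range k, (a i : ℂ) * (ζ ^ h) ^ i with hF
  have hFeq : ∀ h : ℕ, F h = ∑ i ∈ range k, ((p i - q i : ℝ) : ℂ) * (ζ ^ h) ^ i := by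
    intro h
    simp only [hF]
    exact Finset.sum_congr rfl fun i _ => by rw [hpq i]
  have hcast : ((max (∑ i ∈ Finset.range k, max 0 (a i))
      (∑ i ∈ Finset.range k, max 0 (-(a i))) : ℤ) : ℝ)
      = max (∑ i ∈ range k, p i) (∑ i ∈ range k, q i) := by
    simp only [hp', hq']
    push_cast
    rfl
  have hsum : (∑ i ∈ range k, p i) - (∑ i ∈ range k, q i) = ((∑ i ∈ range k, a i : ℤ) : ℝ) := by
    rw [← Finset.sum_sub_distrib, Finset.sum_congr rfl fun i _ => hpqR i]
    push_cast
    rfl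
  have key : ∏ h ∈ range k, ‖F h‖
      ≤ (max (∑ i ∈ range k, p i) (∑ i ∈ range k, q i)) ^ k := by
    rcases lt_trichotomy (∑ i ∈ range k, q i) (∑ i ∈ range k, p i) with hlt | heq | hgt
    · have h1 := aux hk0 hζ1 hζa p q hp hq hlt
      rw [max_eq_left hlt.le]
      refine le_trans (le_of_eq ?_) h1
      exact Finset.prod_congr rfl fun h _ => by rw [hFeq h]
    · exfalso
      apply hs
      have : ((∑ i ∈ range k, a i : ℤ) : ℝ) = 0 := by rw [← hsum, heq, sub_self]
      exact_mod_cast this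
    · have h1 := aux hk0 hζ1 hζa q p hq hp hgt
      rw [max_eq_right hgt.le]
      refine le_trans (le_of_eq ?_) h1
      refine Finset.prod_congr rfl fun h _ => ?_
      rw [hFeq h]
      have : ∑ i ∈ range k, ((q i - p i : ℝ) : ℂ) * (ζ ^ h) ^ i
          = -∑ i ∈ range k, ((p i - q i : ℝ) : ℂ) * (ζ ^ h) ^ i := by
        rw [← Finset.sum_neg_distrib]
        refine Finset.sum_congr rfl fun i _ => ?_
        push_cast
        ring
      rw [this, norm_neg]
  have hF0 : ‖F 0‖ = |((∑ i ∈ range k, a i : ℤ) : ℝ)| := by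
    have h1 : F 0 = ((∑ i ∈ range k, a i : ℤ) : ℂ) := by
      simp only [hF]
      push_cast
      refine Finset.sum_congr rfl fun i _ => ?_
      rw [pow_zero, one_pow, mul_one]
    rw [h1]
    exact_mod_cast Complex.norm_intCast _
  have hsplit : ∏ h ∈ range k, ‖F h‖
      = |((∑ i ∈ range k, a i : ℤ) : ℝ)| * ∏ h ∈ Ico 1 k, ‖F h‖ := by
    calc ∏ h ∈ range k, ‖F h‖
        = ∏ h ∈ Ico 0 k, ‖F h‖ := by rw [Nat.Ico_zero_eq_range]
      _ = (∏ h ∈ Ico 0 1, ‖F h‖) * ∏ h ∈ Ico 1 k, ‖F h‖ :=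
          (Finset.prod_Ico_consecutive _ (Nat.zero_le 1) hk2).symm
      _ = |((∑ i ∈ range k, a i : ℤ) : ℝ)| * ∏ h ∈ Ico 1 k, ‖F h‖ := by
          rw [show Finset.Ico 0 1 = {0} from rfl, Finset.prod_singleton, hF0]
  have habs0 : (0:ℝ) < |((∑ i ∈ range k, a i : ℤ) : ℝ)| := by
    rw [abs_pos]
    exact_mod_cast hs
  rw [le_div_iff₀ habs0, hcast]
  have hprod : ‖∏ h ∈ Finset.Ico 1 k, F h‖ = ∏ h ∈ Ico 1 k, ‖F h‖ :=
    Complex.norm_prod _ _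
  calc ‖∏ h ∈ Finset.Ico 1 k, F h‖ * |((∑ i ∈ range k, a i : ℤ) : ℝ)|
      = ∏ h ∈ range k, ‖F h‖ := by rw [hprod, hsplit]; ring
    _ ≤ _ := key
end

section
/- Let q = p^n be a prime power, k a nontrivial divisor of q-1 with q = ek+1, g a primitive element of 𝔽_q, and f(x) = Σ_{i=0}^{k-1} a_i x^i ∈ ℤ[x]. If p > ((k/φ(k)) Σ_{i=0}^{k-1} a_i^2)^{φ(k)/(2·ord_k(p))}, then f(g^e) = 0 in 𝔽_q if and only if f(ζ_k) = 0 in ℂ. -/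
open Polynomial Finset

namespace TransferAux

theorem aeval_ringHom_comm {A B : Type*} [CommRing A] [CommRing B] (φ : A →+* B) (x : A)
    (P : Polynomial ℤ) : φ (Polynomial.aeval x P) = Polynomial.aeval (φ x) P := by
  rw [Polynomial.aeval_def, Polynomial.aeval_def, Polynomial.hom_eval₂]
  congr 1
  exact Subsingleton.elim _ _

noncomputable def fpoly (a : ℕ → ℤ) (k : ℕ) : Polynomial ℤ :=
  ∑ i ∈ Finset.range k, Polynomial.C (a i) * Polynomial.X ^ i

theorem aeval_fpoly {A : Type*} [CommRing A] (a : ℕ → ℤ) (k : ℕ) (x : A) :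
    Polynomial.aeval x (fpoly a k) = ∑ i ∈ Finset.range k, (a i : A) * x ^ i := by
  rw [fpoly, map_sum]
  refine Finset.sum_congr rfl fun i _ => ?_
  simp [Polynomial.aeval_C, algebraMap_int_eq, eq_intCast]

theorem primroots_eq {R : Type*} [CommRing R] [IsDomain R] {k : ℕ} (hk0 : 0 < k) {ζ : R}
    (hζ : IsPrimitiveRoot ζ k) [DecidableEq R] :
    primitiveRoots k R = ((range k).filter k.Coprime).image (ζ ^ ·) := by
  haveI : NeZero k := ⟨hk0.ne'⟩
  ext μ
  simp only [mem_image, mem_filter, mem_range, mem_primitiveRoots hk0]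
  constructor
  · intro hμ
    obtain ⟨i, hik, hi⟩ := hζ.eq_pow_of_pow_eq_one hμ.pow_eq_one
    subst hi
    exact ⟨i, ⟨hik, ((hζ.pow_iff_coprime hk0 i).mp hμ).symm⟩, rfl⟩
  · rintro ⟨t, ⟨htk, htc⟩, rfl⟩
    exact hζ.pow_of_coprime t htc.symm

theorem prod_primroots {R : Type*} [CommRing R] [IsDomain R] {k : ℕ} (hk0 : 0 < k) {ζ : R}
    (hζ : IsPrimitiveRoot ζ k) {M : Type*} [CommMonoid M] (φ : R → M) :
    ∏ t ∈ (range k).filter k.Coprime, φ (ζ ^ t) = ∏ μ ∈ primitiveRoots k R, φ μ := by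
  classical
  rw [primroots_eq hk0 hζ, Finset.prod_image]
  intro i hi j hj hij
  exact hζ.pow_inj (mem_range.mp (mem_filter.mp hi).1) (mem_range.mp (mem_filter.mp hj).1) hij


theorem key_const {k : ℕ} (hk : 1 < k) (a : ℕ → ℤ) :
    ∃ N : ℤ, ∀ (A : Type) (_ : CommRing A) (x : A), x ^ k = 1 →
      Polynomial.aeval x (Polynomial.cyclotomic k ℤ) = 0 →
      ∏ t ∈ (range k).filter k.Coprime, Polynomial.aeval (x ^ t) (fpoly a k) = (N : A) := by
  classical
  have hk0 : 0 < k := by omega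
  haveI : NeZero k := ⟨by omega⟩
  set S := (range k).filter k.Coprime with hS
  set fp := fpoly a k with hfp
  set G := ∏ t ∈ S, fp.comp ((X : Polynomial ℤ) ^ t) with hG
  have hXk : (X ^ k - 1 : Polynomial ℤ).Monic := by
    have := monic_X_pow_sub_C (1 : ℤ) hk0.ne'
    simpa using this
  set Q := G %ₘ (X ^ k - 1) with hQ
  have hcycM : (Polynomial.cyclotomic k ℤ).Monic := cyclotomic.monic k ℤ
  set r := Q %ₘ (Polynomial.cyclotomic k ℤ) with hr
  have heval : ∀ (A : Type) (_ : CommRing A) (x : A), x ^ k = 1 →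
      Polynomial.aeval x (Polynomial.cyclotomic k ℤ) = 0 →
      Polynomial.aeval x r = ∏ t ∈ S, Polynomial.aeval (x ^ t) fp := by
    intro A _ x hx1 hxc
    have e1 : Polynomial.aeval x G = ∏ t ∈ S, Polynomial.aeval (x ^ t) fp := by
      rw [hG, map_prod]
      refine Finset.prod_congr rfl fun t _ => ?_
      rw [Polynomial.aeval_comp]
      simp
    have e2 : Polynomial.aeval x Q = Polynomial.aeval x G := by
      conv_rhs => rw [← Polynomial.modByMonic_add_div G (X ^ k - 1)]
      rw [map_add, map_mul, ← hQ]
      have h9 : Polynomial.aeval x ((X : Polynomial ℤ) ^ k - 1) = 0 := by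
        simp [hx1]
      rw [h9, zero_mul, add_zero]
    have e3 : Polynomial.aeval x r = Polynomial.aeval x Q := by
      conv_rhs => rw [← Polynomial.modByMonic_add_div Q (Polynomial.cyclotomic k ℤ)]
      rw [map_add, map_mul, ← hr, hxc, zero_mul, add_zero]
    rw [e3, e2, e1]
  have hrC : r = C (r.coeff 0) := by
    by_cases h0 : r = 0
    · rw [h0]; simp
    set c : ℂ := ∏ μ ∈ primitiveRoots k ℂ, Polynomial.aeval μ fp with hc
    have hval : ∀ μ ∈ primitiveRoots k ℂ, Polynomial.aeval μ r = c := by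
      intro μ hμ
      have hμp : IsPrimitiveRoot μ k := (mem_primitiveRoots hk0).mp hμ
      have hcyc0 : Polynomial.aeval μ (Polynomial.cyclotomic k ℤ) = 0 := by
        have := hμp.isRoot_cyclotomic hk0
        rw [Polynomial.IsRoot] at this
        rw [Polynomial.aeval_def, Polynomial.eval₂_eq_eval_map, algebraMap_int_eq,
          Polynomial.map_cyclotomic_int]
        exact this
      rw [heval ℂ _ μ hμp.pow_eq_one hcyc0, hc]
      exact prod_primroots hk0 hμp (fun ν => Polynomial.aeval ν fp)
    have hrr0 : r.map (Int.castRingHom ℂ) - C c = 0 := by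
      by_contra hne
      have hsub : primitiveRoots k ℂ ⊆ (r.map (Int.castRingHom ℂ) - C c).roots.toFinset := by
        intro μ hμ
        have hev : Polynomial.eval μ (r.map (Int.castRingHom ℂ)) = c := by
          rw [← algebraMap_int_eq, ← Polynomial.eval₂_eq_eval_map, ← Polynomial.aeval_def]
          exact hval μ hμ
        rw [Multiset.mem_toFinset, Polynomial.mem_roots hne]
        simp [Polynomial.IsRoot, hev]
      have hcard := Finset.card_le_card hsub
      rw [Complex.card_primitiveRoots] at hcard
      have h2 := (r.map (Int.castRingHom ℂ) - C c).roots.toFinset_card_le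
      have h3 := (r.map (Int.castRingHom ℂ) - C c).card_roots'
      have hdeg : (r.map (Int.castRingHom ℂ) - C c).natDegree < k.totient := by
        have hd1 : r.natDegree < k.totient := by
          have := Polynomial.degree_modByMonic_lt Q hcycM
          rw [← hr] at this
          have h5 := Polynomial.natDegree_lt_natDegree h0 this
          rwa [Polynomial.natDegree_cyclotomic] at h5
        calc (r.map (Int.castRingHom ℂ) - C c).natDegree
            ≤ max (r.map (Int.castRingHom ℂ)).natDegree (C c).natDegree :=
              Polynomial.natDegree_sub_le _ _
          _ ≤ max r.natDegree 0 :=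
              max_le_max Polynomial.natDegree_map_le (le_of_eq (Polynomial.natDegree_C c))
          _ = r.natDegree := by simp
          _ < k.totient := hd1
      omega
    have hmap : r.map (Int.castRingHom ℂ) = C c := by
      rwa [sub_eq_zero] at hrr0
    ext i
    rcases Nat.eq_zero_or_pos i with rfl | hi
    · simp
    · have := congrArg (fun P => Polynomial.coeff P i) hmap
      simp only [Polynomial.coeff_map, Int.coe_castRingHom] at this
      rw [Polynomial.coeff_C, if_neg hi.ne'] at this
      rw [Polynomial.coeff_C, if_neg hi.ne']
      exact_mod_cast this
  refine ⟨r.coeff 0, ?_⟩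
  intro A iA x hx1 hxc
  rw [← heval A iA x hx1 hxc, hrC]
  simp


theorem amgm {ι : Type*} (s : Finset ι) (hs : s.Nonempty) (z : ι → ℝ)
    (hz : ∀ i ∈ s, 0 ≤ z i) :
    ∏ i ∈ s, z i ≤ ((∑ i ∈ s, z i) / s.card) ^ (s.card : ℕ) := by
  have hc : (0:ℝ) < s.card := by
    exact_mod_cast Finset.card_pos.mpr hs
  have h := Real.geom_mean_le_arith_mean_weighted s (fun _ => 1 / (s.card:ℝ)) z
    (fun i _ => by positivity) (by rw [Finset.sum_const, nsmul_eq_mul]; field_simp) hz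
  have hL : ∏ i ∈ s, z i ^ (1/(s.card:ℝ)) = (∏ i ∈ s, z i) ^ (1/(s.card:ℝ)) :=
    Real.finset_prod_rpow s z hz _
  have hR : ∑ i ∈ s, (1/(s.card:ℝ)) * z i = (∑ i ∈ s, z i) / s.card := by
    rw [← Finset.mul_sum]; ring
  rw [hL, hR] at h
  have hprod0 : 0 ≤ ∏ i ∈ s, z i := Finset.prod_nonneg hz
  have h2 := pow_le_pow_left₀ (Real.rpow_nonneg hprod0 _) h s.card
  calc ∏ i ∈ s, z i
      = (((∏ i ∈ s, z i) ^ (1/(s.card:ℝ))) ^ (s.card:ℕ)) := by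
        rw [← Real.rpow_natCast ((∏ i ∈ s, z i) ^ (1/(s.card:ℝ))) s.card, ← Real.rpow_mul hprod0]
        rw [one_div, inv_mul_cancel₀ hc.ne', Real.rpow_one]
    _ ≤ ((∑ i ∈ s, z i) / s.card) ^ (s.card:ℕ) := h2

theorem parseval {k : ℕ} (hk0 : 0 < k) {ζ : ℂ} (hζ : IsPrimitiveRoot ζ k) (a : ℕ → ℤ) :
    ∑ j ∈ range k, Complex.normSq (∑ i ∈ range k, (a i : ℂ) * (ζ ^ j) ^ i)
      = k * ∑ i ∈ range k, (a i : ℝ) ^ 2 := by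
  have hζ0 : ζ ≠ 0 := hζ.ne_zero hk0.ne'
  have hnormsq : ζ * (starRingEnd ℂ) ζ = 1 := by
    rw [Complex.mul_conj]
    norm_cast
    rw [← Complex.sq_norm]
    have h1 : ‖ζ‖ = 1 := hζ.norm'_eq_one hk0.ne'
    rw [h1]; norm_num
  have hconj : (starRingEnd ℂ) ζ = ζ⁻¹ := by
    field_simp
    linear_combination hnormsq
  have hgeom : ∀ u : ℂ, u ^ k = 1 → u ≠ 1 → ∑ j ∈ range k, u ^ j = 0 := by
    intro u hu hu1
    have hg := geom_sum_mul u k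
    rw [hu, sub_self] at hg
    rcases mul_eq_zero.mp hg with h | h
    · exact h
    · exact absurd (sub_eq_zero.mp h) hu1
  set A : ℕ → ℂ := fun j => ∑ i ∈ range k, (a i : ℂ) * (ζ ^ j) ^ i with hA
  have hconjsum : ∀ j, (starRingEnd ℂ) (A j) = ∑ i ∈ range k, (a i:ℂ) * ((ζ⁻¹) ^ i) ^ j := by
    intro j
    rw [hA, map_sum]
    refine Finset.sum_congr rfl fun i _ => ?_
    rw [map_mul, map_pow, map_pow, hconj, map_intCast, pow_right_comm]
  have main : ∑ j ∈ range k, (A j * (starRingEnd ℂ) (A j))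
      = (k : ℂ) * ∑ i ∈ range k, (a i:ℂ)^2 := by
    have expand : ∀ j, A j * (starRingEnd ℂ) (A j)
        = ∑ i ∈ range k, ∑ i' ∈ range k,
            ((a i:ℂ) * (a i':ℂ)) * ((ζ ^ i * (ζ⁻¹) ^ i') ^ j) := by
      intro j
      rw [hconjsum, hA, Finset.sum_mul_sum]
      refine Finset.sum_congr rfl fun i _ => Finset.sum_congr rfl fun i' _ => ?_
      rw [mul_pow, pow_right_comm ζ j i]
      ring
    calc ∑ j ∈ range k, (A j * (starRingEnd ℂ) (A j))
        = ∑ j ∈ range k, ∑ i ∈ range k, ∑ i' ∈ range k,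
            ((a i:ℂ) * (a i':ℂ)) * ((ζ ^ i * (ζ⁻¹) ^ i') ^ j) :=
          Finset.sum_congr rfl fun j _ => expand j
      _ = ∑ i ∈ range k, ∑ i' ∈ range k,
            ((a i:ℂ) * (a i':ℂ)) * ∑ j ∈ range k, ((ζ ^ i * (ζ⁻¹) ^ i') ^ j) := by
          rw [Finset.sum_comm]
          refine Finset.sum_congr rfl fun i _ => ?_
          rw [Finset.sum_comm]
          refine Finset.sum_congr rfl fun i' _ => ?_
          rw [Finset.mul_sum]
      _ = ∑ i ∈ range k, (a i:ℂ)^2 * k := by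
          refine Finset.sum_congr rfl fun i hi => ?_
          rw [Finset.sum_eq_single i]
          · have hu1 : ζ ^ i * (ζ⁻¹) ^ i = 1 := by
              rw [inv_pow, mul_inv_cancel₀ (pow_ne_zero i hζ0)]
            rw [hu1]
            simp only [one_pow, Finset.sum_const, Finset.card_range, nsmul_eq_mul, mul_one]
            ring
          · intro i' hi' hne
            have hu : (ζ ^ i * (ζ⁻¹) ^ i') ^ k = 1 := by
              rw [mul_pow, ← pow_right_comm, hζ.pow_eq_one, one_pow, one_mul,
                ← pow_right_comm, inv_pow, hζ.pow_eq_one]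
              norm_num
            have hune : ζ ^ i * (ζ⁻¹) ^ i' ≠ 1 := by
              intro heq
              have : ζ ^ i = ζ ^ i' := by
                rw [inv_pow] at heq
                field_simp at heq
                exact heq
              exact hne (hζ.pow_inj (mem_range.mp hi') (mem_range.mp hi) this.symm)
            rw [hgeom _ hu hune, mul_zero]
          · intro h; exact absurd hi h
      _ = (k : ℂ) * ∑ i ∈ range k, (a i:ℂ)^2 := by
          rw [← Finset.sum_mul, mul_comm]
  have main' : ((∑ j ∈ range k, Complex.normSq (A j) : ℝ) : ℂ)
      = ((k * ∑ i ∈ range k, (a i : ℝ) ^ 2 : ℝ) : ℂ) := by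
    push_cast
    rw [← main]
    refine Finset.sum_congr rfl fun j _ => ?_
    rw [Complex.mul_conj]
  exact_mod_cast main'


section Witt

variable (p : ℕ) [hpf : Fact p.Prime] (F : Type) [Field F] [CharP F p] [PerfectRing F p]

theorem witt_dvd_of_coeff_zero (x : WittVector p F) (hx : x.coeff 0 = 0) :
    (p : WittVector p F) ∣ x := by
  by_cases hx0 : x = 0
  · rw [hx0]; exact dvd_zero _
  obtain ⟨m, b, hb0, rfl⟩ := WittVector.exists_eq_pow_p_mul x hx0
  cases m with
  | zero =>
      rw [pow_zero, one_mul] at hx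
      exact absurd hx hb0
  | succ m =>
      exact ⟨(p : WittVector p F) ^ m * b, by ring⟩

theorem witt_intCast_dvd (j : ℕ) (c : ℤ) (h : (p : WittVector p F) ^ j ∣ (c : WittVector p F)) :
    (p : ℤ) ^ j ∣ c := by
  induction j generalizing c with
  | zero => exact one_dvd _
  | succ j ih =>
      have hpc : (p : ℤ) ∣ c := by
        by_contra hnd
        have hc0 : (c : F) ≠ 0 := by
          rw [Ne, CharP.intCast_eq_zero_iff F p c]
          exact hnd
        obtain ⟨y, hy⟩ := dvd_trans (dvd_pow_self (p : WittVector p F) (Nat.succ_ne_zero j)) h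
        have := congrArg (WittVector.constantCoeff) hy
        rw [map_intCast, map_mul, map_natCast] at this
        rw [CharP.cast_eq_zero F p, zero_mul] at this
        exact hc0 this
      obtain ⟨c', rfl⟩ := hpc
      have hpW : (p : WittVector p F) ≠ 0 := WittVector.p_nonzero p F
      rw [pow_succ'] at h
      have hc' : ((p : ℤ) * c' : ℤ) = ((p : WittVector p F) * (c' : ℤ)) := by push_cast; ring
      rw [hc'] at h
      have h2 : (p : WittVector p F) ^ j ∣ (c' : WittVector p F) :=
        (mul_dvd_mul_iff_left hpW).mp h
      rw [pow_succ']
      exact mul_dvd_mul_left _ (ih c' h2)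

end Witt


end TransferAux

open TransferAux Polynomial Finset in
theorem transfer_eq (p n q e k : ℕ) (hp : p.Prime) (hn : 0 < n) (hq : q = p ^ n)
    (hk : 1 < k) (he : 1 < e) (hek : q = e * k + 1)
    (F : Type) [Field F] [Fintype F] (hF : Fintype.card F = q)
    (g : F) (hg : IsPrimitiveRoot g (q - 1))
    (a : ℕ → ℤ) (ζ : ℂ) (hζ : IsPrimitiveRoot ζ k)
    (hbound : ((((k : ℝ) / (Nat.totient k)) * ∑ i ∈ Finset.range k, (a i : ℝ) ^ 2)
        ^ ((Nat.totient k : ℝ) / (2 * (orderOf (p : ZMod k) : ℝ))) < p)) :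
    (∑ i ∈ Finset.range k, (a i : F) * (g ^ e) ^ i = 0)
      ↔ (∑ i ∈ Finset.range k, (a i : ℂ) * ζ ^ i = 0) := by
  classical
  have hk0 : 0 < k := by omega
  haveI : Fact p.Prime := ⟨hp⟩
  haveI : NeZero k := ⟨by omega⟩
  haveI hcharF : CharP F p := by
    obtain ⟨r, hr⟩ := CharP.exists F
    haveI := hr
    obtain ⟨m, hrp, hcardm⟩ := FiniteField.card F r
    have hpr : p = r := by
      have h1 : p ∣ r ^ (m : ℕ) := by
        rw [← hcardm, hF, hq]; exact dvd_pow_self p hn.ne'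
      exact (Nat.prime_dvd_prime_iff_eq hp hrp).mp (hp.dvd_of_dvd_pow h1)
    exact hpr ▸ hr
  have hq1 : q - 1 = e * k := by omega
  have hq1pos : 0 < q - 1 := by
    have := Nat.mul_pos (by omega : 0 < e) hk0; omega
  have hβ : IsPrimitiveRoot (g ^ e) k := hg.pow hq1pos hq1
  have horderβ : orderOf (g ^ e) = k := hβ.eq_orderOf.symm
  have hpk : ¬ p ∣ k := by
    intro hdvd
    have hk_dvd : k ∣ q - 1 := ⟨e, by rw [hq1]; ring⟩
    have h1 : p ∣ q - 1 := hdvd.trans hk_dvd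
    have h2 : p ∣ q := by rw [hq]; exact dvd_pow_self p hn.ne'
    have h3 : p ∣ 1 := by
      have h4 := Nat.dvd_sub h2 h1
      rwa [Nat.sub_sub_self (by omega : 1 ≤ q)] at h4
    have h5 := Nat.dvd_one.mp h3
    have := hp.one_lt
    omega
  have hcop : Nat.Coprime p k := (Nat.Prime.coprime_iff_not_dvd hp).mpr hpk
  haveI : NeZero (k : F) := NeZero.of_not_dvd F hpk
  have hpn1 : ((p : ZMod k)) ^ n = 1 := by
    have h1 : ((q : ℕ) : ZMod k) = 1 := by
      rw [hek]; push_cast [ZMod.natCast_self]; ring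
    rw [hq] at h1; push_cast at h1; exact h1
  have hdpos : 0 < orderOf (p : ZMod k) :=
    orderOf_pos_iff.mpr (isOfFinOrder_iff_pow_eq_one.mpr ⟨n, hn, hpn1⟩)
  set d := orderOf (p : ZMod k) with hd
  obtain ⟨N, hN⟩ := key_const hk a
  have haevalC : ∀ (R : Type) (_ : CommRing R) (_ : IsDomain R) (μ : R), IsPrimitiveRoot μ k →
      Polynomial.aeval μ (Polynomial.cyclotomic k ℤ) = 0 := by
    intro R _ _ μ hμ
    have h6 := hμ.isRoot_cyclotomic hk0
    rw [Polynomial.IsRoot] at h6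
    rw [Polynomial.aeval_def, Polynomial.eval₂_eq_eval_map, algebraMap_int_eq,
      Polynomial.map_cyclotomic_int]
    exact h6
  constructor
  · intro hzF
    by_contra hzC
    have hfzC : Polynomial.aeval ζ (fpoly a k) ≠ 0 := by
      rw [aeval_fpoly]; exact hzC
    have hzF' : Polynomial.aeval (g ^ e) (fpoly a k) = 0 := by
      rw [aeval_fpoly]; exact hzF
    have hfactor : ∀ t ∈ (range k).filter k.Coprime,
        Polynomial.aeval (ζ ^ t) (fpoly a k) ≠ 0 := by
      intro t ht h0
      have htc : k.Coprime t := (mem_filter.mp ht).2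
      have hζt : IsPrimitiveRoot (ζ ^ t) k := hζ.pow_of_coprime t htc.symm
      have hmin : Polynomial.cyclotomic k ℤ = minpoly ℤ (ζ ^ t) :=
        Polynomial.cyclotomic_eq_minpoly hζt hk0
      have hdvd : minpoly ℤ (ζ ^ t) ∣ (fpoly a k) :=
        minpoly.isIntegrallyClosed_dvd (hζt.isIntegral hk0) h0
      rw [← hmin] at hdvd
      obtain ⟨s, hs⟩ := hdvd
      apply hfzC
      rw [hs, map_mul, haevalC ℂ inferInstance inferInstance ζ hζ, zero_mul]
    have hNC : (N : ℂ) = ∏ t ∈ (range k).filter k.Coprime,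
        Polynomial.aeval (ζ ^ t) (fpoly a k) :=
      (hN ℂ inferInstance ζ hζ.pow_eq_one (haevalC ℂ inferInstance inferInstance ζ hζ)).symm
    have hN0 : N ≠ 0 := by
      intro h0
      rw [h0] at hNC
      exact (Finset.prod_ne_zero_iff.mpr hfactor) (by exact_mod_cast hNC.symm)
    -- Witt vector side
    haveI : ExpChar F p := ExpChar.prime hp
    haveI : PerfectRing F p := inferInstance
    set τβ : WittVector p F := WittVector.teichmuller p (g ^ e) with hτβ
    have hτβk : τβ ^ k = 1 := by
      rw [hτβ, ← map_pow, hβ.pow_eq_one, map_one]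
    have hcycW : Polynomial.aeval τβ (Polynomial.cyclotomic k ℤ) = 0 := by
      have hprod : ∏ i ∈ Nat.divisors k,
          Polynomial.aeval τβ (Polynomial.cyclotomic i ℤ) = 0 := by
        rw [← map_prod, Polynomial.prod_cyclotomic_eq_X_pow_sub_one hk0]
        simp [hτβk]
      obtain ⟨i, hi, hi0⟩ := Finset.prod_eq_zero_iff.mp hprod
      obtain ⟨hidvd, -⟩ := Nat.mem_divisors.mp hi
      have hconst : Polynomial.aeval (g ^ e) (Polynomial.cyclotomic i ℤ) = 0 := by
        have h5 := congrArg (WittVector.constantCoeff) hi0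
        rw [aeval_ringHom_comm, map_zero] at h5
        have h6 : WittVector.constantCoeff τβ = g ^ e := by
          rw [hτβ, WittVector.constantCoeff_apply, WittVector.teichmuller_coeff_zero]
        rwa [h6] at h5
      have hpi : ¬ p ∣ i := fun hpi => hpk (hpi.trans hidvd)
      haveI : NeZero (i : F) := NeZero.of_not_dvd F hpi
      have hevF : Polynomial.IsRoot (Polynomial.cyclotomic i F) (g ^ e) := by
        rw [Polynomial.IsRoot, ← Polynomial.map_cyclotomic_int i F, Polynomial.eval_map,
          ← algebraMap_int_eq, ← Polynomial.aeval_def]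
        exact hconst
      have hprim : IsPrimitiveRoot (g ^ e) i := Polynomial.isRoot_cyclotomic_iff.mp hevF
      have hik : i = k := hprim.eq_orderOf.trans horderβ
      rwa [hik] at hi0
    have hNW : ((N : ℤ) : WittVector p F) = ∏ t ∈ (range k).filter k.Coprime,
        Polynomial.aeval (τβ ^ t) (fpoly a k) :=
      (hN (WittVector p F) inferInstance τβ hτβk hcycW).symm
    have hDS : ((range d).image (fun i => p ^ i % k)) ⊆ (range k).filter k.Coprime := by
      intro t ht
      obtain ⟨i, _, rfl⟩ := Finset.mem_image.mp ht
      rw [mem_filter, mem_range]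
      refine ⟨Nat.mod_lt _ hk0, ?_⟩
      have h1 : Nat.gcd k (p ^ i) = 1 := Nat.Coprime.pow_right i hcop.symm
      have h2 : Nat.gcd (p ^ i % k) k = 1 := by rw [← Nat.gcd_rec]; exact h1
      show Nat.Coprime k (p ^ i % k)
      rw [Nat.Coprime, Nat.gcd_comm]; exact h2
    have hcardD : ((range d).image (fun i => p ^ i % k)).card = d := by
      rw [Finset.card_image_of_injOn, Finset.card_range]
      intro i hi j hj hij
      simp only [coe_range, Set.mem_Iio] at hi hj
      have hij' : p ^ i % k = p ^ j % k := hij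
      set u : (ZMod k)ˣ := ZMod.unitOfCoprime p hcop with hu
      have hcast : ∀ i : ℕ, ((p ^ i % k : ℕ) : ZMod k) = (u : ZMod k) ^ i := by
        intro i
        rw [ZMod.natCast_mod]
        push_cast
        rw [ZMod.coe_unitOfCoprime]
      have hpow : u ^ i = u ^ j := by
        apply Units.ext
        rw [Units.val_pow_eq_pow_val, Units.val_pow_eq_pow_val, ← hcast i, ← hcast j, hij']
      have horder : orderOf u = d := by
        rw [hd, ← ZMod.coe_unitOfCoprime p hcop, orderOf_units, hu]
      exact pow_injOn_Iio_orderOf (by rw [Set.mem_Iio, horder]; exact hi)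
        (by rw [Set.mem_Iio, horder]; exact hj) hpow
    have hdvdt : ∀ t ∈ ((range d).image (fun i => p ^ i % k)),
        (p : WittVector p F) ∣ Polynomial.aeval (τβ ^ t) (fpoly a k) := by
      intro t ht
      obtain ⟨i, _, rfl⟩ := Finset.mem_image.mp ht
      apply witt_dvd_of_coeff_zero
      have h6 : WittVector.constantCoeff (τβ ^ (p ^ i % k)) = (g ^ e) ^ (p ^ i % k) := by
        rw [map_pow, hτβ, WittVector.constantCoeff_apply, WittVector.teichmuller_coeff_zero]
      have h1 : WittVector.constantCoeff (Polynomial.aeval (τβ ^ (p ^ i % k)) (fpoly a k))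
          = Polynomial.aeval ((g ^ e) ^ (p ^ i % k)) (fpoly a k) := by
        rw [aeval_ringHom_comm, h6]
      have h2 : ((g ^ e) ^ (p ^ i % k)) = (g ^ e) ^ (p ^ i) := by
        rw [← horderβ]
        exact pow_mod_orderOf _ _
      have h3 : Polynomial.aeval ((g ^ e) ^ (p ^ i)) (fpoly a k) = 0 := by
        have h4 : ((g ^ e) ^ (p ^ i)) = iterateFrobenius F p i (g ^ e) := by
          rw [iterateFrobenius_def]
        rw [h4, ← aeval_ringHom_comm (iterateFrobenius F p i) (g ^ e), hzF', map_zero]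
      have h5 := h1.trans (h2 ▸ h3)
      rwa [WittVector.constantCoeff_apply] at h5
    have hdvdN : (p : ℤ) ^ d ∣ N := by
      apply witt_intCast_dvd p F d N
      rw [hNW]
      calc (p : WittVector p F) ^ d
          = ∏ _t ∈ ((range d).image (fun i => p ^ i % k)), (p : WittVector p F) := by
            rw [Finset.prod_const, hcardD]
        _ ∣ ∏ t ∈ ((range d).image (fun i => p ^ i % k)),
              Polynomial.aeval (τβ ^ t) (fpoly a k) :=
            Finset.prod_dvd_prod_of_dvd _ _ hdvdt
        _ ∣ ∏ t ∈ (range k).filter k.Coprime, Polynomial.aeval (τβ ^ t) (fpoly a k) :=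
            Finset.prod_dvd_prod_of_subset _ _ _ hDS
    -- size bounds
    have hcardS : ((range k).filter k.Coprime).card = k.totient := by
      rw [Nat.totient_eq_card_coprime]
    have hSne : ((range k).filter k.Coprime).Nonempty :=
      Finset.card_pos.mp (by rw [hcardS]; exact Nat.totient_pos.mpr hk0)
    have hTnn : (0:ℝ) ≤ ∑ i ∈ range k, (a i : ℝ) ^ 2 :=
      Finset.sum_nonneg fun i _ => sq_nonneg _
    have hsub_le : ∑ t ∈ (range k).filter k.Coprime,
        Complex.normSq (Polynomial.aeval (ζ ^ t) (fpoly a k))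
        ≤ (k:ℝ) * ∑ i ∈ range k, (a i : ℝ) ^ 2 := by
      rw [← parseval hk0 hζ a]
      have h7 := Finset.sum_le_sum_of_subset_of_nonneg
        (Finset.filter_subset k.Coprime (range k))
        (fun i _ _ => Complex.normSq_nonneg (∑ i' ∈ range k, (a i' : ℂ) * (ζ ^ i) ^ i'))
      simpa only [aeval_fpoly] using h7
    have hprodle : ∏ t ∈ (range k).filter k.Coprime,
        Complex.normSq (Polynomial.aeval (ζ ^ t) (fpoly a k))
        ≤ (((k:ℝ) * ∑ i ∈ range k, (a i : ℝ) ^ 2) / (k.totient : ℝ)) ^ (k.totient : ℕ) := by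
      calc ∏ t ∈ (range k).filter k.Coprime,
            Complex.normSq (Polynomial.aeval (ζ ^ t) (fpoly a k))
          ≤ ((∑ t ∈ (range k).filter k.Coprime,
              Complex.normSq (Polynomial.aeval (ζ ^ t) (fpoly a k)))
                / ((range k).filter k.Coprime).card) ^ (((range k).filter k.Coprime).card : ℕ) :=
            amgm _ hSne _ (fun i _ => Complex.normSq_nonneg _)
        _ ≤ (((k:ℝ) * ∑ i ∈ range k, (a i : ℝ) ^ 2) / (k.totient : ℝ)) ^ (k.totient : ℕ) := by
            rw [hcardS]
            apply pow_le_pow_left₀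
            · exact div_nonneg (Finset.sum_nonneg fun i _ => Complex.normSq_nonneg _)
                (by positivity)
            · gcongr
    have hNsq : (N:ℝ)^2 = ∏ t ∈ (range k).filter k.Coprime,
        Complex.normSq (Polynomial.aeval (ζ ^ t) (fpoly a k)) := by
      calc (N:ℝ)^2 = Complex.normSq ((N:ℤ):ℂ) := by
            rw [Complex.normSq_intCast]; push_cast; ring
        _ = ∏ t ∈ (range k).filter k.Coprime,
            Complex.normSq (Polynomial.aeval (ζ ^ t) (fpoly a k)) := by
            rw [hNC, map_prod]
    have hNlow : ((p:ℝ)^d)^2 ≤ (N:ℝ)^2 := by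
      have h1 : (p:ℤ)^d ≤ |N| := Int.le_of_dvd (abs_pos.mpr hN0) ((dvd_abs _ _).mpr hdvdN)
      have h2 : ((p:ℝ)^d) ≤ |(N:ℝ)| := by
        rw [← Int.cast_abs]
        exact_mod_cast h1
      calc ((p:ℝ)^d)^2 ≤ |(N:ℝ)|^2 := pow_le_pow_left₀ (by positivity) h2 2
        _ = (N:ℝ)^2 := sq_abs _
    have h2d : (0:ℝ) < 2 * (d:ℝ) := by
      have : (0:ℝ) < (d:ℝ) := by exact_mod_cast hdpos
      linarith
    have hBnn : (0:ℝ) ≤ (k:ℝ)/(k.totient:ℝ) * ∑ i ∈ range k, (a i:ℝ)^2 := by positivity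
    have h1 := Real.rpow_lt_rpow (Real.rpow_nonneg hBnn _) hbound h2d
    have hL : ((((k:ℝ)/(k.totient:ℝ) * ∑ i ∈ range k, (a i:ℝ)^2)
          ^ ((k.totient:ℝ)/(2*(d:ℝ)))) ^ (2*(d:ℝ)))
        = ((k:ℝ)/(k.totient:ℝ) * ∑ i ∈ range k, (a i:ℝ)^2) ^ (k.totient : ℕ) := by
      rw [← Real.rpow_natCast _ k.totient, ← Real.rpow_mul hBnn,
        div_mul_cancel₀ _ h2d.ne']
    have hR : (p:ℝ) ^ (2*(d:ℝ)) = ((p:ℝ)^d)^2 := by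
      rw [show (2*(d:ℝ)) = (((2*d : ℕ)):ℝ) by push_cast; ring, Real.rpow_natCast,
        mul_comm 2 d, pow_mul]
    rw [hL, hR] at h1
    have hchain : ((p:ℝ)^d)^2 < ((p:ℝ)^d)^2 := by
      calc ((p:ℝ)^d)^2 ≤ (N:ℝ)^2 := hNlow
        _ = ∏ t ∈ (range k).filter k.Coprime,
            Complex.normSq (Polynomial.aeval (ζ ^ t) (fpoly a k)) := hNsq
        _ ≤ (((k:ℝ) * ∑ i ∈ range k, (a i : ℝ) ^ 2) / (k.totient : ℝ)) ^ (k.totient : ℕ) :=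
            hprodle
        _ = ((k:ℝ)/(k.totient:ℝ) * ∑ i ∈ range k, (a i:ℝ)^2) ^ (k.totient : ℕ) := by
            congr 1
            ring
        _ < ((p:ℝ)^d)^2 := h1
    exact lt_irrefl _ hchain
  · intro hzC
    have hfzC : Polynomial.aeval ζ (fpoly a k) = 0 := by
      rw [aeval_fpoly]; exact hzC
    have hmin : Polynomial.cyclotomic k ℤ = minpoly ℤ ζ :=
      Polynomial.cyclotomic_eq_minpoly hζ hk0
    have hdvd : Polynomial.cyclotomic k ℤ ∣ (fpoly a k) := by
      rw [hmin]; exact minpoly.isIntegrallyClosed_dvd (hζ.isIntegral hk0) hfzC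
    obtain ⟨s, hs⟩ := hdvd
    have h8 : Polynomial.aeval (g ^ e) (fpoly a k) = 0 := by
      rw [hs, map_mul, haevalC F inferInstance inferInstance (g ^ e) hβ, zero_mul]
    rw [← aeval_fpoly a k (g ^ e)]
    exact h8
end

section
/- Let ζ_k be a primitive k-th root of unity in ℂ and let a, b be integers with ζ_k^a ≠ 1. If 1 + ζ_k^a - ζ_k^b = 0, then 6 divides k and (a mod k, b mod k) ∈ {(k/3, k/6), (2k/3, 5k/6)}. -/
theorem vanishing_three_terms (k : ℕ) (hk : 0 < k) (ζ : ℂ)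
    (hζ : IsPrimitiveRoot ζ k) (a b : ℤ) (ha : ζ ^ a ≠ 1)
    (h : 1 + ζ ^ a - ζ ^ b = 0) :
    6 ∣ k ∧
      ((a % (k : ℤ) = (k : ℤ) / 3 ∧ b % (k : ℤ) = (k : ℤ) / 6) ∨
        (a % (k : ℤ) = 2 * (k : ℤ) / 3 ∧ b % (k : ℤ) = 5 * (k : ℤ) / 6)) := by
  set z := ζ ^ a with hz
  set w := ζ ^ b with hw
  have hζ0 : ζ ≠ 0 := hζ.ne_zero hk.ne'
  have hz0 : z ≠ 0 := zpow_ne_zero _ hζ0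
  have hnζ : ‖ζ‖ = 1 := Complex.norm_eq_one_of_pow_eq_one hζ.pow_eq_one hk.ne'
  have hnz : ‖z‖ = 1 := by rw [hz, norm_zpow, hnζ, one_zpow]
  have hnw : ‖w‖ = 1 := by rw [hw, norm_zpow, hnζ, one_zpow]
  have hwz : w = 1 + z := by linear_combination -h
  have hcz : (starRingEnd ℂ) z = z⁻¹ := (Complex.inv_eq_conj hnz).symm
  have hmul : w * (starRingEnd ℂ) w = 1 := by
    rw [Complex.mul_conj]
    norm_cast
    rw [Complex.normSq_eq_norm_sq]
    simp [Complex.norm_def] at hnw ⊢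
    rw [hnw]; norm_num
  have hkey : z ^ 2 + z + 1 = 0 := by
    have hconjw : (starRingEnd ℂ) w = 1 + z⁻¹ := by
      rw [hwz, map_add, map_one, hcz]
    have h1 : (1 + z) * (1 + z⁻¹) = 1 :=
      calc (1 + z) * (1 + z⁻¹) = w * (starRingEnd ℂ) w := by rw [hconjw, hwz]
        _ = 1 := hmul
    have h2 : z * z⁻¹ = 1 := mul_inv_cancel₀ hz0
    linear_combination z * h1 - (1 + z) * h2
  have hz3 : z ^ 3 = 1 := by linear_combination (z - 1) * hkey
  have hw2 : w ^ 2 = z := by rw [hwz]; linear_combination hkey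
  have hw3 : w ^ 3 = -1 := by
    rw [hwz]; linear_combination (z + 2) * hkey
  have hw6 : w ^ 6 = 1 := by
    rw [show (6 : ℕ) = 3 * 2 from rfl, pow_mul, hw3]; norm_num
  -- divisibility facts
  have h3a : (k : ℤ) ∣ 3 * a := by
    rw [← hζ.zpow_eq_one_iff_dvd, mul_comm, zpow_mul]
    exact_mod_cast hz3
  have hna : ¬ (k : ℤ) ∣ a := fun hd => ha ((hζ.zpow_eq_one_iff_dvd a).mpr hd)
  have h6b : (k : ℤ) ∣ 6 * b := by
    rw [← hζ.zpow_eq_one_iff_dvd, mul_comm, zpow_mul]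
    exact_mod_cast hw6
  have hn3b : ¬ (k : ℤ) ∣ 3 * b := by
    intro hd
    have h1 : ζ ^ (3 * b) = 1 := (hζ.zpow_eq_one_iff_dvd _).mpr hd
    rw [mul_comm, zpow_mul] at h1
    have h2 : w ^ (3 : ℕ) = 1 := by exact_mod_cast h1
    rw [hw3] at h2
    norm_num at h2
  have h2ba : (k : ℤ) ∣ 2 * b - a := by
    rw [← hζ.zpow_eq_one_iff_dvd, zpow_sub₀ hζ0, mul_comm 2 b, zpow_mul]
    have h1 : (ζ ^ b) ^ (2 : ℤ) = z := by rw [← hw2, ← hw]; norm_cast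
    rw [h1, ← hz]
    exact mul_inv_cancel₀ hz0
  -- pass to residues
  set K : ℤ := (k : ℤ) with hK
  have hK0 : 0 < K := by rw [hK]; exact_mod_cast hk
  set r : ℤ := a % K with hr
  set s : ℤ := b % K with hs
  have hr0 : 0 ≤ r := Int.emod_nonneg a hK0.ne'
  have hrK : r < K := Int.emod_lt_of_pos a hK0
  have hs0 : 0 ≤ s := Int.emod_nonneg b hK0.ne'
  have hsK : s < K := Int.emod_lt_of_pos b hK0
  have har : K ∣ a - r := Int.dvd_self_sub_of_emod_eq rfl
  have hbs : K ∣ b - s := Int.dvd_self_sub_of_emod_eq rfl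
  have h3r : K ∣ 3 * r := by
    have h1 := Int.dvd_sub h3a (Dvd.dvd.mul_left har 3)
    simpa [mul_sub] using h1
  have hnr : ¬ K ∣ r := by
    intro hd'
    apply hna
    have h1 : K ∣ (a - r) + r := dvd_add har hd'
    simpa using h1
  have h6s : K ∣ 6 * s := by
    have h1 := Int.dvd_sub h6b (Dvd.dvd.mul_left hbs 6)
    simpa [mul_sub] using h1
  have hn3s : ¬ K ∣ 3 * s := by
    intro hd'
    apply hn3b
    have h1 : K ∣ 3 * (b - s) + 3 * s := dvd_add (Dvd.dvd.mul_left hbs 3) hd'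
    have h2 : 3 * (b - s) + 3 * s = 3 * b := by ring
    rwa [h2] at h1
  have h2sr : K ∣ 2 * s - r := by
    have h1 : K ∣ (2 * b - a) - 2 * (b - s) + (a - r) :=
      dvd_add (Int.dvd_sub h2ba (Dvd.dvd.mul_left hbs 2)) har
    have h2 : (2 * b - a) - 2 * (b - s) + (a - r) = 2 * s - r := by ring
    rwa [h2] at h1
  obtain ⟨c, hc⟩ := h3r
  have hc12 : c = 1 ∨ c = 2 := by
    have h1 : K * 0 ≤ K * c := by rw [← hc]; simpa using hr0
    have h2 : K * c < K * 3 := by rw [← hc]; omega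
    have hcpos : (0 : ℤ) ≤ c := le_of_mul_le_mul_left h1 hK0
    have hclt : c < 3 := lt_of_mul_lt_mul_left h2 hK0.le
    have hc0 : c ≠ 0 := by rintro rfl; exact hnr ⟨0, by omega⟩
    omega
  obtain ⟨d, hd⟩ := h6s
  have hd15 : d = 1 ∨ d = 3 ∨ d = 5 := by
    have h1 : K * 0 ≤ K * d := by rw [← hd]; simpa using hs0
    have h2 : K * d < K * 6 := by rw [← hd]; omega
    have hdpos : (0 : ℤ) ≤ d := le_of_mul_le_mul_left h1 hK0
    have hdlt : d < 6 := lt_of_mul_lt_mul_left h2 hK0.le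
    have hodd : ¬ 2 ∣ d := by
      rintro ⟨e, rfl⟩
      exact hn3s ⟨e, mul_left_cancel₀ two_ne_zero (by linear_combination hd)⟩
    omega
  obtain ⟨e, he⟩ := h2sr
  have he01 : e = 0 ∨ e = 1 := by
    have h1 : K * (-1) < K * e := by rw [← he]; linarith
    have h2 : K * e < K * 2 := by rw [← he]; linarith
    have he1 : (-1 : ℤ) < e := lt_of_mul_lt_mul_left h1 hK0.le
    have he2 : e < 2 := lt_of_mul_lt_mul_left h2 hK0.le
    omega
  have hrel : d = c + 3 * e := by
    have h1 : K * (2 * d) = K * (2 * c + 6 * e) := by linear_combination -2 * hd + 2 * hc + 6 * he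
    have h2 := mul_left_cancel₀ hK0.ne' h1
    omega
  have h6K : (6 : ℤ) ∣ K := by
    rcases hc12 with rfl | rfl <;> rcases hd15 with rfl | rfl | rfl <;> omega
  constructor
  · omega
  · rcases hc12 with rfl | rfl
    · left
      have hd1 : d = 1 := by omega
      subst hd1
      constructor <;> omega
    · right
      have hd5 : d = 5 := by omega
      subst hd5
      constructor <;> omega
end

section
/- Let ζ_k be a primitive k-th root of unity in ℂ and let a, b be integers with 0, a mod k, b mod k pairwise distinct. Then 1 + ζ_k^a - 2ζ_k^b ≠ 0. -/
theorem no_vanishing_one_two (k : ℕ) (hk : 0 < k) (ζ : ℂ)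
    (hζ : IsPrimitiveRoot ζ k) (a b : ℤ)
    (ha : a % (k : ℤ) ≠ 0) (hb : b % (k : ℤ) ≠ 0)
    (hab : a % (k : ℤ) ≠ b % (k : ℤ)) :
    1 + ζ ^ a - 2 * ζ ^ b ≠ 0 := by
  intro h
  have habs : ‖ζ‖ = 1 :=
    Complex.norm_eq_one_of_pow_eq_one hζ.pow_eq_one hk.ne'
  have hza : ‖ζ ^ a‖ = 1 := by
    rw [norm_zpow, habs, one_zpow]
  have hzb : ‖ζ ^ b‖ = 1 := by
    rw [norm_zpow, habs, one_zpow]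
  have heq : (1 : ℂ) + ζ ^ a = 2 * ζ ^ b := by linear_combination h
  have habs2 : ‖1 + ζ ^ a‖ = 2 := by
    rw [heq, norm_mul, hzb]
    simp
  -- deduce ζ^a = 1
  set z := ζ ^ a with hz
  have hsq : Complex.normSq (1 + z) = 4 := by
    have : ‖1 + z‖ ^ 2 = 2 ^ 2 := by rw [habs2]
    rw [Complex.sq_norm] at this; linarith
  have hsq1 : Complex.normSq z = 1 := by
    have : ‖z‖ ^ 2 = 1 ^ 2 := by rw [hza]
    rw [Complex.sq_norm] at this; linarith
  have hre : z.re = 1 := by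
    have h1 : (1 + z).re ^ 2 + (1 + z).im ^ 2 = 4 := by
      simpa [Complex.normSq_apply, pow_two] using hsq
    have h2 : z.re ^ 2 + z.im ^ 2 = 1 := by
      simpa [Complex.normSq_apply, pow_two] using hsq1
    simp only [Complex.add_re, Complex.add_im, Complex.one_re, Complex.one_im] at h1
    nlinarith
  have him : z.im = 0 := by
    have h2 : z.re ^ 2 + z.im ^ 2 = 1 := by
      simpa [Complex.normSq_apply, pow_two] using hsq1
    nlinarith
  have hz1 : z = 1 := Complex.ext (by simp [hre]) (by simp [him])
  have : (k : ℤ) ∣ a := (hζ.zpow_eq_one_iff_dvd a).mp hz1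
  exact ha (Int.emod_eq_zero_of_dvd this)
end

section
/- Let q be a power of a prime p, and let e, k be divisors of q-1 with e, k > 1 and q = ek+1. Suppose p > (3k/φ(k))^{φ(k)/(2·ord_k(p))}, k is not divisible by 6, and 2 is not an e-th power residue in 𝔽_q. Then there are no x, y ∈ 𝔽_q which are both nonzero e-th powers satisfying 1 + x = y; i.e., the cyclotomic number (0,0) of order e equals 0. -/
open Polynomial NumberField

set_option maxHeartbeats 1000000
set_option synthInstance.maxHeartbeats 400000

lemma aux_abs_one {k : ℕ} (hk : 0 < k) {X : ℂ} (h : X ^ k = 1) : ‖X‖ = 1 := by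
  have h1 : ‖X‖ ^ k = 1 := by rw [← norm_pow, h, norm_one]
  have h0 : 0 ≤ ‖X‖ := norm_nonneg X
  rcases lt_trichotomy ‖X‖ 1 with hlt | heq | hgt
  · exact absurd h1 (by nlinarith [pow_lt_one₀ h0 hlt hk.ne'])
  · exact heq
  · exact absurd h1 (by nlinarith [one_lt_pow₀ hgt hk.ne'])

lemma aux_geom_sum {k : ℕ} (hk : 0 < k) {ω : ℂ} (hω : IsPrimitiveRoot ω k) {c : ℤ}
    (hc : ¬ ((k : ℤ) ∣ c)) : ∑ j ∈ Finset.range k, (ω ^ c) ^ j = 0 := by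
  have hne : ω ^ c ≠ 1 := fun h => hc ((hω.zpow_eq_one_iff_dvd c).mp h)
  rw [geom_sum_eq hne]
  have : (ω ^ c) ^ k = 1 := by
    rw [← zpow_natCast (ω ^ c) k, ← zpow_mul, mul_comm, zpow_mul, zpow_natCast, hω.pow_eq_one,
      one_zpow]
  rw [this]
  simp

lemma aux_abs_one_dup {k : ℕ} (hk : 0 < k) {X : ℂ} (h : X ^ k = 1) : ‖X‖ = 1 := by
  have h1 : ‖X‖ ^ k = 1 := by rw [← norm_pow, h, norm_one]
  have h0 : 0 ≤ ‖X‖ := norm_nonneg X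
  rcases lt_trichotomy ‖X‖ 1 with hlt | heq | hgt
  · exact absurd h1 (by nlinarith [pow_lt_one₀ h0 hlt hk.ne'])
  · exact heq
  · exact absurd h1 (by nlinarith [one_lt_pow₀ hgt hk.ne'])

lemma aux_sum_normSq {k : ℕ} (hk : 0 < k) {ω : ℂ} (hω : IsPrimitiveRoot ω k) {a b : ℤ}
    (ha : ¬ ((k : ℤ) ∣ a)) (hb : ¬ ((k : ℤ) ∣ b)) (hab : ¬ ((k : ℤ) ∣ (b - a))) :
    ∑ j ∈ Finset.range k, Complex.normSq ((ω ^ b) ^ j - (ω ^ a) ^ j - 1) = 3 * k := by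
  have hω0 : ω ≠ 0 := hω.ne_zero hk.ne'
  have haω : ‖ω‖ = 1 := aux_abs_one_dup hk hω.pow_eq_one
  have hconj : (starRingEnd ℂ) ω = ω⁻¹ := (Complex.inv_eq_conj haω).symm
  have hmul : ∀ (s t : ℤ) (j : ℕ), (ω ^ s) ^ j * (ω ^ t) ^ j = (ω ^ (s + t)) ^ j := by
    intro s t j
    rw [← mul_pow, ← zpow_add₀ hω0]
  have hconjpow : ∀ (s : ℤ) (j : ℕ),
      (starRingEnd ℂ) ((ω ^ s) ^ j) = (ω ^ (-s)) ^ j := by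
    intro s j
    rw [map_pow, map_zpow₀, hconj, inv_zpow, ← zpow_neg]
  have key : ∀ j : ℕ, (Complex.normSq ((ω ^ b) ^ j - (ω ^ a) ^ j - 1) : ℂ)
      = (ω ^ (b + -b)) ^ j - (ω ^ (b + -a)) ^ j - (ω ^ b) ^ j
        - (ω ^ (a + -b)) ^ j + (ω ^ (a + -a)) ^ j + (ω ^ a) ^ j
        - (ω ^ (-b)) ^ j + (ω ^ (-a)) ^ j + 1 := by
    intro j
    rw [← Complex.mul_conj]
    simp only [map_sub, map_one, hconjpow]
    rw [← hmul b (-b), ← hmul b (-a), ← hmul a (-b), ← hmul a (-a)]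
    ring
  have cast_eq : (↑(∑ j ∈ Finset.range k, Complex.normSq ((ω ^ b) ^ j - (ω ^ a) ^ j - 1)) : ℂ)
      = 3 * k := by
    push_cast
    rw [Finset.sum_congr rfl (fun j _ => key j)]
    simp only [Finset.sum_add_distrib, Finset.sum_sub_distrib]
    rw [aux_geom_sum hk hω (c := b + -a) (by rwa [← sub_eq_add_neg]),
      aux_geom_sum hk hω hb, aux_geom_sum hk hω ha,
      aux_geom_sum hk hω (c := a + -b) (by rw [← sub_eq_add_neg]; rw [← dvd_neg]; simpa),
      aux_geom_sum hk hω (c := -b) (by rwa [dvd_neg]),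
      aux_geom_sum hk hω (c := -a) (by rwa [dvd_neg])]
    simp only [add_neg_cancel, zpow_zero, one_pow, Finset.sum_const, Finset.card_range,
      nsmul_eq_mul, mul_one]
    ring
  exact_mod_cast cast_eq


lemma aux_amgm {ι : Type*} (s : Finset ι) (f : ι → ℝ) (hf : ∀ i ∈ s, 0 ≤ f i) {B : ℝ}
    (hB : 0 ≤ B) (hsum : ∑ i ∈ s, f i ≤ B * s.card) (hcard : 0 < s.card) :
    ∏ i ∈ s, f i ≤ B ^ s.card := by
  set n : ℕ := s.card with hn_def
  have hn : (0:ℝ) < n := by exact_mod_cast hcard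
  have h1 : ∏ i ∈ s, (f i) ^ ((n:ℝ)⁻¹) ≤ ∑ i ∈ s, (n:ℝ)⁻¹ * f i :=
    Real.geom_mean_le_arith_mean_weighted s (fun _ => (n:ℝ)⁻¹) f
      (fun i _ => by positivity)
      (by rw [Finset.sum_const, nsmul_eq_mul]; exact mul_inv_cancel₀ hn.ne')
      hf
  have h2 : ∑ i ∈ s, (n:ℝ)⁻¹ * f i ≤ B := by
    rw [← Finset.mul_sum]
    rw [inv_mul_le_iff₀ hn]
    linarith [hsum]
  have h3 : ∏ i ∈ s, (f i) ^ ((n:ℝ)⁻¹) ≤ B := h1.trans h2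
  have h4 : (∏ i ∈ s, (f i) ^ ((n:ℝ)⁻¹)) ^ n ≤ B ^ n :=
    pow_le_pow_left₀ (Finset.prod_nonneg fun i hi => Real.rpow_nonneg (hf i hi) _) h3 n
  calc ∏ i ∈ s, f i = (∏ i ∈ s, (f i) ^ ((n:ℝ)⁻¹)) ^ n := by
        rw [← Finset.prod_pow]
        apply Finset.prod_congr rfl
        intro i hi
        rw [← Real.rpow_natCast ((f i) ^ ((n:ℝ)⁻¹)) n, ← Real.rpow_mul (hf i hi),
          inv_mul_cancel₀ hn.ne', Real.rpow_one]
    _ ≤ B ^ n := h4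


lemma aux_six_dvd {k : ℕ} (hk : 0 < k) {X Y : ℂ} (hX : X ^ k = 1) (hY : Y ^ k = 1)
    (hrel : Y = 1 + X) : 6 ∣ k := by
  have haX : ‖X‖ = 1 := aux_abs_one hk hX
  have haY : ‖Y‖ = 1 := aux_abs_one hk hY
  have hnX : Complex.normSq X = 1 := by
    have := Complex.sq_norm X; rw [haX] at this; simpa using this.symm
  have hnY : Complex.normSq Y = 1 := by
    have := Complex.sq_norm Y; rw [haY] at this; simpa using this.symm
  rw [hrel] at hnY
  rw [Complex.normSq_apply] at hnX hnY
  simp only [Complex.add_re, Complex.add_im, Complex.one_re, Complex.one_im] at hnY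
  have hre : X.re = -(1/2) := by nlinarith
  have him : X.im ^ 2 = 3/4 := by nlinarith
  have hX2 : X ^ 2 + X + 1 = 0 := by
    apply Complex.ext
    · simp only [pow_two, Complex.add_re, Complex.mul_re, Complex.one_re, Complex.zero_re]
      nlinarith
    · simp only [pow_two, Complex.add_im, Complex.mul_im, Complex.one_im, Complex.zero_im]
      nlinarith
  have hX3 : X ^ 3 = 1 := by linear_combination (X - 1) * hX2
  have h2 : 2 ∣ k := by
    by_contra h2
    have hodd : Odd k := Nat.odd_iff.mpr (Nat.two_dvd_ne_zero.mp h2)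
    have hYX : Y = -X ^ 2 := by rw [hrel]; linear_combination hX2
    have : Y ^ k = -1 := by
      rw [hYX, hodd.neg_pow, ← pow_mul, mul_comm 2 k, pow_mul, hX, one_pow]
    rw [hY] at this
    norm_num at this
  have h3 : 3 ∣ k := by
    by_contra h3
    have hco : Nat.Coprime 3 k := (Nat.Prime.coprime_iff_not_dvd (by norm_num)).mpr h3
    have h1 : X ^ Nat.gcd 3 k = 1 := pow_gcd_eq_one.mpr ⟨hX3, hX⟩
    rw [hco] at h1
    rw [pow_one] at h1
    rw [h1] at hX2
    norm_num at hX2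
  exact (Nat.coprime_primes (by norm_num) (by norm_num)).mpr (by norm_num) |>.mul_dvd_of_dvd_of_dvd h2 h3

lemma aux_core (p k : ℕ) (hp : p.Prime) (hk : 1 < k) (h6 : ¬ (6 ∣ k))
    (F : Type) [Field F] [Fintype F] (hcharF : (p : F) = 0)
    (ζ₀ : F) (hζ₀ : IsPrimitiveRoot ζ₀ k) (a b : ℕ)
    (hrel : 1 + ζ₀ ^ a = ζ₀ ^ b)
    (ha : ¬ ((k : ℤ) ∣ (a : ℤ))) (hb : ¬ ((k : ℤ) ∣ (b : ℤ)))
    (hab : ¬ ((k : ℤ) ∣ ((b : ℤ) - (a : ℤ)))) :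
    ((p : ℝ) ^ (orderOf (p : ZMod k))) ^ 2
      ≤ ((3 * (k : ℝ)) / (Nat.totient k)) ^ (Nat.totient k) := by
  have hkpos : 0 < k := by omega
  set kp : ℕ+ := ⟨k, hkpos⟩ with hkp_def
  have hkcoe : ((kp : ℕ)) = k := rfl
  set K := CyclotomicField kp ℚ with hK_def
  haveI : IsCyclotomicExtension {(kp : ℕ)} ℚ K := CyclotomicField.isCyclotomicExtension _ _
  have hζ : IsPrimitiveRoot (IsCyclotomicExtension.zeta kp ℚ K) k :=
    IsCyclotomicExtension.zeta_spec kp ℚ K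
  set ζ : K := IsCyclotomicExtension.zeta kp ℚ K with hζ_def
  haveI : NumberField K := IsCyclotomicExtension.numberField {(kp : ℕ)} ℚ K
  -- the adjoin-root ring
  set Φ : ℤ[X] := cyclotomic k ℤ with hΦ_def
  set AR := AdjoinRoot Φ with hAR_def
  -- map to F
  have hrootF : eval₂ (Int.castRingHom F) ζ₀ Φ = 0 := by
    rw [hΦ_def, eval₂_eq_eval_map, map_cyclotomic_int]
    exact hζ₀.isRoot_cyclotomic hkpos
  set φF : AR →+* F := AdjoinRoot.lift (Int.castRingHom F) ζ₀ hrootF with hφF_def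
  -- map to ring of integers
  have hζint : IsIntegral ℤ ζ := hζ.isIntegral hkpos
  set ζO : 𝓞 K := ⟨ζ, hζint⟩ with hζO_def
  have hζOcoe : (algebraMap (𝓞 K) K) ζO = ζ := rfl
  have hinj : Function.Injective (algebraMap (𝓞 K) K) := RingOfIntegers.coe_injective
  have hrootO : eval₂ (Int.castRingHom (𝓞 K)) ζO Φ = 0 := by
    apply hinj
    rw [map_zero]
    have : (algebraMap (𝓞 K) K) (eval₂ (Int.castRingHom (𝓞 K)) ζO Φ)
        = eval₂ (Int.castRingHom K) ζ Φ := by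
      rw [hom_eval₂]
      congr 1
    rw [this, hΦ_def, eval₂_eq_eval_map, map_cyclotomic_int]
    exact hζ.isRoot_cyclotomic hkpos
  set φO : AR →+* 𝓞 K := AdjoinRoot.lift (Int.castRingHom (𝓞 K)) ζO hrootO with hφO_def
  have hmin : minpoly ℤ ζ = Φ := (Polynomial.cyclotomic_eq_minpoly hζ hkpos).symm
  have hφOinj : Function.Injective φO := by
    rw [injective_iff_map_eq_zero]
    intro r hr
    obtain ⟨g, rfl⟩ := AdjoinRoot.mk_surjective r
    rw [AdjoinRoot.mk_eq_zero]
    have hg : eval₂ (Int.castRingHom (𝓞 K)) ζO g = 0 := by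
      rwa [hφO_def, AdjoinRoot.lift_mk] at hr
    have hgK : aeval ζ g = 0 := by
      have : (algebraMap (𝓞 K) K) (eval₂ (Int.castRingHom (𝓞 K)) ζO g)
          = eval₂ (Int.castRingHom K) ζ g := by
        rw [hom_eval₂]
        congr 1
      rw [hg, map_zero] at this
      rw [aeval_def]
      have h2 : algebraMap ℤ K = Int.castRingHom K := by ext : 1 <;> simp
      rw [h2]
      exact this.symm
    have : minpoly ℤ ζ ∣ g := minpoly.isIntegrallyClosed_dvd hζint hgK
    rwa [hmin] at this
  letI : Algebra AR (𝓞 K) := φO.toAlgebra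
  have halgmap : algebraMap AR (𝓞 K) = φO := rfl
  haveI : IsScalarTower ℤ AR (𝓞 K) :=
    IsScalarTower.of_algebraMap_eq' (Subsingleton.elim _ _)
  haveI : Algebra.IsIntegral AR (𝓞 K) := by
    constructor
    intro x
    exact IsIntegral.tower_top (R := ℤ) (Algebra.IsIntegral.isIntegral x)
  -- the prime ideal
  set P : Ideal AR := RingHom.ker φF with hP_def
  haveI hPprime : P.IsPrime := RingHom.ker_isPrime φF
  have hcomap_bot : Ideal.comap (algebraMap AR (𝓞 K)) ⊥ ≤ P := by
    intro r hr
    have : φO r = 0 := by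
      rwa [Ideal.mem_comap, halgmap, Ideal.mem_bot] at hr
    have : r = 0 := hφOinj (by rw [this, map_zero])
    rw [this]
    exact P.zero_mem
  obtain ⟨Q, -, hQprime, hQcomap⟩ :=
    Ideal.exists_ideal_over_prime_of_isIntegral P ⊥ hcomap_bot
  -- the elements
  set ρ : AR := AdjoinRoot.root Φ with hρ_def
  set αr : AR := ρ ^ b - ρ ^ a - 1 with hαr_def
  have hφFρ : φF ρ = ζ₀ := AdjoinRoot.lift_root hrootF
  have hφOρ : φO ρ = ζO := AdjoinRoot.lift_root hrootO
  have hαrP : αr ∈ P := by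
    rw [hP_def, RingHom.mem_ker, hαr_def, map_sub, map_sub, map_pow, map_pow, map_one, hφFρ]
    linear_combination -hrel
  set αO : 𝓞 K := φO αr with hαO_def
  have hαOQ : αO ∈ Q := by
    have : αr ∈ Ideal.comap (algebraMap AR (𝓞 K)) Q := by rw [hQcomap]; exact hαrP
    rwa [Ideal.mem_comap, halgmap] at this
  have hαK : (algebraMap (𝓞 K) K) αO = ζ ^ b - ζ ^ a - 1 := by
    simp only [hαO_def, hαr_def, map_sub, map_pow, map_one, hφOρ, hζOcoe]
  -- α is nonzero via the complex embedding and 6 ∤ k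
  have hαK0 : ζ ^ b - ζ ^ a - (1 : K) ≠ 0 := by
    intro hzero
    have hcardσ : Fintype.card (K →ₐ[ℚ] ℂ) = Module.finrank ℚ K := AlgHom.card ℚ K ℂ
    have : 0 < Fintype.card (K →ₐ[ℚ] ℂ) := by
      rw [hcardσ]; exact Module.finrank_pos
    obtain ⟨σ⟩ : Nonempty (K →ₐ[ℚ] ℂ) := Fintype.card_pos_iff.mp this
    set χ : ℂ := σ ζ with hχ_def
    have hχk : χ ^ k = 1 := by
      rw [hχ_def, ← map_pow, hζ.pow_eq_one, map_one]
    have hXk : (χ ^ a) ^ k = 1 := by rw [← pow_mul, mul_comm, pow_mul, hχk, one_pow]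
    have hYk : (χ ^ b) ^ k = 1 := by rw [← pow_mul, mul_comm, pow_mul, hχk, one_pow]
    have hrelC : χ ^ b = 1 + χ ^ a := by
      have := congrArg σ hzero
      rw [map_sub, map_sub, map_pow, map_pow, map_one, map_zero, ← hχ_def] at this
      linear_combination this
    exact h6 (aux_six_dvd hkpos hXk hYk hrelC)
  have hαO0 : αO ≠ 0 := by
    intro h0
    apply hαK0
    rw [← hαK, h0, map_zero]
  -- the norm
  set N : ℤ := Algebra.norm ℤ αO with hN_def
  have hNQ : ((N : ℚ)) = Algebra.norm ℚ ((algebraMap (𝓞 K) K) αO) := Algebra.coe_norm_int αO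
  have hN0 : N ≠ 0 := by
    intro h0
    have h1 : Algebra.norm ℚ ((algebraMap (𝓞 K) K) αO) ≠ 0 :=
      Algebra.norm_ne_zero_iff.mpr (by rw [hαK]; exact hαK0)
    apply h1
    rw [← hNQ, h0]
    norm_num
  -- Q is not the zero ideal
  have hQbot : Q ≠ ⊥ := by
    intro h0
    apply hαO0
    have : αr ∈ Ideal.comap (algebraMap AR (𝓞 K)) Q := by rw [hQcomap]; exact hαrP
    rw [h0, Ideal.mem_comap, halgmap, Ideal.mem_bot] at this
    exact this
  haveI : Fintype (𝓞 K ⧸ Q) := @Fintype.ofFinite _ (Ideal.finiteQuotientOfFreeOfNeBot Q hQbot)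
  haveI hQmax : Q.IsMaximal := hQprime.isMaximal hQbot
  letI : Field (𝓞 K ⧸ Q) := Ideal.Quotient.field Q
  have hpQmem : ((p : 𝓞 K)) ∈ Q := by
    have h1 : ((p : AR)) ∈ P := by
      rw [hP_def, RingHom.mem_ker, map_natCast, hcharF]
    have h2 : ((p : AR)) ∈ Ideal.comap (algebraMap AR (𝓞 K)) Q := by rw [hQcomap]; exact h1
    rwa [Ideal.mem_comap, map_natCast] at h2
  have hpQ : ((p : 𝓞 K ⧸ Q)) = 0 := by
    rw [← map_natCast (Ideal.Quotient.mk Q), Ideal.Quotient.eq_zero_iff_mem]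
    exact hpQmem
  haveI : CharP (𝓞 K ⧸ Q) p := (CharP.charP_iff_prime_eq_zero hp).mpr hpQ
  obtain ⟨m, -, hcardQ⟩ := FiniteField.card (𝓞 K ⧸ Q) p
  -- the image of ζ in the residue field has order k
  set ζQ : 𝓞 K ⧸ Q := Ideal.Quotient.mk Q ζO with hζQ_def
  have hζOk : ζO ^ k = 1 := by
    apply hinj
    rw [map_pow, hζOcoe, map_one, hζ.pow_eq_one]
  have hζQprim : IsPrimitiveRoot ζQ k := by
    constructor
    · rw [hζQ_def, ← map_pow, hζOk, map_one]
    · intro l hl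
      have h1 : ζO ^ l - 1 ∈ Q := by
        rw [← Ideal.Quotient.eq_zero_iff_mem, map_sub, map_one, map_pow, ← hζQ_def, hl]
        ring
      have h2 : ρ ^ l - 1 ∈ P := by
        have : φO (ρ ^ l - 1) = ζO ^ l - 1 := by
          simp only [map_sub, map_pow, map_one, hφOρ]
        have hmem : ρ ^ l - 1 ∈ Ideal.comap (algebraMap AR (𝓞 K)) Q := by
          rw [Ideal.mem_comap, halgmap, this]
          exact h1
        rwa [hQcomap] at hmem
      have h3 : ζ₀ ^ l = 1 := by
        rw [hP_def, RingHom.mem_ker, map_sub, map_pow, map_one, hφFρ, sub_eq_zero] at h2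
        exact h2
      exact hζ₀.dvd_of_pow_eq_one l h3
  have hζQ0 : ζQ ≠ 0 := by
    intro h0
    have := hζQprim.pow_eq_one
    rw [h0, zero_pow hkpos.ne'] at this
    exact zero_ne_one this
  have hkdvd : k ∣ p ^ (m : ℕ) - 1 := by
    have h1 : orderOf ζQ = k := (hζQprim.eq_orderOf).symm
    set uζ : (𝓞 K ⧸ Q)ˣ := Units.mk0 ζQ hζQ0 with huζ
    have h2 : orderOf uζ = k := by
      rw [← orderOf_units, huζ, Units.val_mk0, h1]
    classical
    have h3 : orderOf uζ ∣ Fintype.card (𝓞 K ⧸ Q)ˣ := orderOf_dvd_card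
    rw [h2, Fintype.card_units, hcardQ] at h3
    exact h3
  have hpm1 : ((p : ZMod k)) ^ (m : ℕ) = 1 := by
    haveI : NeZero k := ⟨hkpos.ne'⟩
    have h1 : 1 ≤ p ^ (m : ℕ) := Nat.one_le_pow _ _ hp.pos
    have h2 : (((p ^ (m : ℕ) - 1 : ℕ)) : ZMod k) = 0 :=
      (ZMod.natCast_eq_zero_iff _ _).mpr hkdvd
    rw [Nat.cast_sub h1] at h2
    push_cast at h2
    linear_combination h2
  set d : ℕ := orderOf ((p : ZMod k)) with hd_def
  have hdm : d ∣ (m : ℕ) := orderOf_dvd_of_pow_eq_one hpm1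
  -- divisibility chain : p^d ≤ |N|
  have habs : Ideal.absNorm Q ∣ N.natAbs := by
    rw [hN_def, ← Ideal.absNorm_span_singleton]
    exact Ideal.absNorm_dvd_absNorm_of_le ((Ideal.span_singleton_le_iff_mem _).mpr hαOQ)
  have habsQ : Ideal.absNorm Q = p ^ (m : ℕ) := by
    rw [Ideal.absNorm_apply, Submodule.cardQuot_apply, Nat.card_eq_fintype_card, hcardQ]
  have hple : p ^ d ≤ N.natAbs := by
    apply Nat.le_of_dvd
    · exact Nat.pos_of_ne_zero (fun h => hN0 (Int.natAbs_eq_zero.mp h))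
    · exact dvd_trans (pow_dvd_pow p (Nat.le_of_dvd m.2 hdm)) (habsQ ▸ habs)
  -- the analytic upper bound
  haveI : NeZero k := ⟨hkpos.ne'⟩
  set φk : ℕ := Nat.totient k with hφk_def
  have hφpos : 0 < φk := Nat.totient_pos.mpr hkpos
  have hirr : Irreducible (cyclotomic k ℚ) := cyclotomic.irreducible_rat hkpos
  have hζkp : IsPrimitiveRoot ζ ((kp : ℕ)) := hζ
  have hfinrank : Module.finrank ℚ K = φk := by
    have h := IsCyclotomicExtension.finrank (n := kp) K (by exact hirr)
    exact h
  have hcardσ : Fintype.card (K →ₐ[ℚ] ℂ) = φk := by rw [AlgHom.card]; exact hfinrank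
  set ω : ℂ := Complex.exp (2 * Real.pi * Complex.I / k) with hω_def
  have hωprim : IsPrimitiveRoot ω k := Complex.isPrimitiveRoot_exp k hkpos.ne'
  set αK : K := ζ ^ b - ζ ^ a - 1 with hαK_def
  have hσj : ∀ σ : K →ₐ[ℚ] ℂ, ∃ j, j < k ∧ ω ^ j = σ ζ := by
    intro σ
    have h1 : (σ ζ) ^ k = 1 := by rw [← map_pow, hζ.pow_eq_one, map_one]
    obtain ⟨i, hi, hieq⟩ := hωprim.eq_pow_of_pow_eq_one h1
    exact ⟨i, hi, hieq⟩
  choose J hJlt hJeq using hσj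
  have hσα : ∀ σ : K →ₐ[ℚ] ℂ, σ αK = (ω ^ b) ^ (J σ) - (ω ^ a) ^ (J σ) - 1 := by
    intro σ
    rw [hαK_def, map_sub, map_sub, map_pow, map_pow, map_one, ← hJeq σ,
      ← pow_right_comm ω (J σ) b, ← pow_right_comm ω (J σ) a]
  have hJinj : ∀ σ τ : K →ₐ[ℚ] ℂ, J σ = J τ → σ = τ := by
    intro σ τ h
    have hgen : (hζkp.powerBasis ℚ).gen = ζ := IsPrimitiveRoot.powerBasis_gen ℚ hζkp
    apply (hζkp.powerBasis ℚ).algHom_ext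
    rw [hgen, ← hJeq σ, ← hJeq τ, h]
  have hsumle : ∑ σ : K →ₐ[ℚ] ℂ, Complex.normSq (σ αK) ≤ 3 * (k : ℝ) := by
    classical
    set f : ℕ → ℝ := fun j => Complex.normSq ((ω ^ b) ^ j - (ω ^ a) ^ j - 1) with hf_def
    have h1 : ∑ σ : K →ₐ[ℚ] ℂ, Complex.normSq (σ αK) = ∑ σ : K →ₐ[ℚ] ℂ, f (J σ) := by
      apply Finset.sum_congr rfl
      intro σ _
      rw [hσα σ, hf_def]
    have h2 : ∑ σ : K →ₐ[ℚ] ℂ, f (J σ) = ∑ j ∈ Finset.univ.image J, f j := by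
      rw [Finset.sum_image]
      intro σ _ τ _ h
      exact hJinj σ τ h
    have h3 : ∑ j ∈ Finset.univ.image J, f j ≤ ∑ j ∈ Finset.range k, f j := by
      apply Finset.sum_le_sum_of_subset_of_nonneg
      · intro j hj
        simp only [Finset.mem_image] at hj
        obtain ⟨σ, -, rfl⟩ := hj
        exact Finset.mem_range.mpr (hJlt σ)
      · intro j _ _
        exact Complex.normSq_nonneg _
    have h4 : ∑ j ∈ Finset.range k, f j = 3 * (k : ℝ) := by
      have := aux_sum_normSq hkpos hωprim ha hb hab
      simpa only [zpow_natCast, hf_def] using this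
    rw [h1, h2]
    rw [← h4] at *
    exact h3.trans (le_of_eq rfl)
  -- |N| as a product over embeddings
  have hNPr : (N.natAbs : ℝ) = ∏ σ : K →ₐ[ℚ] ℂ, ‖σ αK‖ := by
    have hprod := Algebra.norm_eq_prod_embeddings ℚ ℂ αK
    have h1 : algebraMap ℚ ℂ (Algebra.norm ℚ αK) = ((N : ℚ) : ℂ) := by
      rw [hNQ, hαK]
      exact eq_ratCast _ _
    have h2 : ‖((N : ℚ) : ℂ)‖ = (N.natAbs : ℝ) := by
      rw [show ((N : ℚ) : ℂ) = ((N : ℤ) : ℂ) by norm_cast, Complex.norm_intCast]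
      rw [Nat.cast_natAbs]
      push_cast
      ring
    rw [← h2, ← h1, hprod, norm_prod]
  set B : ℝ := (3 * (k : ℝ)) / φk with hB_def
  have hB0 : 0 ≤ B := by
    rw [hB_def]
    positivity
  have hsq : ((N.natAbs : ℝ)) ^ 2 ≤ B ^ φk := by
    have h1 : ((N.natAbs : ℝ)) ^ 2 = ∏ σ : K →ₐ[ℚ] ℂ, Complex.normSq (σ αK) := by
      rw [hNPr, ← Finset.prod_pow]
      apply Finset.prod_congr rfl
      intro σ _
      rw [Complex.sq_norm]
    rw [h1]
    have h2 : B ^ φk = B ^ (Finset.univ : Finset (K →ₐ[ℚ] ℂ)).card := by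
      rw [Finset.card_univ, hcardσ]
    rw [h2]
    apply aux_amgm _ _ (fun σ _ => Complex.normSq_nonneg _) hB0
    · rw [Finset.card_univ, hcardσ]
      have : B * (φk : ℝ) = 3 * (k : ℝ) := by
        rw [hB_def]
        field_simp
      rw [this]
      exact hsumle
    · rw [Finset.card_univ, hcardσ]
      exact hφpos
  -- conclusion
  have hcast : ((p : ℝ) ^ d) ^ 2 ≤ ((N.natAbs : ℝ)) ^ 2 := by
    have h1 : ((p ^ d : ℕ) : ℝ) ≤ (N.natAbs : ℝ) := Nat.cast_le.mpr hple
    push_cast at h1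
    have h0 : (0:ℝ) ≤ (p:ℝ) ^ d := by positivity
    nlinarith
  exact hcast.trans hsq

theorem cyclotomic_number_zero_zero (p n q e k : ℕ) (hp : p.Prime) (hn : 0 < n)
    (hq : q = p ^ n) (hk : 1 < k) (he : 1 < e) (hek : q = e * k + 1)
    (F : Type) [Field F] [Fintype F] (hF : Fintype.card F = q)
    (hbound : (((3 * (k : ℝ)) / (Nat.totient k))
        ^ ((Nat.totient k : ℝ) / (2 * (orderOf (p : ZMod k) : ℝ))) < p))
    (h6 : ¬ (6 ∣ k)) (h2 : ¬ ∃ w : F, w ^ e = 2) :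
    ¬ ∃ x y : F, (∃ u : F, u ≠ 0 ∧ u ^ e = x) ∧ (∃ v : F, v ≠ 0 ∧ v ^ e = y) ∧
      1 + x = y := by
  classical
  rintro ⟨x, y, ⟨u, hu0, hue⟩, ⟨v, hv0, hve⟩, hxy⟩
  haveI : NeZero k := ⟨by omega⟩
  have hkpos : 0 < k := by omega
  have hq1 : Fintype.card F - 1 = e * k := by rw [hF, hek]; omega
  -- char F = p
  have hchar : ((p : F)) = 0 := by
    haveI := ringChar.charP F
    obtain ⟨m', hcprime, hcard⟩ := FiniteField.card F (ringChar F)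
    rw [hF, hq] at hcard
    have hcp : ringChar F = p := by
      have h1 : ringChar F ∣ p ^ n := by
        rw [hcard]
        exact dvd_pow_self _ m'.property.ne'
      have h2 : ringChar F ∣ p := hcprime.dvd_of_dvd_pow h1
      exact (Nat.prime_dvd_prime_iff_eq hcprime hp).mp h2
    rw [← hcp]
    exact CharP.cast_eq_zero F _
  -- primitive k-th root of unity in F
  obtain ⟨g, hg⟩ := IsCyclic.exists_generator (α := Fˣ)
  have horderg : orderOf g = e * k := by
    rw [orderOf_eq_card_of_forall_mem_zpowers hg, Nat.card_units,
      Nat.card_eq_fintype_card, hq1]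
  have horderζ : orderOf (g ^ e) = k := by
    rw [orderOf_pow, horderg]
    have hgcd : (e * k).gcd e = e := by
      rw [Nat.gcd_comm]
      exact Nat.gcd_eq_left (dvd_mul_right e k)
    rw [hgcd, Nat.mul_div_cancel_left k (by omega : 0 < e)]
  set ζ₀ : F := ((g ^ e : Fˣ) : F) with hζ₀_def
  have hζ₀0 : ζ₀ ≠ 0 := Units.ne_zero _
  have hζ₀ : IsPrimitiveRoot ζ₀ k := by
    have h1 : orderOf ζ₀ = k := by rw [hζ₀_def, orderOf_units, horderζ]
    rw [← h1]
    exact IsPrimitiveRoot.orderOf ζ₀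
  -- write x and y as powers of ζ₀
  have hpowk : ∀ w : F, w ≠ 0 → (w ^ e) ^ k = 1 := by
    intro w hw
    have h1 : w ^ (Fintype.card F - 1) = 1 := FiniteField.pow_card_sub_one_eq_one w hw
    rw [hq1] at h1
    rw [← pow_mul]
    exact h1
  have hxk : x ^ k = 1 := by rw [← hue]; exact hpowk u hu0
  have hyk : y ^ k = 1 := by rw [← hve]; exact hpowk v hv0
  obtain ⟨a, halt, hax⟩ := hζ₀.eq_pow_of_pow_eq_one hxk
  obtain ⟨b, hblt, hby⟩ := hζ₀.eq_pow_of_pow_eq_one hyk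
  have hrel : 1 + ζ₀ ^ a = ζ₀ ^ b := by rw [hax, hby]; exact hxy
  -- the three non-divisibility conditions
  have ha' : ¬ ((k : ℤ) ∣ (a : ℤ)) := by
    intro hdvd
    have h1 : k ∣ a := Int.natCast_dvd_natCast.mp hdvd
    have ha0 : a = 0 := Nat.eq_zero_of_dvd_of_lt h1 halt
    apply h2
    refine ⟨v, ?_⟩
    rw [hve, ← hxy, ← hax, ha0, pow_zero]
    norm_num
  have hb' : ¬ ((k : ℤ) ∣ (b : ℤ)) := by
    intro hdvd
    have h1 : k ∣ b := Int.natCast_dvd_natCast.mp hdvd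
    have hb0 : b = 0 := Nat.eq_zero_of_dvd_of_lt h1 hblt
    have hy1 : y = 1 := by rw [← hby, hb0, pow_zero]
    have h3 : (1 : F) + x = 1 := by rw [hxy, hy1]
    have hx0 : x = 0 := by linear_combination h3
    apply pow_ne_zero a hζ₀0
    rw [hax, hx0]
  have hab' : ¬ ((k : ℤ) ∣ ((b : ℤ) - (a : ℤ))) := by
    intro hdvd
    have h1 : ζ₀ ^ ((b : ℤ) - (a : ℤ)) = 1 := (hζ₀.zpow_eq_one_iff_dvd _).mpr hdvd
    have h2' : ζ₀ ^ ((b : ℤ)) = ζ₀ ^ ((a : ℤ)) := by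
      rw [← sub_add_cancel ((b : ℤ)) ((a : ℤ)), zpow_add₀ hζ₀0, h1, one_mul]
    have h3 : x = y := by
      rw [← hax, ← hby, ← zpow_natCast ζ₀ a, ← zpow_natCast ζ₀ b, h2']
    rw [← h3] at hxy
    have h4 : (1 : F) = 0 := by linear_combination hxy
    exact one_ne_zero h4
  -- coprimality and positivity of the multiplicative order
  have hcop : Nat.Coprime p k := by
    rw [Nat.Prime.coprime_iff_not_dvd hp]
    intro hpk
    have h1 : p ∣ e * k := Dvd.dvd.mul_left hpk e
    have h2' : p ∣ q := by rw [hq]; exact dvd_pow_self p hn.ne'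
    rw [hek] at h2'
    have h3 : p ∣ 1 := (Nat.dvd_add_right h1).mp h2'
    exact absurd (Nat.dvd_one.mp h3) hp.one_lt.ne'
  have hdpos : 0 < orderOf ((p : ZMod k)) := by
    have h1 : (((ZMod.unitOfCoprime p hcop : (ZMod k)ˣ) : ZMod k)) = (p : ZMod k) :=
      ZMod.coe_unitOfCoprime p hcop
    have h2' : orderOf ((p : ZMod k)) = orderOf (ZMod.unitOfCoprime p hcop) := by
      rw [← h1, orderOf_units]
    rw [h2']
    exact orderOf_pos _
  -- apply the core bound
  have hcore := aux_core p k hp hk h6 F hchar ζ₀ hζ₀ a b hrel ha' hb' hab'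
  set d : ℕ := orderOf ((p : ZMod k)) with hd_def
  set φk : ℕ := Nat.totient k with hφk_def
  set B : ℝ := (3 * (k : ℝ)) / (φk : ℝ) with hB_def
  have hB0 : (0:ℝ) ≤ B := by rw [hB_def]; positivity
  have hD0 : 2 * d ≠ 0 := by omega
  have h1 : (B ^ ((φk : ℝ) / (2 * (d : ℝ)))) ^ (2 * d) < (p : ℝ) ^ (2 * d) := by
    apply pow_lt_pow_left₀ hbound (Real.rpow_nonneg hB0 _) hD0
  have h2'' : (B ^ ((φk : ℝ) / (2 * (d : ℝ)))) ^ (2 * d) = B ^ φk := by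
    rw [← Real.rpow_natCast (B ^ ((φk : ℝ) / (2 * (d : ℝ)))) (2 * d), ← Real.rpow_mul hB0]
    have he1 : ((φk : ℝ) / (2 * (d : ℝ))) * (((2 * d : ℕ)) : ℝ) = (φk : ℝ) := by
      push_cast
      field_simp
    rw [he1, Real.rpow_natCast]
  have h3 : (p : ℝ) ^ (2 * d) = ((p : ℝ) ^ d) ^ 2 := by rw [← pow_mul, mul_comm]
  rw [h2'', h3] at h1
  linarith [hcore, h1]
end
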